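/- arXiv:2303.11768 — 2 statements merged into one kernel-verified Lean document; each statement's English description precedes it below -/
import Mathlib

section
/- Let X be an infinite Tychonoff space. The following are equivalent: (i) 𝒫_fin(X) has the Hurewicz property; (ii) X satisfies S_fin(Ω_X, Ω_X^gp); (iii) every finite power Xⁿ (n ≥ 1, with the product topology) has the Hurewicz property; (iv) C_p(X) satisfies S_fin(Ω_{C_p(X),𝟎}, Ω_{C_p(X),𝟎}^gp); (v) C_p(X) is Reznichenko and has countable fan-tightness. -/
open Set TopologicalSpace

universe u

/-- A non-trivial open cover: a family of nonempty proper open sets covering `X`. -/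
def NTOpenCover (X : Type u) [TopologicalSpace X] (𝒰 : Set (Set X)) : Prop :=
  (∀ U ∈ 𝒰, IsOpen U ∧ U.Nonempty ∧ U ≠ Set.univ) ∧ ⋃₀ 𝒰 = Set.univ

/-- `𝒪_X`, the collection of non-trivial open covers of `X`. -/
def OX (X : Type u) [TopologicalSpace X] : Set (Set (Set X)) := {𝒰 | NTOpenCover X 𝒰}

/-- The Hurewicz property. -/
def HurewiczProp (X : Type u) [TopologicalSpace X] : Prop :=
  ∀ 𝒰 : ℕ → Set (Set X), (∀ n, 𝒰 n ∈ OX X) →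
    ∃ ℱ : ℕ → Set (Set X), (∀ n, ℱ n ⊆ 𝒰 n ∧ (ℱ n).Finite) ∧
      ∀ x : X, ∃ m : ℕ, ∀ n ≥ m, x ∈ ⋃₀ ℱ n

/-- The selection principle `S_fin(𝒜, ℬ)`. -/
def Sfin {α : Type u} (𝒜 ℬ : Set (Set α)) : Prop :=
  ∀ 𝒰 : ℕ → Set α, (∀ n, 𝒰 n ∈ 𝒜) →
    ∃ ℱ : ℕ → Set α, (∀ n, ℱ n ⊆ 𝒰 n ∧ (ℱ n).Finite) ∧ (⋃ n, ℱ n) ∈ ℬ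

/-- The selection principle `S_1(𝒜, ℬ)`. -/
def Sone {α : Type u} (𝒜 ℬ : Set (Set α)) : Prop :=
  ∀ 𝒰 : ℕ → Set α, (∀ n, 𝒰 n ∈ 𝒜) →
    ∃ f : ℕ → α, (∀ n, f n ∈ 𝒰 n) ∧ Set.range f ∈ ℬ

/-- A member `C` of a collection `ℭ` is groupable if there is a finite-to-one map
`φ : C → ℕ` such that for every infinite `J ⊆ ℕ`, `⋃ {φ⁻¹(n) : n ∈ J} ∈ ℭ`. -/
def Groupable {α : Type u} (ℭ : Set (Set α)) (C : Set α) : Prop :=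
  ∃ φ : α → ℕ, (∀ n : ℕ, {x ∈ C | φ x = n}.Finite) ∧
    ∀ J : Set ℕ, J.Infinite → {x ∈ C | φ x ∈ J} ∈ ℭ

/-- `ℭ^gp`, the collection of groupable members of `ℭ`. -/
def groupables {α : Type u} (ℭ : Set (Set α)) : Set (Set α) :=
  {C | C ∈ ℭ ∧ Groupable ℭ C}

/-- The Menger property. -/
def MengerProp (X : Type u) [TopologicalSpace X] : Prop := Sfin (OX X) (OX X)

/-- The Rothberger property. -/
def RothbergerProp (X : Type u) [TopologicalSpace X] : Prop := Sone (OX X) (OX X)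

/-- The Gerlits-Nagy property: Hurewicz and Rothberger. -/
def GerlitsNagyProp (X : Type u) [TopologicalSpace X] : Prop :=
  HurewiczProp X ∧ RothbergerProp X

/-- `𝒪_X(𝒜)`, the collection of `𝒜`-covers of `X`. -/
def ACovers (X : Type u) [TopologicalSpace X] (𝒜 : Set (Set X)) : Set (Set (Set X)) :=
  {𝒰 | 𝒰 ∈ OX X ∧ ∀ A ∈ 𝒜, ∃ U ∈ 𝒰, A ⊆ U}

/-- `𝒦_X`, the collection of `k`-covers of `X`. -/
def KCovers (X : Type u) [TopologicalSpace X] : Set (Set (Set X)) :=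
  {𝒰 | 𝒰 ∈ OX X ∧ ∀ K : Set X, IsCompact K → K.Nonempty → ∃ U ∈ 𝒰, K ⊆ U}

/-- `Ω_X`, the collection of `ω`-covers of `X`. -/
def OmegaCovers (X : Type u) [TopologicalSpace X] : Set (Set (Set X)) :=
  {𝒰 | 𝒰 ∈ OX X ∧ ∀ F : Set X, F.Finite → F.Nonempty → ∃ U ∈ 𝒰, F ⊆ U}

/-- An ideal of closed sets of `X`. -/
def IdealOfClosedSets (X : Type u) [TopologicalSpace X] (𝒜 : Set (Set X)) : Prop :=
  (∀ A ∈ 𝒜, IsClosed A ∧ A.Nonempty ∧ A ≠ Set.univ) ∧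
  (∀ F : Set X, F.Finite → F.Nonempty → F ∈ 𝒜) ∧
  (∀ A B : Set X, A ∈ 𝒜 → B ∈ 𝒜 → A ∪ B ≠ Set.univ → A ∪ B ∈ 𝒜) ∧
  (∀ A ∈ 𝒜, ∀ B : Set X, B ⊆ A → IsClosed B → B.Nonempty → B ∈ 𝒜)

/-- One has a winning strategy in the Hurewicz game on `X`. -/
def OneWinsHurewicz (X : Type u) [TopologicalSpace X] : Prop :=
  ∃ σ : List (Set (Set X)) → Set (Set X), (∀ s, σ s ∈ OX X) ∧
    ∀ F : ℕ → Set (Set X),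
      (∀ n, (F n).Finite ∧ F n ⊆ σ (List.ofFn fun i : Fin n => F i)) →
        ∃ x : X, ∀ m : ℕ, ∃ n ≥ m, x ∉ ⋃₀ F n

/-- One has a winning strategy in `G_fin(𝒜, ℬ)`. -/
def OneWinsGfin {α : Type u} (𝒜 ℬ : Set (Set α)) : Prop :=
  ∃ σ : List (Set α) → Set α, (∀ s, σ s ∈ 𝒜) ∧
    ∀ F : ℕ → Set α,
      (∀ n, (F n).Finite ∧ F n ⊆ σ (List.ofFn fun i : Fin n => F i)) →
        (⋃ n, F n) ∉ ℬ

/-- One has a winning predetermined strategy in `G_fin(𝒜, ℬ)`. -/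
def OneWinsPreGfin {α : Type u} (𝒜 ℬ : Set (Set α)) : Prop :=
  ∃ σ : ℕ → Set α, (∀ n, σ n ∈ 𝒜) ∧
    ∀ F : ℕ → Set α, (∀ n, (F n).Finite ∧ F n ⊆ σ n) → (⋃ n, F n) ∉ ℬ

/-- One has a winning strategy in `G_1(𝒜, ℬ)`. -/
def OneWinsGone {α : Type u} (𝒜 ℬ : Set (Set α)) : Prop :=
  ∃ σ : List α → Set α, (∀ s, σ s ∈ 𝒜) ∧
    ∀ f : ℕ → α, (∀ n, f n ∈ σ (List.ofFn fun i : Fin n => f i)) → Set.range f ∉ ℬ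

/-- One has a winning predetermined strategy in `G_1(𝒜, ℬ)`. -/
def OneWinsPreGone {α : Type u} (𝒜 ℬ : Set (Set α)) : Prop :=
  ∃ σ : ℕ → Set α, (∀ n, σ n ∈ 𝒜) ∧
    ∀ f : ℕ → α, (∀ n, f n ∈ σ n) → Set.range f ∉ ℬ

/-- The collection `𝒜` of subsets of `X`, viewed as a hyperspace with the Vietoris topology. -/
def Hyper (X : Type u) (𝒜 : Set (Set X)) : Type u := {K : Set X // K ∈ 𝒜}

/-- The Vietoris topology on `Hyper X 𝒜`. -/
instance Hyper.topologicalSpace (X : Type u) [TopologicalSpace X] (𝒜 : Set (Set X)) :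
    TopologicalSpace (Hyper X 𝒜) :=
  TopologicalSpace.generateFrom
    {S | ∃ U : Set X, IsOpen U ∧
      (S = {K : Hyper X 𝒜 | K.1 ⊆ U} ∨ S = {K : Hyper X 𝒜 | (K.1 ∩ U).Nonempty})}

/-- `𝕂(X)`: the nonempty compact subsets of `X` with the Vietoris topology. -/
abbrev HyperK (X : Type u) [TopologicalSpace X] : Type u :=
  Hyper X {K : Set X | IsCompact K ∧ K.Nonempty}

/-- `𝒫_fin(X)`: the nonempty finite subsets of `X` with the Vietoris topology. -/
abbrev PFin (X : Type u) : Type u :=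
  Hyper X {F : Set X | F.Finite ∧ F.Nonempty}

/-- `C_p(X)`: continuous real-valued functions with the topology of pointwise convergence
(the subspace topology from the product topology on `X → ℝ`). -/
abbrev Cp (X : Type u) [TopologicalSpace X] : Type u := {f : X → ℝ // Continuous f}

/-- `C_k(X)`: continuous real-valued functions with the compact-open topology. -/
def Ck (X : Type u) [TopologicalSpace X] : Type u := {f : X → ℝ // Continuous f}

instance Ck.topologicalSpace (X : Type u) [TopologicalSpace X] : TopologicalSpace (Ck X) :=
  TopologicalSpace.generateFrom
    {S | ∃ (K : Set X) (U : Set ℝ), IsCompact K ∧ IsOpen U ∧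
      S = {f : Ck X | ∀ x ∈ K, f.1 x ∈ U}}

/-- The constantly zero function in `C_p(X)`. -/
def zeroCp (X : Type u) [TopologicalSpace X] : Cp X := ⟨fun _ => (0 : ℝ), continuous_const⟩

/-- The constantly zero function in `C_k(X)`. -/
def zeroCk (X : Type u) [TopologicalSpace X] : Ck X := ⟨fun _ => (0 : ℝ), continuous_const⟩

/-- `Ω_{Y,y}`: the sets having `y` in their closure but not containing `y`. -/
def OmegaPt (Y : Type u) [TopologicalSpace Y] (y : Y) : Set (Set Y) :=
  {A | y ∈ closure A ∧ y ∉ A}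

/-- Countable fan-tightness. -/
def CountableFanTightness (Y : Type u) [TopologicalSpace Y] : Prop :=
  ∀ y : Y, Sfin (OmegaPt Y y) (OmegaPt Y y)

/-- Countable strong fan-tightness. -/
def CountableStrongFanTightness (Y : Type u) [TopologicalSpace Y] : Prop :=
  ∀ y : Y, Sone (OmegaPt Y y) (OmegaPt Y y)

/-- The Reznichenko property: every countable member of `Ω_{Y,y}` is groupable. -/
def Reznichenko (Y : Type u) [TopologicalSpace Y] : Prop :=
  ∀ y : Y, ∀ A ∈ OmegaPt Y y, A.Countable → Groupable (OmegaPt Y y) A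


noncomputable section
namespace KS
open Classical Set

universe v

variable {X : Type u}

/-! ### Basic facts about nontrivial open covers and ω-covers -/

/-- a point outside a proper subset -/
def outs [Nonempty X] (U : Set X) : X :=
  if h : Uᶜ.Nonempty then h.choose else Classical.arbitrary _

lemma outs_spec [Nonempty X] {U : Set X} (h : U ≠ univ) : outs U ∉ U := by
  have h' : Uᶜ.Nonempty := Set.nonempty_compl.2 h
  simp only [outs, dif_pos h']
  exact h'.choose_spec

section Covers
variable [TopologicalSpace X]

lemma omega_exists {𝒰 : Set (Set X)} (h : 𝒰 ∈ OmegaCovers X) {F : Set X}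
    (hF : F.Finite) (hne : F.Nonempty) : ∃ U ∈ 𝒰, F ⊆ U := h.2 F hF hne

lemma omega_props {𝒰 : Set (Set X)} (h : 𝒰 ∈ OmegaCovers X) {U : Set X} (hU : U ∈ 𝒰) :
    IsOpen U ∧ U.Nonempty ∧ U ≠ univ := h.1.1 U hU

/-- removing finitely many sets from an ω-cover leaves an ω-cover -/
lemma omega_diff [Nonempty X] {𝒰 : Set (Set X)} (h : 𝒰 ∈ OmegaCovers X) {D : Set (Set X)}
    (hD : D.Finite) : 𝒰 \ D ∈ OmegaCovers X := by
  have key : ∀ F : Set X, F.Finite → F.Nonempty → ∃ U ∈ 𝒰 \ D, F ⊆ U := by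
    intro F hF hne
    set E : Set (Set X) := D ∩ 𝒰 with hE
    have hEfin : E.Finite := hD.inter_of_left _
    set F' : Set X := F ∪ (outs '' E) with hF'
    have hF'fin : F'.Finite := hF.union (hEfin.image _)
    have hF'ne : F'.Nonempty := hne.mono subset_union_left
    obtain ⟨U, hU, hsub⟩ := h.2 F' hF'fin hF'ne
    refine ⟨U, ⟨hU, fun hUD => ?_⟩, subset_union_left.trans hsub⟩
    have hUE : U ∈ E := ⟨hUD, hU⟩
    have : outs U ∈ F' := Or.inr ⟨U, hUE, rfl⟩
    exact outs_spec (omega_props h hU).2.2 (hsub this)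
  refine ⟨⟨fun U hU => h.1.1 U hU.1, ?_⟩, fun F hF hne => key F hF hne⟩
  · apply eq_univ_of_forall
    intro x
    obtain ⟨U, hU, hsub⟩ := key {x} (finite_singleton x) (singleton_nonempty x)
    exact ⟨U, hU, hsub rfl⟩

/-- every ω-cover is infinite -/
lemma omega_infinite [Nonempty X] {𝒰 : Set (Set X)} (h : 𝒰 ∈ OmegaCovers X) : 𝒰.Infinite := by
  intro hfin
  obtain ⟨U, hU, -⟩ := (omega_diff h hfin).2 {Classical.arbitrary X}
    (finite_singleton _) (singleton_nonempty _)
  exact hU.2 hU.1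

end Covers

/-! ### The finite-set hyperspace: basic lemmas -/

def mkF [TopologicalSpace X] {F : Set X} (hF : F.Finite) (hne : F.Nonempty) : PFin X :=
  ⟨F, hF, hne⟩

def sing [TopologicalSpace X] (x : X) : PFin X :=
  ⟨{x}, finite_singleton x, singleton_nonempty x⟩

section Hat
variable [TopologicalSpace X]

def hat (U : Set X) : Set (PFin X) := {K | K.1 ⊆ U}

def unhat (S : Set (PFin X)) : Set X := {x | ∃ K ∈ S, x ∈ K.1}

lemma unhat_hat (U : Set X) : unhat (hat U) = U := by
  ext x
  constructor
  · rintro ⟨K, hK, hx⟩; exact hK hx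
  · intro hx; exact ⟨sing x, (singleton_subset_iff.2 hx : ({x} : Set X) ⊆ U), rfl⟩

lemma hat_isOpen {U : Set X} (hU : IsOpen U) : IsOpen (hat U) :=
  TopologicalSpace.isOpen_generateFrom_of_mem ⟨U, hU, Or.inl rfl⟩

lemma hat_nonempty {U : Set X} (h : U.Nonempty) : (hat U).Nonempty :=
  ⟨sing h.choose, (singleton_subset_iff.2 h.choose_spec : ({h.choose} : Set X) ⊆ U)⟩

lemma hat_proper [Nonempty X] {U : Set X} (h : U ≠ univ) : hat U ≠ univ := by
  intro heq
  have : sing (outs U) ∈ hat U := heq ▸ mem_univ _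
  exact outs_spec h (this rfl)

omit [TopologicalSpace X] in
lemma mem_hat [TopologicalSpace X] {K : PFin X} {U : Set X} : K ∈ hat U ↔ K.1 ⊆ U := Iff.rfl

/-- the hat family of an ω-cover is a nontrivial open cover of `PFin X` -/
lemma hat_cover [Nonempty X] {𝒰 : Set (Set X)} (h : 𝒰 ∈ OmegaCovers X) :
    hat '' 𝒰 ∈ OX (PFin X) := by
  constructor
  · rintro S ⟨U, hU, rfl⟩
    obtain ⟨ho, hne, hpr⟩ := omega_props h hU
    exact ⟨hat_isOpen ho, hat_nonempty hne, hat_proper hpr⟩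
  · apply eq_univ_of_forall
    intro K
    obtain ⟨U, hU, hsub⟩ := h.2 K.1 K.2.1 K.2.2
    exact ⟨hat U, ⟨U, hU, rfl⟩, hsub⟩

end Hat

/-! ### The auxiliary property (⋆) -/

/-- property (⋆): aligned-blocks selection from ω-covers -/
def StarProp (X : Type u) [TopologicalSpace X] : Prop :=
  ∀ 𝒰 : ℕ → Set (Set X), (∀ n, 𝒰 n ∈ OmegaCovers X) →
    ∃ ℱ : ℕ → Set (Set X), (∀ n, ℱ n ⊆ 𝒰 n ∧ (ℱ n).Finite) ∧
      ∀ F : Set X, F.Finite → F.Nonempty → ∃ m : ℕ, ∀ n ≥ m, ∃ U ∈ ℱ n, F ⊆ U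

/-! ### Hurewicz ⇒ Lindelöf-type countable subcover -/

lemma lindelof_of_hurewicz {Y : Type v} [TopologicalSpace Y] (h : HurewiczProp Y)
    {𝒰 : Set (Set Y)} (h𝒰 : 𝒰 ∈ OX Y) : ∃ 𝒱 ⊆ 𝒰, 𝒱.Countable ∧ 𝒱 ∈ OX Y := by
  obtain ⟨ℱ, hℱ, hcov⟩ := h (fun _ => 𝒰) (fun _ => h𝒰)
  refine ⟨⋃ n, ℱ n, iUnion_subset (fun n => (hℱ n).1), countable_iUnion
    (fun n => ((hℱ n).2).countable), ⟨fun U hU => ?_, ?_⟩⟩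
  · obtain ⟨n, hn⟩ := mem_iUnion.1 hU
    exact h𝒰.1 U ((hℱ n).1 hn)
  · apply eq_univ_of_forall
    intro y
    obtain ⟨m, hm⟩ := hcov y
    obtain ⟨U, hU, hy⟩ := hm m le_rfl
    exact ⟨U, mem_iUnion.2 ⟨m, hU⟩, hy⟩

end KS

namespace KS
open Classical Set

/-! ### The abstract game lemma: a selection principle defeats every strategy of ONE -/

variable {T : Type u} {P : Type u}

/-- history (most recent first) of the first `n` moves of TWO -/
def histOf (G : ℕ → Set T) (n : ℕ) : List (Set T) := ((List.range n).map G).reverse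

lemma histOf_zero (G : ℕ → Set T) : histOf G 0 = [] := rfl

lemma histOf_succ (G : ℕ → Set T) (n : ℕ) : histOf G (n + 1) = G n :: histOf G n := by
  simp [histOf, List.range_succ]

/-- encoding of nodes of the strategy tree -/
def idx : List (Finset ℕ) → ℕ
  | [] => 0
  | c :: t => Nat.pair (idx t) (Encodable.encode c) + 1

lemma idx_injective : Function.Injective (idx : List (Finset ℕ) → ℕ) := by
  intro l₁
  induction l₁ with
  | nil => intro l₂ h; cases l₂ with
    | nil => rfl
    | cons c t => simp [idx] at h
  | cons c t ih =>
    intro l₂ h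
    cases l₂ with
    | nil => simp [idx] at h
    | cons c' t' =>
      simp only [idx, Nat.add_right_cancel_iff] at h
      have h1 := congrArg Nat.unpair h
      simp only [Nat.unpair_pair] at h1
      obtain ⟨h2, h3⟩ := Prod.mk.injEq _ _ _ _ ▸ h1
      rw [ih h2, Encodable.encode_injective h3]

lemma idx_lt_cons (c : Finset ℕ) (t : List (Finset ℕ)) : idx t < idx (c :: t) := by
  simp only [idx]
  exact Nat.lt_succ_of_le (Nat.left_le_pair _ _)

/-- helper: a finite subset of the range of `f` is the image of a finset of codes -/
lemma exists_finset_code {f : ℕ → T} {s : Set T} (hs : s.Finite) (hsub : s ⊆ range f) :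
    ∃ c : Finset ℕ, f '' ↑c = s := by
  have : ∀ x : T, x ∈ s → ∃ n, f n = x := fun x hx => hsub hx
  choose g hg using this
  refine ⟨hs.toFinset.image (fun x => if h : x ∈ s then g x h else 0), ?_⟩
  ext y
  simp only [Finset.coe_image, mem_image, Finset.mem_coe, Set.Finite.mem_toFinset]
  constructor
  · rintro ⟨n, ⟨x, hx, rfl⟩, rfl⟩
    simpa [dif_pos hx, hg x hx] using hx
  · intro hy
    exact ⟨if h : y ∈ s then g y h else 0, ⟨y, hy, rfl⟩, by simp [dif_pos hy, hg y hy]⟩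

theorem game_lemma (𝒦 : Set (Set T)) (R : P → T → Prop)
    (hne : ∀ 𝒰 ∈ 𝒦, (𝒰 : Set T).Nonempty)
    (hsel : ∀ 𝒰 : ℕ → Set T, (∀ n, 𝒰 n ∈ 𝒦) → ∃ F : ℕ → Set T,
      (∀ n, F n ⊆ 𝒰 n ∧ (F n).Finite) ∧ ∀ p : P, ∃ m, ∀ n ≥ m, ∃ t ∈ F n, R p t)
    (hct : ∀ 𝒰 ∈ 𝒦, ∃ 𝒱 ⊆ 𝒰, 𝒱.Countable ∧ 𝒱 ∈ 𝒦)
    (σ : List (Set T) → Set T) (hσ : ∀ s, σ s ∈ 𝒦) :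
    ∃ G : ℕ → Set T, (∀ n, (G n).Finite ∧ G n ⊆ σ (histOf G n)) ∧
      ∀ p : P, ∃ m, ∀ n ≥ m, ∃ t ∈ G n, R p t := by
  -- countable refinement of the strategy
  have hτ : ∀ s : List (Set T), ∃ 𝒱 ⊆ σ s, 𝒱.Countable ∧ 𝒱 ∈ 𝒦 := fun s => hct _ (hσ s)
  choose τ hτsub hτct hτmem using hτ
  have hτne : ∀ s, (τ s).Nonempty := fun s => hne _ (hτmem s)
  -- enumerations
  have henum : ∀ s : List (Set T), ∃ e : ℕ → T, τ s = range e :=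
    fun s => (hτct s).exists_eq_range (hτne s)
  choose e he using henum
  -- realization of coded histories
  let realize : List (Finset ℕ) → List (Set T) := fun l =>
    l.rec [] (fun c t ih => (e ih '' ↑c) :: ih)
  have realize_nil : realize [] = [] := rfl
  have realize_cons : ∀ c t, realize (c :: t) = (e (realize t) '' ↑c) :: realize t :=
    fun c t => rfl
  -- decoding
  let ν : ℕ → List (Finset ℕ) := fun k => if h : ∃ l, idx l = k then h.choose else []
  have hν : ∀ l, ν (idx l) = l := by
    intro l
    have h : ∃ l', idx l' = idx l := ⟨l, rfl⟩
    simp only [ν, dif_pos h]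
    exact idx_injective h.choose_spec
  -- the master sequence of covers
  let W : ℕ → Set T := fun k => τ (realize (ν k))
  have hW : ∀ k, W k ∈ 𝒦 := fun k => hτmem _
  obtain ⟨F, hF, hwin⟩ := hsel W hW
  -- choose codes for the selections
  have hcode : ∀ l : List (Finset ℕ), ∃ c : Finset ℕ,
      e (realize l) '' ↑c = F (idx l) := by
    intro l
    apply exists_finset_code (hF (idx l)).2
    have : F (idx l) ⊆ W (idx l) := (hF (idx l)).1
    rwa [show W (idx l) = range (e (realize l)) by rw [← he]; simp [W, hν]] at this
  choose code hcodespec using hcode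
  -- build the play
  let node : ℕ → List (Finset ℕ) := fun n => n.rec [] (fun _ ih => code ih :: ih)
  have node_succ : ∀ n, node (n + 1) = code (node n) :: node n := fun n => rfl
  let G : ℕ → Set T := fun n => F (idx (node n))
  have hreal : ∀ n, realize (node n) = histOf G n := by
    intro n
    induction n with
    | zero => rfl
    | succ n ih =>
      rw [node_succ, realize_cons, hcodespec, ih, histOf_succ]
  have hGsub : ∀ n, G n ⊆ σ (histOf G n) := by
    intro n
    have h1 : G n ⊆ W (idx (node n)) := (hF _).1
    have h2 : W (idx (node n)) = τ (realize (node n)) := by simp [W, hν]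
    rw [h2, hreal] at h1
    exact h1.trans (hτsub _)
  have hmono : StrictMono (fun n => idx (node n)) := by
    apply strictMono_nat_of_lt_succ
    intro n
    rw [node_succ]
    exact idx_lt_cons _ _
  refine ⟨G, fun n => ⟨(hF _).2, hGsub n⟩, ?_⟩
  intro p
  obtain ⟨m, hm⟩ := hwin p
  refine ⟨m, fun n hn => ?_⟩
  exact hm (idx (node n)) (le_trans (le_trans hn (hmono.le_apply)) le_rfl)

end KS

namespace KS
open Classical Set

variable {X : Type u} [TopologicalSpace X]

lemma omega_of_forall {𝒰 : Set (Set X)}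
    (hprops : ∀ U ∈ 𝒰, IsOpen U ∧ U.Nonempty ∧ U ≠ univ)
    (hω : ∀ F : Set X, F.Finite → F.Nonempty → ∃ U ∈ 𝒰, F ⊆ U) : 𝒰 ∈ OmegaCovers X := by
  refine ⟨⟨hprops, eq_univ_of_forall fun x => ?_⟩, hω⟩
  obtain ⟨U, hU, hsub⟩ := hω {x} (finite_singleton x) (singleton_nonempty x)
  exact ⟨U, hU, hsub rfl⟩

lemma mem_histOf {T : Type v} {G : ℕ → Set T} {n : ℕ} {l : Set T} :
    l ∈ histOf G n ↔ ∃ j < n, G j = l := by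
  simp [histOf, List.mem_reverse, List.mem_map, eq_comm]

instance [Nonempty X] : Nonempty (PFin X) := ⟨sing (Classical.arbitrary X)⟩

theorem two_of_one [T2Space X] [Infinite X] (h1 : HurewiczProp (PFin X)) :
    Sfin (OmegaCovers X) (groupables (OmegaCovers X)) := by
  have : Nonempty X := inferInstance
  intro 𝒰 h𝒰
  -- one's strategy: play hats of the given ω-covers, removing used sets
  set used : List (Set (Set (PFin X))) → Set (Set X) :=
    fun hist => {U | ∃ l ∈ hist, ∃ S ∈ l, U = unhat S} with hused
  set Dg : List (Set (Set (PFin X))) → Set (Set X) :=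
    fun hist => if h : (used hist).Finite then used hist else ∅ with hDg
  have hDgfin : ∀ hist, (Dg hist).Finite := by
    intro hist
    by_cases h : (used hist).Finite
    · rw [hDg]; simpa [dif_pos h] using h
    · rw [hDg]; simp [dif_neg h]
  set σ : List (Set (Set (PFin X))) → Set (Set (PFin X)) :=
    fun hist => hat '' (𝒰 hist.length \ Dg hist) with hσdef
  have hσ : ∀ s, σ s ∈ OX (PFin X) :=
    fun s => hat_cover (omega_diff (h𝒰 s.length) (hDgfin s))
  obtain ⟨G, hG, hwin⟩ := game_lemma (T := Set (PFin X)) (P := PFin X)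
    (OX (PFin X)) (fun p t => p ∈ t)
    (by
      intro 𝒱 h𝒱
      obtain ⟨S, hS, -⟩ : ∃ S ∈ 𝒱, (Classical.arbitrary (PFin X)) ∈ S := by
        have : (Classical.arbitrary (PFin X)) ∈ ⋃₀ 𝒱 := h𝒱.2 ▸ mem_univ _
        exact this
      exact ⟨S, hS⟩)
    (by
      intro 𝒱 h𝒱
      obtain ⟨ℱ, hℱ, hcov⟩ := h1 𝒱 h𝒱
      refine ⟨ℱ, fun n => ⟨(hℱ n).1, (hℱ n).2⟩, fun p => ?_⟩
      obtain ⟨m, hm⟩ := hcov p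
      exact ⟨m, fun n hn => hm n hn⟩)
    (fun 𝒱 h𝒱 => lindelof_of_hurewicz h1 h𝒱) σ hσ
  -- pull the play back to `X`
  set ℱ : ℕ → Set (Set X) := fun n => unhat '' G n with hℱdef
  have husedG : ∀ n, used (histOf G n) = ⋃ j ∈ Finset.range n, ℱ j := by
    intro n
    ext U
    simp only [hused, mem_setOf_eq, mem_iUnion, Finset.mem_range, hℱdef, mem_image]
    constructor
    · rintro ⟨l, hl, S, hS, rfl⟩
      obtain ⟨j, hj, rfl⟩ := mem_histOf.1 hl
      exact ⟨j, hj, S, hS, rfl⟩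
    · rintro ⟨j, hj, S, hS, rfl⟩
      exact ⟨G j, mem_histOf.2 ⟨j, hj, rfl⟩, S, hS, rfl⟩
  have husedfin : ∀ n, (used (histOf G n)).Finite := by
    intro n
    rw [husedG]
    apply Set.Finite.biUnion (Finset.finite_toSet _)
    intro j _
    exact ((hG j).1).image _
  have hDgG : ∀ n, Dg (histOf G n) = ⋃ j ∈ Finset.range n, ℱ j := by
    intro n
    rw [hDg]
    simp only [dif_pos (husedfin n)]
    exact husedG n
  have hlen : ∀ n, (histOf G n).length = n := by
    intro n; simp [histOf]
  have hkey : ∀ n, ℱ n ⊆ 𝒰 n \ ⋃ j ∈ Finset.range n, ℱ j := by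
    intro n
    rintro U ⟨S, hS, rfl⟩
    have hS' := (hG n).2 hS
    rw [hσdef] at hS'
    simp only [hlen n] at hS'
    obtain ⟨V, hV, rfl⟩ := hS'
    rw [unhat_hat]
    rw [hDgG n] at hV
    exact hV
  have hsubU : ∀ n, ℱ n ⊆ 𝒰 n := fun n => (hkey n).trans diff_subset
  have hdisj : ∀ {m n : ℕ}, m < n → ∀ {U}, U ∈ ℱ n → U ∉ ℱ m := by
    intro m n hmn U hUn hUm
    have := hkey n hUn
    exact this.2 (mem_iUnion₂.2 ⟨m, Finset.mem_range.2 hmn, hUm⟩)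
  -- the witnessing property
  have hwitness : ∀ F : Set X, F.Finite → F.Nonempty →
      ∃ m, ∀ n ≥ m, ∃ U ∈ ℱ n, F ⊆ U := by
    intro F hF hne
    obtain ⟨m, hm⟩ := hwin (mkF hF hne)
    refine ⟨m, fun n hn => ?_⟩
    obtain ⟨S, hS, hKS⟩ := hm n hn
    have hS' := (hG n).2 hS
    rw [hσdef] at hS'
    obtain ⟨V, hV, rfl⟩ := hS'
    refine ⟨unhat (hat V), ⟨hat V, hS, rfl⟩, ?_⟩
    rw [unhat_hat]
    exact hKS
  -- assemble
  set φ : Set X → ℕ := fun U => sInf {n | U ∈ ℱ n} with hφdef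
  have hφ : ∀ {n U}, U ∈ ℱ n → φ U = n := by
    intro n U hU
    have h1' : n ∈ {n | U ∈ ℱ n} := hU
    have h2' : sInf {n | U ∈ ℱ n} ∈ {n | U ∈ ℱ n} := Nat.sInf_mem ⟨n, h1'⟩
    have h3' : sInf {n | U ∈ ℱ n} ≤ n := Nat.sInf_le h1'
    rcases lt_or_eq_of_le h3' with h | h
    · exact absurd h2' (fun hc => hdisj h hU hc)
    · exact h
  have hCsub : ∀ {U}, U ∈ ⋃ n, ℱ n → ∃ n, U ∈ ℱ n ∧ φ U = n := by
    intro U hU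
    obtain ⟨n, hn⟩ := mem_iUnion.1 hU
    exact ⟨n, hn, hφ hn⟩
  have hCprops : ∀ U ∈ ⋃ n, ℱ n, IsOpen U ∧ U.Nonempty ∧ U ≠ univ := by
    intro U hU
    obtain ⟨n, hn, -⟩ := hCsub hU
    exact omega_props (h𝒰 n) (hsubU n hn)
  have hCmem : (⋃ n, ℱ n) ∈ OmegaCovers X := by
    refine omega_of_forall hCprops ?_
    intro F hF hne
    obtain ⟨m, hm⟩ := hwitness F hF hne
    obtain ⟨U, hU, hsub⟩ := hm m le_rfl
    exact ⟨U, mem_iUnion.2 ⟨m, hU⟩, hsub⟩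
  refine ⟨ℱ, fun n => ⟨hsubU n, ((hG n).1).image _⟩, hCmem, φ, ?_, ?_⟩
  · intro n
    apply (((hG n).1).image unhat).subset
    rintro U ⟨hU, hφU⟩
    obtain ⟨m, hm, hφm⟩ := hCsub hU
    rwa [show n = m by rw [← hφU, hφm]]
  · intro J hJ
    refine omega_of_forall (fun U hU => hCprops U hU.1) ?_
    intro F hF hne
    obtain ⟨m, hm⟩ := hwitness F hF hne
    obtain ⟨n, hnJ, hnm⟩ := hJ.exists_gt m
    obtain ⟨U, hU, hsub⟩ := hm n (le_of_lt hnm)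
    exact ⟨U, ⟨mem_iUnion.2 ⟨n, hU⟩, by rw [hφ hU]; exact hnJ⟩, hsub⟩

end KS

namespace KS
open Classical Set

variable {X : Type u} [TopologicalSpace X]

/-- groupability characterization: almost every group contains a witness -/
lemma group_char {C : Set (Set X)} {φ : Set X → ℕ}
    (hgrp : ∀ J : Set ℕ, J.Infinite → {x ∈ C | φ x ∈ J} ∈ OmegaCovers X)
    {F : Set X} (hF : F.Finite) (hne : F.Nonempty) :
    ∃ m, ∀ j ≥ m, ∃ V ∈ C, φ V = j ∧ F ⊆ V := by
  set Bad : Set ℕ := {j | ¬ ∃ V ∈ C, φ V = j ∧ F ⊆ V} with hBad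
  by_cases hfin : Bad.Finite
  · rcases hfin.bddAbove with ⟨b, hb⟩
    refine ⟨b + 1, fun j hj => ?_⟩
    by_contra hc
    exact Nat.not_succ_le_self b (le_trans hj (hb (hBad ▸ hc)))
  · exfalso
    obtain ⟨V, ⟨hVC, hVJ⟩, hsub⟩ :=
      (hgrp Bad (fun h => hfin h)).2 F hF hne
    exact hVJ ⟨V, hVC, rfl, hsub⟩

theorem star_of_two [Nonempty X]
    (h2 : Sfin (OmegaCovers X) (groupables (OmegaCovers X))) : StarProp X := by
  intro 𝒰 h𝒰
  -- intersected covers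
  set 𝒱 : ℕ → Set (Set X) := fun m =>
    {V | V.Nonempty ∧ ∃ g : ℕ → Set X, (∀ j ≤ m, g j ∈ 𝒰 j) ∧
      V = ⋂ j ∈ Finset.range (m + 1), g j} with h𝒱def
  have h𝒱 : ∀ m, 𝒱 m ∈ OmegaCovers X := by
    intro m
    apply omega_of_forall
    · rintro V ⟨hne, g, hg, rfl⟩
      refine ⟨isOpen_biInter_finset (fun j hj => (omega_props (h𝒰 j)
          (hg j (Nat.lt_succ_iff.1 (Finset.mem_range.1 hj)))).1), hne, ?_⟩
      intro hun
      have hsub : (⋂ j ∈ Finset.range (m + 1), g j) ⊆ g 0 :=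
        biInter_subset_of_mem (Finset.mem_range.2 (Nat.succ_pos m))
      rw [hun] at hsub
      exact (omega_props (h𝒰 0) (hg 0 (Nat.zero_le m))).2.2
        (univ_subset_iff.1 hsub)
    · intro F hF hne
      have : ∀ j : ℕ, ∃ U ∈ 𝒰 j, F ⊆ U := fun j => (h𝒰 j).2 F hF hne
      choose u hu hsub using this
      refine ⟨⋂ j ∈ Finset.range (m + 1), u j, ⟨hne.mono ?_, u, fun j _ => hu j, rfl⟩, ?_⟩
      · exact subset_iInter₂ fun j _ => hsub j
      · exact subset_iInter₂ fun j _ => hsub j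
  obtain ⟨ℱ, hℱ, hC, φ, hφfin, hφgrp⟩ := h2 𝒱 h𝒱
  set C : Set (Set X) := ⋃ n, ℱ n with hCdef
  -- the stage of an element
  set mV : Set X → ℕ := fun V => sInf {n | V ∈ ℱ n} with hmV
  have hmVmem : ∀ {V}, V ∈ C → V ∈ ℱ (mV V) := by
    intro V hV
    obtain ⟨n, hn⟩ := mem_iUnion.1 hV
    exact Nat.sInf_mem (⟨n, hn⟩ : {k | V ∈ ℱ k}.Nonempty)
  -- components
  have hcomp : ∀ V : Set X, ∃ g : ℕ → Set X, V ∈ C →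
      ((∀ j ≤ mV V, g j ∈ 𝒰 j) ∧ ∀ j ≤ mV V, V ⊆ g j) := by
    intro V
    by_cases hV : V ∈ C
    · obtain ⟨-, g, hg, hVeq⟩ := (hℱ (mV V)).1 (hmVmem hV)
      refine ⟨g, fun _ => ⟨fun j hj => hg j hj, fun j hj => ?_⟩⟩
      rw [hVeq]
      exact biInter_subset_of_mem (Finset.mem_range.2 (Nat.lt_succ_of_le hj))
    · exact ⟨fun _ => ∅, fun h => absurd h hV⟩
  choose gV hgV using hcomp
  -- bad pairs
  have hbadfin : ∀ k : ℕ, {j | ∃ V ∈ C, φ V = j ∧ mV V < k}.Finite := by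
    intro k
    have hsub : {j | ∃ V ∈ C, φ V = j ∧ mV V < k} ⊆
        φ '' (⋃ n ∈ Finset.range k, ℱ n) := by
      rintro j ⟨V, hV, rfl, hm⟩
      exact ⟨V, mem_iUnion₂.2 ⟨mV V, Finset.mem_range.2 hm, hmVmem hV⟩, rfl⟩
    exact ((Set.Finite.biUnion (Finset.finite_toSet _)
      (fun n _ => (hℱ n).2)).image φ).subset hsub
  -- a strictly increasing selector avoiding bad pairs
  have hpick : ∀ b k : ℕ, ∃ j, b < j ∧ ¬ ∃ V ∈ C, φ V = j ∧ mV V < k := by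
    intro b k
    rcases (hbadfin k).bddAbove with ⟨c, hc⟩
    refine ⟨max b c + 1, Nat.lt_succ_of_le (le_max_left _ _), fun hbad => ?_⟩
    have := hc hbad
    omega
  set a : ℕ → ℕ := fun k => Nat.rec ((hpick 0 0).choose)
    (fun k ih => (hpick ih (k + 1)).choose) k with hadef
  have ha_succ : ∀ k, a (k + 1) = (hpick (a k) (k + 1)).choose := fun k => rfl
  have hagood : ∀ k, ¬ ∃ V ∈ C, φ V = a k ∧ mV V < k := by
    intro k
    cases k with
    | zero => exact (hpick 0 0).choose_spec.2
    | succ k => rw [ha_succ]; exact (hpick (a k) (k + 1)).choose_spec.2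
  have hamono : StrictMono a := by
    apply strictMono_nat_of_lt_succ
    intro k
    rw [ha_succ]
    exact (hpick (a k) (k + 1)).choose_spec.1
  -- the aligned blocks
  refine ⟨fun k => {W | ∃ V ∈ C, φ V = a k ∧ W = gV V k}, fun k => ⟨?_, ?_⟩, ?_⟩
  · rintro W ⟨V, hV, hφV, rfl⟩
    have hm : k ≤ mV V := by
      by_contra hc
      exact hagood k ⟨V, hV, hφV, Nat.lt_of_not_le hc⟩
    exact ((hgV V) hV).1 k hm
  · have : {W | ∃ V ∈ C, φ V = a k ∧ W = gV V k} ⊆ (fun V => gV V k) ''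
        {x ∈ C | φ x = a k} := by
      rintro W ⟨V, hV, hφV, rfl⟩
      exact ⟨V, ⟨hV, hφV⟩, rfl⟩
    exact ((hφfin (a k)).image _).subset this
  · intro F hF hne
    obtain ⟨m₀, hm₀⟩ := group_char hφgrp hF hne
    refine ⟨m₀, fun k hk => ?_⟩
    have hak : a k ≥ m₀ := le_trans hk (hamono.le_apply)
    obtain ⟨V, hV, hφV, hsub⟩ := hm₀ (a k) hak
    have hm : k ≤ mV V := by
      by_contra hc
      exact hagood k ⟨V, hV, hφV, Nat.lt_of_not_le hc⟩
    exact ⟨gV V k, ⟨V, hV, hφV, rfl⟩, hsub.trans (((hgV V) hV).2 k hm)⟩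

end KS

namespace KS
open Classical Set

variable {X : Type u} [TopologicalSpace X]

theorem three_of_star [T2Space X] [Infinite X] (hs : StarProp X) :
    ∀ n : ℕ, 1 ≤ n → HurewiczProp (Fin n → X) := by
  intro n hn 𝒱 h𝒱
  have : Nonempty (Fin n) := ⟨⟨0, hn⟩⟩
  -- auxiliary ω-covers of X
  set 𝒰 : ℕ → Set (Set X) := fun m =>
    {U | (IsOpen U ∧ U.Nonempty ∧ U ≠ univ) ∧ ∃ 𝒢 : Set (Set (Fin n → X)),
      𝒢 ⊆ 𝒱 m ∧ 𝒢.Finite ∧ ∀ y : Fin n → X, (∀ i, y i ∈ U) → y ∈ ⋃₀ 𝒢} with h𝒰def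
  have h𝒰 : ∀ m, 𝒰 m ∈ OmegaCovers X := by
    intro m
    apply omega_of_forall (fun U hU => hU.1)
    intro F hF hne
    -- tuples with entries in F
    set T : Set (Fin n → X) := Set.pi univ (fun _ => F) with hT
    have hTfin : T.Finite := Set.Finite.pi (fun _ => hF)
    -- for each tuple pick a cover element and a box
    have hbox : ∀ t : Fin n → X, ∃ (V : Set (Fin n → X)) (W : Fin n → Set X),
        V ∈ 𝒱 m ∧ (∀ i, IsOpen (W i) ∧ t i ∈ W i) ∧
        (∀ y : Fin n → X, (∀ i, y i ∈ W i) → y ∈ V) := by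
      intro t
      have ht : t ∈ ⋃₀ 𝒱 m := (h𝒱 m).2 ▸ mem_univ t
      obtain ⟨V, hV, htV⟩ := ht
      have hVo : IsOpen V := ((h𝒱 m).1 V hV).1
      obtain ⟨I, u, hu, hsub⟩ := isOpen_pi_iff.1 hVo t htV
      refine ⟨V, fun i => if i ∈ I then u i else univ, hV, fun i => ?_, fun y hy => ?_⟩
      · by_cases hiI : i ∈ I
        · simpa [hiI] using hu i hiI
        · simp [hiI]
      · apply hsub
        intro i hiI
        have h : y i ∈ (if i ∈ I then u i else univ) := hy i
        rwa [if_pos (Finset.mem_coe.1 hiI)] at h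
    choose Vt Wt hVt hWt hWtV using hbox
    -- the open set around each point of F
    set Ux : X → Set X := fun x => ⋂ t ∈ T, ⋂ i ∈ {i : Fin n | t i = x}, Wt t i with hUx
    have hUxo : ∀ x, IsOpen (Ux x) := by
      intro x
      apply hTfin.isOpen_biInter
      intro t _
      apply Set.Finite.isOpen_biInter (Set.toFinite _)
      intro i _
      exact (hWt t i).1
    have hxUx : ∀ x, x ∈ Ux x := by
      intro x
      refine mem_iInter₂.2 fun t _ => mem_iInter₂.2 fun i hi => ?_
      rw [← hi]
      exact (hWt t i).2
    have hUxW : ∀ (t : Fin n → X), t ∈ T → ∀ i, Ux (t i) ⊆ Wt t i := by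
      intro t htT i
      intro w hw
      exact mem_iInter₂.1 (mem_iInter₂.1 hw t htT) i rfl
    -- separation from a point outside F
    obtain ⟨z, hz⟩ : Fᶜ.Nonempty := (hF.infinite_compl).nonempty
    have hsep : ∀ x : X, ∃ P : Set X, x ∈ F → (IsOpen P ∧ x ∈ P ∧ z ∉ P) := by
      intro x
      by_cases hx : x ∈ F
      · have hxz : x ≠ z := fun h => hz (h ▸ hx)
        obtain ⟨P, Q, hP, hQ, hxP, hzQ, hPQ⟩ := t2_separation hxz
        exact ⟨P, fun _ => ⟨hP, hxP, fun hzP => (disjoint_left.1 hPQ) hzP hzQ⟩⟩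
      · exact ⟨∅, fun h => absurd h hx⟩
    choose Px hPx using hsep
    set U : Set X := ⋃ x ∈ F, (Ux x ∩ Px x) with hU
    have hUo : IsOpen U := isOpen_biUnion fun x hx => (hUxo x).inter (hPx x hx).1
    have hFU : F ⊆ U := fun x hx =>
      mem_biUnion hx ⟨hxUx x, (hPx x hx).2.1⟩
    have hzU : z ∉ U := by
      intro hzU
      obtain ⟨x, hx, -, hzP⟩ := mem_iUnion₂.1 hzU
      exact (hPx x hx).2.2 hzP
    refine ⟨U, ⟨⟨hUo, hne.mono hFU, fun h => hzU (h ▸ mem_univ z)⟩,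
      Vt '' T, ?_, hTfin.image _, ?_⟩, hFU⟩
    · rintro V ⟨t, -, rfl⟩
      exact hVt t
    · intro y hy
      have hchoice : ∀ i, ∃ x, x ∈ F ∧ y i ∈ Ux x := by
        intro i
        obtain ⟨x, hx, hyi, -⟩ := mem_iUnion₂.1 (hy i)
        exact ⟨x, hx, hyi⟩
      choose t htF htU using hchoice
      have htT : t ∈ T := fun i _ => htF i
      refine ⟨Vt t, ⟨t, htT, rfl⟩, hWtV t y fun i => ?_⟩
      exact hUxW t htT i (htU i)
  -- apply (⋆) and push forward
  obtain ⟨ℱ, hℱ, hwit⟩ := hs 𝒰 h𝒰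
  have hGch : ∀ (m : ℕ) (W : Set X), ∃ 𝒢 : Set (Set (Fin n → X)), W ∈ 𝒰 m →
      (𝒢 ⊆ 𝒱 m ∧ 𝒢.Finite ∧ ∀ y : Fin n → X, (∀ i, y i ∈ W) → y ∈ ⋃₀ 𝒢) := by
    intro m W
    by_cases hW : W ∈ 𝒰 m
    · obtain ⟨-, 𝒢, h1, h2, h3⟩ := hW
      exact ⟨𝒢, fun _ => ⟨h1, h2, h3⟩⟩
    · exact ⟨∅, fun h => absurd h hW⟩
  choose Gch hGch using hGch
  refine ⟨fun m => ⋃ W ∈ ℱ m, Gch m W, fun m => ⟨?_, ?_⟩, ?_⟩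
  · apply iUnion₂_subset
    intro W hW
    exact (hGch m W ((hℱ m).1 hW)).1
  · exact (hℱ m).2.biUnion fun W hW => (hGch m W ((hℱ m).1 hW)).2.1
  · intro y
    obtain ⟨m₀, hm₀⟩ := hwit (range y) (finite_range y) (range_nonempty y)
    refine ⟨m₀, fun m hm => ?_⟩
    obtain ⟨U, hU, hsub⟩ := hm₀ m hm
    have hyU : ∀ i, y i ∈ U := fun i => hsub (mem_range_self i)
    obtain ⟨V, hV, hyV⟩ := (hGch m U ((hℱ m).1 hU)).2.2 y hyU
    exact ⟨V, mem_iUnion₂.2 ⟨U, hU, hV⟩, hyV⟩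

end KS

namespace KS
open Classical Set

universe w

/-- Hurewicz property for arbitrary (not necessarily nontrivial) open covers -/
lemma hurewicz' {Z : Type w} [TopologicalSpace Z] (hZ : HurewiczProp Z)
    {𝒞₀ : Set (Set Z)} (h𝒞₀ : 𝒞₀ ∈ OX Z)
    (𝒪 : ℕ → Set (Set Z)) (h𝒪 : ∀ n, (∀ U ∈ 𝒪 n, IsOpen U) ∧ ⋃₀ 𝒪 n = univ) :
    ∃ ℱ : ℕ → Set (Set Z), (∀ n, ℱ n ⊆ 𝒪 n ∧ (ℱ n).Finite) ∧
      ∀ z : Z, ∃ m, ∀ n ≥ m, z ∈ ⋃₀ ℱ n := by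
  set good : ℕ → Prop := fun n => univ ∈ 𝒪 n with hgood
  set 𝒰 : ℕ → Set (Set Z) := fun n =>
    if good n then 𝒞₀ else {U ∈ 𝒪 n | U.Nonempty ∧ U ≠ univ} with h𝒰
  have h𝒰OX : ∀ n, 𝒰 n ∈ OX Z := by
    intro n
    by_cases hg : good n
    · simpa [h𝒰, if_pos hg] using h𝒞₀
    · simp only [h𝒰, if_neg hg]
      refine ⟨fun U hU => ⟨(h𝒪 n).1 U hU.1, hU.2⟩, eq_univ_of_forall fun z => ?_⟩
      have hz : z ∈ ⋃₀ 𝒪 n := (h𝒪 n).2 ▸ mem_univ z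
      obtain ⟨U, hU, hzU⟩ := hz
      refine ⟨U, ⟨hU, ⟨z, hzU⟩, fun hUuniv => hg ?_⟩, hzU⟩
      rwa [hUuniv] at hU
  obtain ⟨ℱ', hℱ', hcov⟩ := hZ 𝒰 h𝒰OX
  refine ⟨fun n => if good n then {univ} else ℱ' n, fun n => ?_, fun z => ?_⟩
  · by_cases hg : good n
    · simp only [if_pos hg]
      exact ⟨singleton_subset_iff.2 hg, finite_singleton _⟩
    · simp only [if_neg hg]
      refine ⟨fun U hU => ?_, (hℱ' n).2⟩
      have := (hℱ' n).1 hU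
      rw [h𝒰] at this
      simp only [if_neg hg] at this
      exact this.1
  · obtain ⟨m, hm⟩ := hcov z
    refine ⟨m, fun n hn => ?_⟩
    by_cases hg : good n
    · simp only [if_pos hg]
      exact ⟨univ, rfl, mem_univ z⟩
    · simp only [if_neg hg]
      exact hm n hn

/-- a T1 nontrivial space has a nontrivial open cover -/
lemma exists_ntcover {Z : Type w} [TopologicalSpace Z] [T1Space Z] [Nontrivial Z] :
    ∃ 𝒞 ∈ OX Z, True := by
  refine ⟨{S | ∃ z : Z, S = {z}ᶜ}, ⟨fun U hU => ?_, eq_univ_of_forall fun z => ?_⟩, trivial⟩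
  · obtain ⟨z, rfl⟩ := hU
    obtain ⟨w, hw⟩ := exists_ne z
    refine ⟨isOpen_compl_singleton, ⟨w, hw⟩, fun h => ?_⟩
    have : z ∈ ({z}ᶜ : Set Z) := h ▸ mem_univ z
    exact this rfl
  · obtain ⟨w, hw⟩ := exists_ne z
    exact ⟨{w}ᶜ, ⟨w, rfl⟩, by simp [hw.symm]⟩

variable {X : Type u} [TopologicalSpace X]

/-- the canonical map from a finite power to the finite-subsets hyperspace -/
def eMap {j : ℕ} (hj : 1 ≤ j) (z : Fin j → X) : PFin X :=
  ⟨range z, finite_range z, ⟨z ⟨0, hj⟩, mem_range_self _⟩⟩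

lemma eMap_continuous {j : ℕ} (hj : 1 ≤ j) : Continuous (eMap (X := X) hj) := by
  rw [continuous_generateFrom_iff]
  rintro S ⟨U, hU, hS | hS⟩
  · have : eMap (X := X) hj ⁻¹' S = ⋂ i, (fun z => z i) ⁻¹' U := by
      rw [hS]
      ext z
      simp [eMap, range_subset_iff, mem_iInter]
    rw [this]
    exact isOpen_iInter_of_finite fun i => hU.preimage (continuous_apply i)
  · have : eMap (X := X) hj ⁻¹' S = ⋃ i, (fun z => z i) ⁻¹' U := by
      rw [hS]
      ext z
      constructor
      · rintro ⟨x, ⟨⟨i, rfl⟩, hxU⟩⟩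
        exact mem_iUnion.2 ⟨i, hxU⟩
      · intro hz
        obtain ⟨i, hi⟩ := mem_iUnion.1 hz
        exact ⟨z i, ⟨⟨i, rfl⟩, hi⟩⟩
    rw [this]
    exact isOpen_iUnion fun i => hU.preimage (continuous_apply i)

/-- every finite nonempty set is the range of a tuple -/
lemma exists_tuple {F : Set X} (hF : F.Finite) (hne : F.Nonempty) :
    ∃ (j : ℕ), 1 ≤ j ∧ ∃ z : Fin j → X, range z = F := by
  lift F to Finset X using hF
  have hlne : F.toList ≠ [] := by
    intro h
    rw [Finset.toList_eq_nil] at h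
    rw [h] at hne
    simp at hne
  refine ⟨F.toList.length, ?_, fun i => F.toList.get i, ?_⟩
  · exact Nat.one_le_iff_ne_zero.2 fun h => hlne (List.length_eq_zero_iff.1 h)
  · ext x
    simp only [mem_range]
    constructor
    · rintro ⟨i, rfl⟩
      have h1 : F.toList.get i ∈ F.toList := by simpa using F.toList.get_mem i.1 i.2
      exact Finset.mem_coe.2 (Finset.mem_toList.1 h1)
    · intro hx
      have h2 : x ∈ F.toList := Finset.mem_toList.2 (Finset.mem_coe.1 hx)
      obtain ⟨i, hi⟩ := List.mem_iff_get.1 h2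
      exact ⟨i, hi⟩

theorem one_of_three [T2Space X] [Infinite X]
    (h3 : ∀ n : ℕ, 1 ≤ n → HurewiczProp (Fin n → X)) : HurewiczProp (PFin X) := by
  have : Nonempty X := inferInstance
  intro 𝒲 h𝒲
  have key : ∀ j : ℕ, ∃ ℋ : ℕ → Set (Set (PFin X)),
      (∀ m, ℋ m ⊆ 𝒲 m ∧ (ℋ m).Finite) ∧
      ∀ hj : 1 ≤ j, ∀ z : Fin j → X,
        ∃ m₀, ∀ m ≥ m₀, ∃ W ∈ ℋ m, eMap hj z ∈ W := by
    intro j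
    by_cases hj : 1 ≤ j
    · have : Nonempty (Fin j) := ⟨⟨0, hj⟩⟩
      have hnontriv : Nontrivial (Fin j → X) := by
        obtain ⟨x₁, x₂, hx⟩ := exists_pair_ne X
        exact ⟨fun _ => x₁, fun _ => x₂, fun h => hx (congrFun h ⟨0, hj⟩)⟩
      obtain ⟨𝒞₀, h𝒞₀, -⟩ := exists_ntcover (Z := Fin j → X)
      obtain ⟨ℱj, hℱj, hcov⟩ := hurewicz' (h3 j hj) h𝒞₀
        (fun m => (fun W => eMap hj ⁻¹' W) '' 𝒲 m)
        (by
          intro m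
          constructor
          · rintro S ⟨W, hW, rfl⟩
            exact ((h𝒲 m).1 W hW).1.preimage (eMap_continuous hj)
          · apply eq_univ_of_forall
            intro z
            have : eMap (X := X) hj z ∈ ⋃₀ 𝒲 m := (h𝒲 m).2 ▸ mem_univ _
            obtain ⟨W, hW, hzW⟩ := this
            exact ⟨eMap hj ⁻¹' W, ⟨W, hW, rfl⟩, hzW⟩)
      have hWch : ∀ (m : ℕ) (S : Set (Fin j → X)), ∃ W : Set (PFin X),
          S ∈ ℱj m → (W ∈ 𝒲 m ∧ S = eMap hj ⁻¹' W) := by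
        intro m S
        by_cases hS : S ∈ ℱj m
        · obtain ⟨W, hW, rfl⟩ := (hℱj m).1 hS
          exact ⟨W, fun _ => ⟨hW, rfl⟩⟩
        · exact ⟨∅, fun h => absurd h hS⟩
      choose Wch hWch using hWch
      refine ⟨fun m => Wch m '' ℱj m, fun m => ⟨?_, (hℱj m).2.image _⟩, ?_⟩
      · rintro W ⟨S, hS, rfl⟩
        exact (hWch m S hS).1
      · intro hj' z
        obtain ⟨m₀, hm₀⟩ := hcov z
        refine ⟨m₀, fun m hm => ?_⟩
        obtain ⟨S, hS, hzS⟩ := hm₀ m hm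
        refine ⟨Wch m S, ⟨S, hS, rfl⟩, ?_⟩
        have := (hWch m S hS).2
        rw [this] at hzS
        exact hzS
    · exact ⟨fun _ => ∅, fun m => ⟨empty_subset _, finite_empty⟩,
        fun hj' => absurd hj' hj⟩
  choose ℋ hℋ hℋcov using key
  refine ⟨fun m => ⋃ jj ∈ Finset.range (m + 1), ℋ jj m, fun m => ⟨?_, ?_⟩, ?_⟩
  · exact iUnion₂_subset fun jj _ => (hℋ jj m).1
  · exact (Finset.finite_toSet _).biUnion fun jj _ => (hℋ jj m).2
  · intro K
    obtain ⟨j, hj, z, hz⟩ := exists_tuple K.2.1 K.2.2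
    have hK : eMap hj z = K := Subtype.ext hz
    obtain ⟨m₀, hm₀⟩ := hℋcov j hj z
    refine ⟨max m₀ j, fun m hm => ?_⟩
    obtain ⟨W, hW, hzW⟩ := hm₀ m (le_trans (le_max_left _ _) hm)
    refine ⟨W, mem_iUnion₂.2 ⟨j, ?_, hW⟩, hK ▸ hzW⟩
    exact Finset.mem_range.2 (Nat.lt_succ_of_le (le_trans (le_max_right _ _) hm))

end KS

namespace KS
open Classical Set Filter

variable {X : Type u} [TopologicalSpace X]

/-- basic `(s, ε)`-neighborhood of a point of `Cp X` -/
def cpBall (g : Cp X) (s : Finset X) (ε : ℝ) : Set (Cp X) :=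
  {f | ∀ x ∈ s, |f.1 x - g.1 x| < ε}

lemma cpBall_mem_nhds (g : Cp X) (s : Finset X) {ε : ℝ} (hε : 0 < ε) :
    cpBall g s ε ∈ nhds g := by
  have heq : cpBall g s ε = Subtype.val ⁻¹'
      (⋂ x ∈ s, (fun h : X → ℝ => h x) ⁻¹' Metric.ball (g.1 x) ε) := by
    ext f
    simp [cpBall, Real.dist_eq, mem_iInter₂]
  rw [heq]
  apply ContinuousAt.preimage_mem_nhds continuous_subtype_val.continuousAt
  have hopen : IsOpen (⋂ x ∈ s, (fun h : X → ℝ => h x) ⁻¹' Metric.ball (g.1 x) ε) :=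
    isOpen_biInter_finset fun x _ => Metric.isOpen_ball.preimage (continuous_apply x)
  apply hopen.mem_nhds
  refine mem_iInter₂.2 fun x _ => ?_
  simp [Metric.mem_ball, hε]

lemma mem_nhds_iff_cpBall {g : Cp X} {V : Set (Cp X)} :
    V ∈ nhds g ↔ ∃ (s : Finset X) (ε : ℝ), 0 < ε ∧ cpBall g s ε ⊆ V := by
  constructor
  · intro hV
    rw [nhds_induced Subtype.val g] at hV
    obtain ⟨W, hW, hsub⟩ := mem_comap.1 hV
    rw [nhds_pi] at hW
    obtain ⟨I, hI, t, ht, hpi⟩ := Filter.mem_pi.1 hW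
    have hball : ∀ x : X, ∃ εx : ℝ, 0 < εx ∧ (x ∈ I → Metric.ball (g.1 x) εx ⊆ t x) := by
      intro x
      by_cases hx : x ∈ I
      · obtain ⟨εx, hεx, hb⟩ := Metric.mem_nhds_iff.1 (ht x)
        exact ⟨εx, hεx, fun _ => hb⟩
      · exact ⟨1, one_pos, fun h => absurd h hx⟩
    choose εf hεf hballf using hball
    set s : Finset X := hI.toFinset with hs
    by_cases hsne : s.Nonempty
    · refine ⟨s, s.inf' hsne εf, ?_, ?_⟩
      · exact (Finset.lt_inf'_iff hsne).2 fun x _ => hεf x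
      · intro f hf
        apply hsub
        apply hpi
        intro x hxI
        have hxs : x ∈ s := hI.mem_toFinset.2 hxI
        apply hballf x hxI
        rw [Metric.mem_ball, Real.dist_eq]
        exact lt_of_lt_of_le (hf x hxs) (Finset.inf'_le εf hxs)
    · refine ⟨s, 1, one_pos, ?_⟩
      intro f _
      apply hsub
      apply hpi
      intro x hxI
      exact absurd (hI.mem_toFinset.2 hxI) (fun h => hsne ⟨x, h⟩)
  · rintro ⟨s, ε, hε, hsub⟩
    exact mem_of_superset (cpBall_mem_nhds g s hε) hsub

lemma mem_closure_iff_cpBall {g : Cp X} {A : Set (Cp X)} :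
    g ∈ closure A ↔ ∀ (s : Finset X) (ε : ℝ), 0 < ε →
      ∃ f ∈ A, ∀ x ∈ s, |f.1 x - g.1 x| < ε := by
  rw [mem_closure_iff_nhds]
  constructor
  · intro h s ε hε
    obtain ⟨f, hf1, hf2⟩ := h (cpBall g s ε) (cpBall_mem_nhds g s hε)
    exact ⟨f, hf2, hf1⟩
  · intro h t ht
    obtain ⟨s, ε, hε, hsub⟩ := mem_nhds_iff_cpBall.1 ht
    obtain ⟨f, hfA, hf⟩ := h s ε hε
    exact ⟨f, hsub hf, hfA⟩

lemma mem_closure_zero_iff {A : Set (Cp X)} :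
    zeroCp X ∈ closure A ↔ ∀ (s : Finset X) (ε : ℝ), 0 < ε →
      ∃ f ∈ A, ∀ x ∈ s, |f.1 x| < ε := by
  rw [mem_closure_iff_cpBall]
  have key : ∀ (f : Cp X) (x : X), |f.1 x - (zeroCp X).1 x| = |f.1 x| := by
    intro f x; simp [zeroCp]
  constructor
  · intro h s ε hε
    obtain ⟨f, hfA, hf⟩ := h s ε hε
    exact ⟨f, hfA, fun x hx => by rw [← key f x]; exact hf x hx⟩
  · intro h s ε hε
    obtain ⟨f, hfA, hf⟩ := h s ε hε
    exact ⟨f, hfA, fun x hx => by rw [key f x]; exact hf x hx⟩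

/-- removing a finite set from a member of `Ω_y` keeps it in `Ω_y` -/
lemma omegaPt_diff {y : Cp X} {A : Set (Cp X)} (hA : A ∈ OmegaPt (Cp X) y)
    {D : Set (Cp X)} (hD : D.Finite) : A \ D ∈ OmegaPt (Cp X) y := by
  have hAD : A \ D = A \ (D ∩ A) := Set.diff_inter_self_eq_diff.symm
  have hclosed : IsClosed (D ∩ A) := Set.Finite.isClosed (hD.inter_of_left A)
  constructor
  · have hsplit : A ⊆ (A \ (D ∩ A)) ∪ (D ∩ A) := by
      intro f hf
      by_cases hfD : f ∈ D ∩ A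
      · exact Or.inr hfD
      · exact Or.inl ⟨hf, hfD⟩
    have h1 : closure A ⊆ closure ((A \ (D ∩ A)) ∪ (D ∩ A)) := closure_mono hsplit
    rw [closure_union, hclosed.closure_eq] at h1
    rcases h1 hA.1 with h | h
    · rwa [hAD]
    · exact absurd h.2 hA.2
  · rw [hAD]
    exact fun hf => hA.2 hf.1

end KS

namespace KS
open Classical Set

variable {X : Type u} [TopologicalSpace X]

/-- complete regularity: a continuous function vanishing on a finite set, 1 outside an open set -/
lemma exists_sep [CompletelyRegularSpace X] {V F : Set X} (hV : IsOpen V) (hF : F.Finite)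
    (hFV : F ⊆ V) : ∃ f : Cp X, (∀ x ∈ F, f.1 x = 0) ∧ (∀ x ∉ V, f.1 x = 1) := by
  have hsep : ∀ y : X, ∃ fy : X → unitInterval, y ∈ F →
      (Continuous fy ∧ fy y = 0 ∧ EqOn fy 1 Vᶜ) := by
    intro y
    by_cases hy : y ∈ F
    · obtain ⟨fy, h1, h2, h3⟩ := CompletelyRegularSpace.completely_regular y Vᶜ
        (isClosed_compl_iff.2 hV) (fun h => h (hFV hy))
      exact ⟨fy, fun _ => ⟨h1, h2, h3⟩⟩
    · exact ⟨fun _ => 0, fun h => absurd h hy⟩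
  choose fy hfy using hsep
  have hcont : Continuous (fun x => ∏ y ∈ hF.toFinset, ((fy y x : unitInterval) : ℝ)) := by
    apply continuous_finset_prod
    intro y hy
    exact continuous_subtype_val.comp ((hfy y (hF.mem_toFinset.1 hy)).1)
  refine ⟨⟨_, hcont⟩, fun x hx => ?_, fun x hx => ?_⟩
  · apply Finset.prod_eq_zero (hF.mem_toFinset.2 hx)
    rw [(hfy x hx).2.1]
    simp
  · apply Finset.prod_eq_one
    intro y hy
    rw [(hfy y (hF.mem_toFinset.1 hy)).2.2 hx]
    simp

/-- groupability characterization in `Ω_0` of `Cp X` -/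
lemma group_char_pt {B : Set (Cp X)} {ψ : Cp X → ℕ}
    (hgrp : ∀ J : Set ℕ, J.Infinite → {f ∈ B | ψ f ∈ J} ∈ OmegaPt (Cp X) (zeroCp X))
    (s : Finset X) {ε : ℝ} (hε : 0 < ε) :
    ∃ m, ∀ j ≥ m, ∃ f ∈ B, ψ f = j ∧ ∀ x ∈ s, |f.1 x| < ε := by
  set Bad : Set ℕ := {j | ¬ ∃ f ∈ B, ψ f = j ∧ ∀ x ∈ s, |f.1 x| < ε} with hBad
  by_cases hfin : Bad.Finite
  · rcases hfin.bddAbove with ⟨b, hb⟩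
    refine ⟨b + 1, fun j hj => ?_⟩
    by_contra hc
    exact Nat.not_succ_le_self b (le_trans hj (hb (hBad ▸ hc)))
  · exfalso
    have h0 := (hgrp Bad (fun h => hfin h)).1
    obtain ⟨f, ⟨hfB, hfJ⟩, hsmall⟩ := mem_closure_zero_iff.1 h0 s ε hε
    exact hfJ ⟨f, hfB, rfl, hsmall⟩

theorem star_of_four [Nonempty X] [CompletelyRegularSpace X]
    (h4 : Sfin (OmegaPt (Cp X) (zeroCp X)) (groupables (OmegaPt (Cp X) (zeroCp X)))) :
    StarProp X := by
  intro 𝒰 h𝒰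
  -- intersected covers
  set 𝒱 : ℕ → Set (Set X) := fun m =>
    {V | V.Nonempty ∧ ∃ g : ℕ → Set X, (∀ j ≤ m, g j ∈ 𝒰 j) ∧
      V = ⋂ j ∈ Finset.range (m + 1), g j} with h𝒱def
  have h𝒱 : ∀ m, 𝒱 m ∈ OmegaCovers X := by
    intro m
    apply omega_of_forall
    · rintro V ⟨hne, g, hg, rfl⟩
      refine ⟨isOpen_biInter_finset (fun j hj => (omega_props (h𝒰 j)
          (hg j (Nat.lt_succ_iff.1 (Finset.mem_range.1 hj)))).1), hne, ?_⟩
      intro hun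
      have hsub : (⋂ j ∈ Finset.range (m + 1), g j) ⊆ g 0 :=
        biInter_subset_of_mem (Finset.mem_range.2 (Nat.succ_pos m))
      rw [hun] at hsub
      exact (omega_props (h𝒰 0) (hg 0 (Nat.zero_le m))).2.2 (univ_subset_iff.1 hsub)
    · intro F hF hne
      have : ∀ j : ℕ, ∃ U ∈ 𝒰 j, F ⊆ U := fun j => (h𝒰 j).2 F hF hne
      choose u hu hsub using this
      refine ⟨⋂ j ∈ Finset.range (m + 1), u j, ⟨hne.mono ?_, u, fun j _ => hu j, rfl⟩, ?_⟩
      · exact subset_iInter₂ fun j _ => hsub j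
      · exact subset_iInter₂ fun j _ => hsub j
  have h𝒱props : ∀ m, ∀ V ∈ 𝒱 m, IsOpen V ∧ V.Nonempty ∧ V ≠ univ :=
    fun m V hV => omega_props (h𝒱 m) hV
  -- the associated subsets of Cp X
  set A : ℕ → Set (Cp X) := fun m =>
    {f | ∃ V ∈ 𝒱 m, (∀ x ∉ V, f.1 x = 1) ∧
      ∃ F : Set X, F.Finite ∧ F.Nonempty ∧ F ⊆ V ∧ ∀ x ∈ F, f.1 x = 0} with hAdef
  have hA : ∀ m, A m ∈ OmegaPt (Cp X) (zeroCp X) := by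
    intro m
    constructor
    · rw [mem_closure_zero_iff]
      intro s ε hε
      set F : Set X := ↑s ∪ {Classical.arbitrary X} with hFdef
      have hFfin : F.Finite := (s.finite_toSet).union (finite_singleton _)
      have hFne : F.Nonempty := ⟨Classical.arbitrary X, Or.inr rfl⟩
      obtain ⟨V, hV, hFV⟩ := (h𝒱 m).2 F hFfin hFne
      obtain ⟨f, hf0, hf1⟩ := exists_sep (h𝒱props m V hV).1 hFfin hFV
      refine ⟨f, ⟨V, hV, hf1, F, hFfin, hFne, hFV, hf0⟩, fun x hx => ?_⟩
      rw [hf0 x (Or.inl hx)]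
      simpa using hε
    · rintro ⟨V, hV, hf1, -⟩
      have hx := outs_spec (h𝒱props m V hV).2.2
      have := hf1 _ hx
      simp [zeroCp] at this
  obtain ⟨𝒜, h𝒜, hB, ψ, hψfin, hψgrp⟩ := h4 A hA
  set B : Set (Cp X) := ⋃ m, 𝒜 m with hBdef
  set mB : Cp X → ℕ := fun f => sInf {m | f ∈ 𝒜 m} with hmB
  have hmBmem : ∀ {f}, f ∈ B → f ∈ 𝒜 (mB f) := by
    intro f hf
    obtain ⟨m, hm⟩ := mem_iUnion.1 hf
    exact Nat.sInf_mem (⟨m, hm⟩ : {k | f ∈ 𝒜 k}.Nonempty)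
  -- representatives
  have hrep : ∀ f : Cp X, ∃ (V : Set X) (g : ℕ → Set X), f ∈ B →
      ((∀ x ∉ V, f.1 x = 1) ∧ (∀ j ≤ mB f, g j ∈ 𝒰 j) ∧ ∀ j ≤ mB f, V ⊆ g j) := by
    intro f
    by_cases hf : f ∈ B
    · obtain ⟨V, hV, hf1, -⟩ := (h𝒜 (mB f)).1 (hmBmem hf)
      obtain ⟨-, g, hg, hVeq⟩ := hV
      refine ⟨V, g, fun _ => ⟨hf1, fun j hj => hg j hj, fun j hj => ?_⟩⟩
      rw [hVeq]
      exact biInter_subset_of_mem (Finset.mem_range.2 (Nat.lt_succ_of_le hj))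
    · exact ⟨∅, fun _ => ∅, fun h => absurd h hf⟩
  choose Vf gf hrep using hrep
  -- realignment
  have hbadfin : ∀ k : ℕ, {j | ∃ f ∈ B, ψ f = j ∧ mB f < k}.Finite := by
    intro k
    have hsub : {j | ∃ f ∈ B, ψ f = j ∧ mB f < k} ⊆
        ψ '' (⋃ m ∈ Finset.range k, 𝒜 m) := by
      rintro j ⟨f, hf, rfl, hm⟩
      exact ⟨f, mem_iUnion₂.2 ⟨mB f, Finset.mem_range.2 hm, hmBmem hf⟩, rfl⟩
    exact ((Set.Finite.biUnion (Finset.finite_toSet _)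
      (fun m _ => (h𝒜 m).2)).image ψ).subset hsub
  have hpick : ∀ b k : ℕ, ∃ j, b < j ∧ ¬ ∃ f ∈ B, ψ f = j ∧ mB f < k := by
    intro b k
    rcases (hbadfin k).bddAbove with ⟨c, hc⟩
    refine ⟨max b c + 1, Nat.lt_succ_of_le (le_max_left _ _), fun hbad => ?_⟩
    have := hc hbad
    omega
  set a : ℕ → ℕ := fun k => Nat.rec ((hpick 0 0).choose)
    (fun k ih => (hpick ih (k + 1)).choose) k with hadef
  have ha_succ : ∀ k, a (k + 1) = (hpick (a k) (k + 1)).choose := fun k => rfl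
  have hagood : ∀ k, ¬ ∃ f ∈ B, ψ f = a k ∧ mB f < k := by
    intro k
    cases k with
    | zero => exact (hpick 0 0).choose_spec.2
    | succ k => rw [ha_succ]; exact (hpick (a k) (k + 1)).choose_spec.2
  have hamono : StrictMono a := by
    apply strictMono_nat_of_lt_succ
    intro k
    rw [ha_succ]
    exact (hpick (a k) (k + 1)).choose_spec.1
  -- aligned blocks
  refine ⟨fun k => {W | ∃ f ∈ B, ψ f = a k ∧ W = gf f k}, fun k => ⟨?_, ?_⟩, ?_⟩
  · rintro W ⟨f, hf, hψf, rfl⟩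
    have hm : k ≤ mB f := by
      by_contra hc
      exact hagood k ⟨f, hf, hψf, Nat.lt_of_not_le hc⟩
    exact ((hrep f) hf).2.1 k hm
  · have : {W | ∃ f ∈ B, ψ f = a k ∧ W = gf f k} ⊆ (fun f => gf f k) ''
        {f ∈ B | ψ f = a k} := by
      rintro W ⟨f, hf, hψf, rfl⟩
      exact ⟨f, ⟨hf, hψf⟩, rfl⟩
    apply Set.Finite.subset _ this
    apply Set.Finite.image
    have hsub2 : {f ∈ B | ψ f = a k} ⊆ {f ∈ B | ψ f = a k} := subset_rfl
    exact hψfin (a k)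
  · intro F hF hne
    obtain ⟨m₀, hm₀⟩ := group_char_pt hψgrp hF.toFinset (by norm_num : (0:ℝ) < 1/2)
    refine ⟨m₀, fun k hk => ?_⟩
    obtain ⟨f, hf, hψf, hsmall⟩ := hm₀ (a k) (le_trans hk hamono.le_apply)
    have hFV : F ⊆ Vf f := by
      intro x hx
      by_contra hxV
      have h1 := ((hrep f) hf).1 x hxV
      have h2 := hsmall x (hF.mem_toFinset.2 hx)
      rw [h1] at h2
      norm_num at h2
    have hm : k ≤ mB f := by
      by_contra hc
      exact hagood k ⟨f, hf, hψf, Nat.lt_of_not_le hc⟩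
    exact ⟨gf f k, ⟨f, hf, hψf, rfl⟩, hFV.trans (((hrep f) hf).2.2 k hm)⟩

end KS

namespace KS
open Classical Set

variable {X : Type u} [TopologicalSpace X]

lemma ctble_omega [T2Space X] [Infinite X] (hs : StarProp X) :
    ∀ 𝒰 ∈ OmegaCovers X, ∃ 𝒱 ⊆ 𝒰, 𝒱.Countable ∧ 𝒱 ∈ OmegaCovers X := by
  have h3 := three_of_star hs
  intro 𝒰 h𝒰
  have key : ∀ n : ℕ, ∃ 𝒱 : Set (Set X), 𝒱 ⊆ 𝒰 ∧ 𝒱.Countable ∧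
      ∀ z : Fin (n + 1) → X, ∃ U ∈ 𝒱, range z ⊆ U := by
    intro n
    set hatn : Set X → Set (Fin (n + 1) → X) := fun U => {z | ∀ i, z i ∈ U} with hhatn
    have hcov : hatn '' 𝒰 ∈ OX (Fin (n + 1) → X) := by
      constructor
      · rintro S ⟨U, hU, rfl⟩
        obtain ⟨ho, hne, hpr⟩ := omega_props h𝒰 hU
        refine ⟨?_, ?_, ?_⟩
        · have : hatn U = ⋂ i, (fun z : Fin (n + 1) → X => z i) ⁻¹' U := by
            ext z; simp [hhatn, mem_iInter]
          rw [this]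
          exact isOpen_iInter_of_finite fun i => ho.preimage (continuous_apply i)
        · obtain ⟨x, hx⟩ := hne
          exact ⟨fun _ => x, fun i => hx⟩
        · intro h
          have : (fun _ => outs U) ∈ hatn U := h ▸ mem_univ _
          exact outs_spec hpr (this ⟨0, Nat.succ_pos n⟩)
      · apply eq_univ_of_forall
        intro z
        obtain ⟨U, hU, hsub⟩ := h𝒰.2 (range z) (finite_range z) (range_nonempty z)
        exact ⟨hatn U, ⟨U, hU, rfl⟩, fun i => hsub (mem_range_self i)⟩
    obtain ⟨𝒮, h𝒮sub, h𝒮ct, h𝒮OX⟩ := lindelof_of_hurewicz (h3 (n + 1) (Nat.succ_le_succ (Nat.zero_le n))) hcov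
    have hch : ∀ S : Set (Fin (n + 1) → X), ∃ U : Set X, S ∈ 𝒮 → (U ∈ 𝒰 ∧ S = hatn U) := by
      intro S
      by_cases hS : S ∈ 𝒮
      · obtain ⟨U, hU, rfl⟩ := h𝒮sub hS
        exact ⟨U, fun _ => ⟨hU, rfl⟩⟩
      · exact ⟨∅, fun h => absurd h hS⟩
    choose Uc hUc using hch
    refine ⟨Uc '' 𝒮, ?_, h𝒮ct.image _, ?_⟩
    · rintro U ⟨S, hS, rfl⟩
      exact (hUc S hS).1
    · intro z
      have hz : z ∈ ⋃₀ 𝒮 := h𝒮OX.2 ▸ mem_univ _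
      obtain ⟨S, hS, hzS⟩ := hz
      refine ⟨Uc S, ⟨S, hS, rfl⟩, ?_⟩
      intro x hx
      obtain ⟨i, rfl⟩ := hx
      have := (hUc S hS).2 ▸ hzS
      exact this i
  choose 𝒱n h1 h2 h3' using key
  refine ⟨⋃ n, 𝒱n n, iUnion_subset h1, countable_iUnion h2, omega_of_forall ?_ ?_⟩
  · intro U hU
    obtain ⟨n, hn⟩ := mem_iUnion.1 hU
    exact omega_props h𝒰 (h1 n hn)
  · intro F hF hne
    obtain ⟨j, hj, z, hz⟩ := exists_tuple hF hne
    obtain ⟨n, rfl⟩ : ∃ n, n + 1 = j := ⟨j - 1, Nat.succ_pred_eq_of_pos hj⟩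
    obtain ⟨U, hU, hsub⟩ := h3' n z
    exact ⟨U, mem_iUnion.2 ⟨n, hU⟩, hz ▸ hsub⟩

end KS

namespace KS
open Classical Set

variable {X : Type u} [TopologicalSpace X]

theorem four_of_star [T2Space X] [Infinite X] (hs : StarProp X) :
    Sfin (OmegaPt (Cp X) (zeroCp X)) (groupables (OmegaPt (Cp X) (zeroCp X))) := by
  have hNX : Nonempty X := inferInstance
  intro A hA
  set εs : ℕ → ℝ := fun n => 1 / ((n : ℝ) + 1) with hεs
  have hεpos : ∀ n, 0 < εs n := by
    intro n
    apply one_div_pos.2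
    positivity
  have hεmono : ∀ {m n : ℕ}, m ≤ n → εs n ≤ εs m := by
    intro m n hmn
    apply one_div_le_one_div_of_le
    · positivity
    · exact_mod_cast Nat.succ_le_succ hmn
  have h0A : ∀ n, zeroCp X ∉ A n := fun n => (hA n).2
  by_cases hI : {n : ℕ | ∃ f ∈ A n, ∀ x, |f.1 x| < εs n}.Infinite
  · -- CASE A: uniformly small functions occur cofinally
    set I := {n : ℕ | ∃ f ∈ A n, ∀ x, |f.1 x| < εs n} with hIdef
    have hfsel : ∀ n : ℕ, ∃ f : Cp X, n ∈ I → (f ∈ A n ∧ ∀ x, |f.1 x| < εs n) := by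
      intro n
      by_cases hn : n ∈ I
      · obtain ⟨f, hf1, hf2⟩ := hn
        exact ⟨f, fun _ => ⟨hf1, hf2⟩⟩
      · exact ⟨zeroCp X, fun h => absurd h hn⟩
    choose fsel hfsel using hfsel
    set ℱ : ℕ → Set (Cp X) := fun n => if n ∈ I then {fsel n} else ∅ with hℱdef
    set B := ⋃ n, ℱ n with hBdef
    have hmemB : ∀ {f}, f ∈ B ↔ ∃ n, n ∈ I ∧ fsel n = f := by
      intro f
      rw [hBdef, mem_iUnion]
      constructor
      · rintro ⟨n, hn⟩
        by_cases hnI : n ∈ I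
        · rw [hℱdef] at hn
          simp only [if_pos hnI, mem_singleton_iff] at hn
          exact ⟨n, hnI, hn.symm⟩
        · rw [hℱdef] at hn
          simp only [if_neg hnI] at hn
          exact absurd hn (notMem_empty f)
      · rintro ⟨n, hnI, rfl⟩
        refine ⟨n, ?_⟩
        rw [hℱdef]
        simp [if_pos hnI]
    have h0B : zeroCp X ∉ B := by
      intro h
      obtain ⟨n, hnI, hfn⟩ := hmemB.1 h
      exact h0A n (hfn ▸ (hfsel n hnI).1)
    have hfib : ∀ f, f ∈ B → {n | n ∈ I ∧ fsel n = f}.Finite := by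
      intro f hfB
      by_contra hinf
      have hf0 : ∀ x, f.1 x = 0 := by
        intro x
        by_contra hx
        have hpos : 0 < |f.1 x| := abs_pos.2 hx
        obtain ⟨k, hk⟩ := exists_nat_one_div_lt hpos
        obtain ⟨n, hn, hkn⟩ := Set.Infinite.exists_gt (fun h => hinf h) k
        have h2 := (hfsel n hn.1).2 x
        rw [hn.2] at h2
        have h3 : εs n ≤ 1 / ((k : ℝ) + 1) := by
          apply one_div_le_one_div_of_le
          · positivity
          · exact_mod_cast Nat.succ_le_succ (le_of_lt hkn)
        linarith
      apply h0B
      have : f = zeroCp X := Subtype.ext (funext fun x => by rw [hf0 x]; rfl)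
      rwa [this] at hfB
    set μ : Cp X → ℕ := fun f => sInf {n | n ∈ I ∧ fsel n = f} with hμdef
    have hμmem : ∀ {f}, f ∈ B → μ f ∈ I ∧ fsel (μ f) = f := by
      intro f hf
      obtain ⟨n, hnI, hfn⟩ := hmemB.1 hf
      exact Nat.sInf_mem (⟨n, hnI, hfn⟩ : {n | n ∈ I ∧ fsel n = f}.Nonempty)
    set M : Set ℕ := {n | ∃ f, f ∈ B ∧ μ f = n} with hMdef
    have hMI : ∀ n ∈ M, n ∈ I ∧ fsel n ∈ B ∧ μ (fsel n) = n := by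
      rintro n ⟨f, hfB, rfl⟩
      have h := hμmem hfB
      refine ⟨h.1, ?_, ?_⟩
      · rw [h.2]; exact hfB
      · rw [h.2]
    have hMinf : M.Infinite := by
      intro hMfin
      apply hI
      apply Set.Finite.subset (hMfin.biUnion (fun n hn => hfib (fsel n) (hMI n hn).2.1))
      intro k hk
      have hfB : fsel k ∈ B := hmemB.2 ⟨k, hk, rfl⟩
      have hM : μ (fsel k) ∈ M := ⟨fsel k, hfB, rfl⟩
      refine mem_iUnion₂.2 ⟨μ (fsel k), hM, ⟨hk, ?_⟩⟩
      exact (hμmem hfB).2.symm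
    letI : DecidablePred (· ∈ M) := fun n => Classical.propDecidable _
    have hpinf : (setOf (· ∈ M)).Infinite := hMinf
    set φ : Cp X → ℕ := fun f => Nat.count (· ∈ M) (μ f) with hφdef
    have hφnth : ∀ k, fsel (Nat.nth (· ∈ M) k) ∈ B ∧ φ (fsel (Nat.nth (· ∈ M) k)) = k := by
      intro k
      have hM := Nat.nth_mem_of_infinite hpinf k
      refine ⟨(hMI _ hM).2.1, ?_⟩
      rw [hφdef]
      simp only
      rw [(hMI _ hM).2.2]
      exact Nat.count_nth_of_infinite hpinf k
    have hinj : ∀ f g, f ∈ B → g ∈ B → φ f = φ g → f = g := by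
      intro f g hf hg hfg
      have hμf : μ f ∈ M := ⟨f, hf, rfl⟩
      have hμg : μ g ∈ M := ⟨g, hg, rfl⟩
      have h1 : Nat.nth (· ∈ M) (Nat.count (· ∈ M) (μ f)) = μ f := Nat.nth_count hμf
      have h2 : Nat.nth (· ∈ M) (Nat.count (· ∈ M) (μ g)) = μ g := Nat.nth_count hμg
      have : μ f = μ g := by
        rw [← h1, ← h2]
        rw [hφdef] at hfg
        simp only at hfg
        rw [hfg]
      rw [← (hμmem hf).2, ← (hμmem hg).2, this]
    have hsmallk : ∀ (s : Finset X) (ε' : ℝ), 0 < ε' → ∃ k₁, ∀ k ≥ k₁,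
        fsel (Nat.nth (· ∈ M) k) ∈ B ∧ φ (fsel (Nat.nth (· ∈ M) k)) = k ∧
        ∀ x ∈ s, |(fsel (Nat.nth (· ∈ M) k)).1 x| < ε' := by
      intro s ε' hε'
      obtain ⟨k₀, hk₀⟩ := exists_nat_one_div_lt hε'
      refine ⟨k₀ + 1, fun k hk => ⟨(hφnth k).1, (hφnth k).2, fun x _ => ?_⟩⟩
      have hM := Nat.nth_mem_of_infinite hpinf k
      have hnk : k ≤ Nat.nth (· ∈ M) k := (Nat.nth_strictMono hpinf).le_apply
      have hsmall := (hfsel _ (hMI _ hM).1).2 x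
      have h1 : εs (Nat.nth (· ∈ M) k) ≤ εs k₀ := hεmono (le_trans (le_trans (Nat.le_succ k₀) hk) hnk)
      have h2 : εs k₀ ≤ 1 / ((k₀ : ℝ) + 1) := le_of_eq rfl
      have := lt_of_lt_of_le hsmall (le_trans h1 h2)
      linarith
    refine ⟨ℱ, fun n => ⟨?_, ?_⟩, ⟨?_, h0B⟩, φ, ?_, ?_⟩
    · rw [hℱdef]
      by_cases hnI : n ∈ I
      · simp only [if_pos hnI, singleton_subset_iff]
        exact (hfsel n hnI).1
      · simp [if_neg hnI]
    · rw [hℱdef]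
      by_cases hnI : n ∈ I
      · simp only [if_pos hnI]; exact finite_singleton _
      · simp [if_neg hnI]
    · -- zero in closure of B
      rw [mem_closure_zero_iff]
      intro s ε' hε'
      obtain ⟨k₁, hk₁⟩ := hsmallk s ε' hε'
      obtain ⟨hfB, -, hsm⟩ := hk₁ k₁ le_rfl
      exact ⟨_, hfB, hsm⟩
    · -- finite fibres
      intro n
      apply Set.Subsingleton.finite
      intro f hf g hg
      exact hinj f g hf.1 hg.1 (hf.2.trans hg.2.symm)
    · -- groups
      intro J hJ
      refine ⟨?_, fun h => h0B h.1⟩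
      rw [mem_closure_zero_iff]
      intro s ε' hε'
      obtain ⟨k₁, hk₁⟩ := hsmallk s ε' hε'
      obtain ⟨k, hkJ, hkk₁⟩ := hJ.exists_gt k₁
      obtain ⟨hfB, hφf, hsm⟩ := hk₁ k (le_of_lt hkk₁)
      exact ⟨_, ⟨hfB, by rw [hφf]; exact hkJ⟩, hsm⟩
  · -- CASE B: eventually no uniformly small functions
    have hIfin : {n : ℕ | ∃ f ∈ A n, ∀ x, |f.1 x| < εs n}.Finite := Set.not_infinite.1 hI
    obtain ⟨b, hb⟩ := hIfin.bddAbove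
    set N := b + 1 with hNdef
    have hNb : ∀ n, N ≤ n → ∀ f ∈ A n, ∃ x, εs n ≤ |f.1 x| := by
      intro n hn f hf
      by_contra hc
      push_neg at hc
      have hmem : n ∈ {n : ℕ | ∃ f ∈ A n, ∀ x, |f.1 x| < εs n} := ⟨f, hf, hc⟩
      have := hb hmem
      omega
    set Uball : Cp X → ℕ → Set X := fun f n => {x | |f.1 x| < εs (N + n)} with hUballdef
    set mkD : Set (Cp X) → Set (Cp X) := fun D => if D.Finite then D else ∅ with hmkD
    have hmkDfin : ∀ D, (mkD D).Finite := by
      intro D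
      rw [hmkD]
      by_cases h : D.Finite
      · simpa [if_pos h] using h
      · simp [if_neg h]
    set mkCov : ℕ → Set (Cp X) → Set (Set X) := fun n D =>
      {U | (∃ f, f ∈ A (N + n) \ mkD D ∧ U = Uball f n) ∧ U.Nonempty} with hmkCov
    have hmkCovOmega : ∀ n D, mkCov n D ∈ OmegaCovers X := by
      intro n D
      apply omega_of_forall
      · rintro U ⟨⟨f, hf, rfl⟩, hUne⟩
        refine ⟨?_, hUne, ?_⟩
        · have heq : Uball f n = f.1 ⁻¹' (Metric.ball 0 (εs (N + n))) := by
            ext x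
            simp [hUballdef, Real.dist_eq, Metric.mem_ball]
          rw [heq]
          exact Metric.isOpen_ball.preimage f.2
        · obtain ⟨x, hx⟩ := hNb (N + n) (Nat.le_add_right N n) f hf.1
          intro hun
          have hxU : x ∈ Uball f n := hun ▸ mem_univ x
          have hlt : |f.1 x| < εs (N + n) := hxU
          exact absurd hlt (not_lt.2 hx)
      · intro F hF hne
        have hAD : A (N + n) \ mkD D ∈ OmegaPt (Cp X) (zeroCp X) :=
          omegaPt_diff (hA _) (hmkDfin D)
        obtain ⟨f, hfAD, hsm⟩ := mem_closure_zero_iff.1 hAD.1 hF.toFinset (εs (N + n)) (hεpos _)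
        have hsub : F ⊆ Uball f n := fun x hx => hsm x (hF.mem_toFinset.2 hx)
        exact ⟨Uball f n, ⟨⟨f, hfAD, rfl⟩, hne.mono hsub⟩, hsub⟩
    set recov : ℕ → Set (Cp X) → Set X → Cp X := fun n D U =>
      if h : ∃ f, f ∈ A (N + n) \ mkD D ∧ U = Uball f n then h.choose else zeroCp X
      with hrecov
    have hrecov_spec : ∀ n D U, (∃ f, f ∈ A (N + n) \ mkD D ∧ U = Uball f n) →
        recov n D U ∈ A (N + n) \ mkD D ∧ U = Uball (recov n D U) n := by
      intro n D U h
      rw [hrecov]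
      simp only [dif_pos h]
      exact h.choose_spec
    set usedF : List (Set (Set X)) → Set (Cp X) := fun l =>
      l.rec ∅ (fun head tail ih => ih ∪ (recov tail.length ih '' head)) with husedF
    have husedF_cons : ∀ head tail, usedF (head :: tail) =
        usedF tail ∪ (recov tail.length (usedF tail) '' head) := fun _ _ => rfl
    set σg : List (Set (Set X)) → Set (Set X) :=
      fun hist => mkCov hist.length (usedF hist) with hσgdef
    obtain ⟨G, hG, hwin⟩ := game_lemma (T := Set X) (P := PFin X) (OmegaCovers X)
      (fun p U => p.1 ⊆ U)
      (fun 𝒰 h𝒰 => by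
        obtain ⟨U, hU, -⟩ := h𝒰.2 {Classical.arbitrary X} (finite_singleton _)
          (singleton_nonempty _)
        exact ⟨U, hU⟩)
      (fun 𝒰 h𝒰 => by
        obtain ⟨ℱ', hℱ', hwit'⟩ := hs 𝒰 h𝒰
        exact ⟨ℱ', hℱ', fun p => hwit' p.1 p.2.1 p.2.2⟩)
      (ctble_omega hs) σg (fun s => hmkCovOmega _ _)
    set 𝒜 : ℕ → Set (Cp X) := fun n => recov n (usedF (histOf G n)) '' G n with h𝒜def
    have hlenG : ∀ n, (histOf G n).length = n := by intro n; simp [histOf]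
    have husedF_G : ∀ n, usedF (histOf G (n + 1)) = usedF (histOf G n) ∪ 𝒜 n := by
      intro n
      rw [histOf_succ, husedF_cons, hlenG]
    have hDfin_eq : ∀ n, (usedF (histOf G n)).Finite ∧
        usedF (histOf G n) = ⋃ j ∈ Finset.range n, 𝒜 j := by
      intro n
      induction n with
      | zero =>
        constructor
        · rw [histOf_zero]
          exact finite_empty
        · rw [histOf_zero]
          simp
          rfl
      | succ n ih =>
        constructor
        · rw [husedF_G]
          exact ih.1.union ((hG n).1.image _)
        · rw [husedF_G, ih.2]
          ext g
          simp [Finset.range_add_one, or_comm]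
    have hspec : ∀ n, ∀ U ∈ G n,
        recov n (usedF (histOf G n)) U ∈ A (N + n) \ mkD (usedF (histOf G n)) ∧
        U = Uball (recov n (usedF (histOf G n)) U) n := by
      intro n U hU
      have h := (hG n).2 hU
      rw [hσgdef] at h
      simp only [hlenG n] at h
      exact hrecov_spec n _ U h.1
    have hmkD_G : ∀ n, mkD (usedF (histOf G n)) = usedF (histOf G n) := by
      intro n
      rw [hmkD]
      simp [if_pos (hDfin_eq n).1]
    have hdisj : ∀ {m n : ℕ}, m < n → ∀ {g}, g ∈ 𝒜 n → g ∉ 𝒜 m := by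
      intro m n hmn g hgn hgm
      obtain ⟨U, hU, rfl⟩ := hgn
      have h1 := (hspec n U hU).1
      rw [hmkD_G] at h1
      apply h1.2
      have hthis : (recov n (usedF (histOf G n)) U) ∈ ⋃ j ∈ Finset.range n, 𝒜 j :=
        mem_iUnion₂.2 ⟨m, Finset.mem_range.2 hmn, hgm⟩
      rwa [← (hDfin_eq n).2] at hthis
    have h𝒜sub : ∀ n, 𝒜 n ⊆ A (N + n) := by
      intro n g hg
      obtain ⟨U, hU, rfl⟩ := hg
      exact ((hspec n U hU).1).1
    set φ : Cp X → ℕ := fun g => sInf {n | g ∈ 𝒜 n} with hφdef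
    have hφeq : ∀ {n g}, g ∈ 𝒜 n → φ g = n := by
      intro n g hg
      have h1' : n ∈ {n | g ∈ 𝒜 n} := hg
      have h2' : sInf {n | g ∈ 𝒜 n} ∈ {n | g ∈ 𝒜 n} := Nat.sInf_mem ⟨n, h1'⟩
      have h3' : sInf {n | g ∈ 𝒜 n} ≤ n := Nat.sInf_le h1'
      rcases lt_or_eq_of_le h3' with h | h
      · exact absurd h2' (fun hc => hdisj h hg hc)
      · exact h
    have h0B : zeroCp X ∉ ⋃ n, 𝒜 n := by
      intro h
      obtain ⟨n, hn⟩ := mem_iUnion.1 h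
      exact h0A _ (h𝒜sub n hn)
    have hwit : ∀ (s : Finset X) (ε' : ℝ), 0 < ε' → ∃ m₁, ∀ n ≥ m₁,
        ∃ g ∈ 𝒜 n, ∀ x ∈ s, |g.1 x| < ε' := by
      intro s ε' hε'
      obtain ⟨k₀, hk₀⟩ := exists_nat_one_div_lt hε'
      set F : Set X := ↑s ∪ {Classical.arbitrary X} with hFdef
      have hFfin : F.Finite := (s.finite_toSet).union (finite_singleton _)
      have hFne : F.Nonempty := ⟨Classical.arbitrary X, Or.inr rfl⟩
      obtain ⟨m₀, hm₀⟩ := hwin (mkF hFfin hFne)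
      refine ⟨max m₀ k₀, fun n hn => ?_⟩
      obtain ⟨U, hU, hsub⟩ := hm₀ n (le_trans (le_max_left _ _) hn)
      refine ⟨recov n (usedF (histOf G n)) U, ⟨U, hU, rfl⟩, fun x hx => ?_⟩
      have hxU : x ∈ U := hsub (Or.inl (Finset.mem_coe.2 hx))
      rw [(hspec n U hU).2] at hxU
      have hlt : |(recov n (usedF (histOf G n)) U).1 x| < εs (N + n) := hxU
      have hle : εs (N + n) ≤ εs k₀ :=
        hεmono (le_trans (le_trans (le_max_right m₀ k₀) hn) (Nat.le_add_left n N))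
      have heq : εs k₀ = 1 / ((k₀ : ℝ) + 1) := rfl
      linarith
    set ℱ : ℕ → Set (Cp X) := fun k => if h : N ≤ k then 𝒜 (k - N) else ∅ with hℱdef
    have hUeq : (⋃ k, ℱ k) = ⋃ n, 𝒜 n := by
      ext g
      simp only [mem_iUnion]
      constructor
      · rintro ⟨k, hk⟩
        by_cases h : N ≤ k
        · simp only [hℱdef, dif_pos h] at hk
          exact ⟨k - N, hk⟩
        · simp only [hℱdef, dif_neg h] at hk
          exact absurd hk (notMem_empty g)
      · rintro ⟨n, hn⟩
        refine ⟨N + n, ?_⟩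
        simp only [hℱdef, dif_pos (Nat.le_add_right N n)]
        simpa [Nat.add_sub_cancel_left] using hn
    refine ⟨ℱ, fun k => ⟨?_, ?_⟩, ?_⟩
    · by_cases h : N ≤ k
      · simp only [hℱdef, dif_pos h]
        intro g hg
        have := h𝒜sub (k - N) hg
        rwa [Nat.add_sub_cancel' h] at this
      · simp only [hℱdef, dif_neg h]
        exact empty_subset _
    · by_cases h : N ≤ k
      · simp only [hℱdef, dif_pos h]
        exact (hG (k - N)).1.image _
      · simp only [hℱdef, dif_neg h]
        exact finite_empty
    · rw [hUeq]
      refine ⟨⟨?_, h0B⟩, φ, ?_, ?_⟩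
      · rw [mem_closure_zero_iff]
        intro s ε' hε'
        obtain ⟨m₁, hm₁⟩ := hwit s ε' hε'
        obtain ⟨g, hg, hsm⟩ := hm₁ m₁ le_rfl
        exact ⟨g, mem_iUnion.2 ⟨m₁, hg⟩, hsm⟩
      · intro n
        apply Set.Finite.subset ((hG n).1.image (recov n (usedF (histOf G n))))
        rintro g ⟨hgB, hφg⟩
        obtain ⟨m, hm⟩ := mem_iUnion.1 hgB
        have : n = m := by rw [← hφg, hφeq hm]
        rw [this]
        exact hm
      · intro J hJ
        refine ⟨?_, fun h => h0B h.1⟩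
        rw [mem_closure_zero_iff]
        intro s ε' hε'
        obtain ⟨m₁, hm₁⟩ := hwit s ε' hε'
        obtain ⟨n, hnJ, hngt⟩ := hJ.exists_gt m₁
        obtain ⟨g, hg, hsm⟩ := hm₁ n (le_of_lt hngt)
        exact ⟨g, ⟨mem_iUnion.2 ⟨n, hg⟩, by rw [hφeq hg]; exact hnJ⟩, hsm⟩

end KS

namespace KS
open Classical Set

variable {X : Type u} [TopologicalSpace X]

def tsub (y f : Cp X) : Cp X := ⟨f.1 - y.1, f.2.sub y.2⟩

def tadd (y g : Cp X) : Cp X := ⟨g.1 + y.1, g.2.add y.2⟩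

lemma tadd_tsub (y f : Cp X) : tadd y (tsub y f) = f :=
  Subtype.ext (by funext x; simp [tadd, tsub])

lemma tsub_inj (y : Cp X) {f g : Cp X} (h : tsub y f = tsub y g) : f = g := by
  rw [← tadd_tsub y f, ← tadd_tsub y g, h]

lemma tsub_apply (y f : Cp X) (x : X) : (tsub y f).1 x = f.1 x - y.1 x := rfl

lemma zeroCp_apply (x : X) : (zeroCp X).1 x = 0 := rfl

/-- translate a member of `Ω_y` to `Ω_0` -/
lemma omegaPt_translate {y : Cp X} {A : Set (Cp X)} (hA : A ∈ OmegaPt (Cp X) y) :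
    tsub y '' A ∈ OmegaPt (Cp X) (zeroCp X) := by
  constructor
  · rw [mem_closure_zero_iff]
    intro s ε hε
    obtain ⟨f, hfA, hsm⟩ := mem_closure_iff_cpBall.1 hA.1 s ε hε
    exact ⟨tsub y f, ⟨f, hfA, rfl⟩, fun x hx => by
      rw [tsub_apply]; exact hsm x hx⟩
  · rintro ⟨f, hfA, hf0⟩
    apply hA.2
    have : f = y := by
      apply Subtype.ext
      funext x
      have := congrArg (fun g : Cp X => g.1 x) hf0
      simp only [tsub_apply, zeroCp_apply] at this
      linarith
    rwa [← this]

theorem five_of_four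
    (h4 : Sfin (OmegaPt (Cp X) (zeroCp X)) (groupables (OmegaPt (Cp X) (zeroCp X)))) :
    Reznichenko (Cp X) ∧ CountableFanTightness (Cp X) := by
  constructor
  · -- Reznichenko
    intro y A hA hAct
    set A' : Set (Cp X) := tsub y '' A with hA'def
    have hA' : A' ∈ OmegaPt (Cp X) (zeroCp X) := omegaPt_translate hA
    obtain ⟨𝒜, h𝒜, hB, ψ, hψfin, hψgrp⟩ := h4 (fun _ => A') (fun _ => hA')
    set B : Set (Cp X) := ⋃ n, 𝒜 n with hBdef
    have hBA' : B ⊆ A' := iUnion_subset fun n => (h𝒜 n).1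
    -- an enumeration of A'
    have hA'ne : A'.Nonempty := by
      obtain ⟨f, hf, -⟩ := mem_closure_zero_iff.1 hA'.1 ∅ 1 one_pos
      exact ⟨f, hf⟩
    obtain ⟨e, he⟩ := (hAct.image (tsub y)).exists_eq_range hA'ne
    set idx : Cp X → ℕ := fun g => sInf {n | e n = g} with hidx
    have hidx_spec : ∀ g ∈ A', e (idx g) = g := by
      intro g hg
      rw [hA'def, he] at hg
      obtain ⟨n, hn⟩ := hg
      exact Nat.sInf_mem (⟨n, hn⟩ : {n | e n = g}.Nonempty)
    set ψ' : Cp X → ℕ := fun g => if g ∈ B then ψ g else idx g with hψ'def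
    -- groupability of A' via ψ'
    have hgrpA' : Groupable (OmegaPt (Cp X) (zeroCp X)) A' := by
      refine ⟨ψ', fun n => ?_, fun J hJ => ?_⟩
      · have hsub : {g ∈ A' | ψ' g = n} ⊆ {g ∈ B | ψ g = n} ∪ {e n} := by
          rintro g ⟨hgA', hψ'g⟩
          by_cases hgB : g ∈ B
          · left
            refine ⟨hgB, ?_⟩
            rw [hψ'def] at hψ'g
            simpa [if_pos hgB] using hψ'g
          · right
            rw [hψ'def] at hψ'g
            simp only [if_neg hgB] at hψ'g
            rw [mem_singleton_iff, ← hψ'g]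
            exact (hidx_spec g hgA').symm
        exact ((hψfin n).union (finite_singleton _)).subset hsub
      · have hsub : {g ∈ B | ψ g ∈ J} ⊆ {g ∈ A' | ψ' g ∈ J} := by
          rintro g ⟨hgB, hψg⟩
          refine ⟨hBA' hgB, ?_⟩
          rw [hψ'def]
          simpa [if_pos hgB] using hψg
        constructor
        · exact closure_mono hsub (hψgrp J hJ).1
        · intro h
          exact hA'.2 h.1
    -- pull back to A
    obtain ⟨ψA', hfibA', hgrpA'2⟩ := hgrpA'
    refine ⟨fun f => ψA' (tsub y f), fun n => ?_, fun J hJ => ?_⟩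
    · have hsub : {f ∈ A | ψA' (tsub y f) = n} ⊆ tadd y '' {g ∈ A' | ψA' g = n} := by
        rintro f ⟨hfA, hψf⟩
        exact ⟨tsub y f, ⟨⟨f, hfA, rfl⟩, hψf⟩, tadd_tsub y f⟩
      exact ((hfibA' n).image _).subset hsub
    · constructor
      · rw [mem_closure_iff_cpBall]
        intro s ε hε
        obtain ⟨g, ⟨hgA', hψg⟩, hsm⟩ :=
          mem_closure_zero_iff.1 (hgrpA'2 J hJ).1 s ε hε
        obtain ⟨f, hfA, rfl⟩ := hgA'
        refine ⟨f, ⟨hfA, hψg⟩, fun x hx => ?_⟩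
        have := hsm x hx
        rwa [tsub_apply] at this
      · intro h
        exact hA.2 h.1
  · -- countable fan tightness
    intro y A hA
    set A' : ℕ → Set (Cp X) := fun n => tsub y '' A n with hA'def
    have hA' : ∀ n, A' n ∈ OmegaPt (Cp X) (zeroCp X) := fun n => omegaPt_translate (hA n)
    obtain ⟨𝒜, h𝒜, hB, -⟩ := h4 A' hA'
    refine ⟨fun n => tadd y '' 𝒜 n, fun n => ⟨?_, (h𝒜 n).2.image _⟩, ?_, ?_⟩
    · intro f hf
      obtain ⟨g, hg, rfl⟩ := hf
      obtain ⟨f', hf', rfl⟩ := (h𝒜 n).1 hg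
      rwa [tadd_tsub]
    · rw [mem_closure_iff_cpBall]
      intro s ε hε
      obtain ⟨g, hgB, hsm⟩ := mem_closure_zero_iff.1 hB.1 s ε hε
      obtain ⟨n, hn⟩ := mem_iUnion.1 hgB
      obtain ⟨f', hf', rfl⟩ := (h𝒜 n).1 hn
      refine ⟨f', mem_iUnion.2 ⟨n, ⟨tsub y f', hn, tadd_tsub y f'⟩⟩, fun x hx => ?_⟩
      have := hsm x hx
      rwa [tsub_apply] at this
    · intro h
      obtain ⟨n, hn⟩ := mem_iUnion.1 h
      obtain ⟨g, hg, hyg⟩ := hn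
      obtain ⟨f', hf', rfl⟩ := (h𝒜 n).1 hg
      rw [tadd_tsub] at hyg
      exact (hA n).2 (hyg ▸ hf')

theorem four_of_five (h5 : Reznichenko (Cp X) ∧ CountableFanTightness (Cp X)) :
    Sfin (OmegaPt (Cp X) (zeroCp X)) (groupables (OmegaPt (Cp X) (zeroCp X))) := by
  intro A hA
  obtain ⟨ℱ, hℱ, hB⟩ := h5.2 (zeroCp X) A hA
  have hct : (⋃ n, ℱ n).Countable := countable_iUnion fun n => (hℱ n).2.countable
  exact ⟨ℱ, hℱ, hB, h5.1 (zeroCp X) _ hB hct⟩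

end KS

theorem statement12 {X : Type u} [TopologicalSpace X] [T2Space X] [CompletelyRegularSpace X]
    [Infinite X] :
    List.TFAE
      [HurewiczProp (PFin X),
       Sfin (OmegaCovers X) (groupables (OmegaCovers X)),
       ∀ n : ℕ, 1 ≤ n → HurewiczProp (Fin n → X),
       Sfin (OmegaPt (Cp X) (zeroCp X)) (groupables (OmegaPt (Cp X) (zeroCp X))),
       Reznichenko (Cp X) ∧ CountableFanTightness (Cp X)] := by
  have hne : Nonempty X := inferInstance
  tfae_have 1 → 2 := KS.two_of_one
  tfae_have 2 → 3 := fun h2 => KS.three_of_star (KS.star_of_two h2)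
  tfae_have 3 → 1 := KS.one_of_three
  tfae_have 1 → 4 := fun h1 => KS.four_of_star (KS.star_of_two (KS.two_of_one h1))
  tfae_have 4 → 3 := fun h4 => KS.three_of_star (KS.star_of_four h4)
  tfae_have 4 → 5 := KS.five_of_four
  tfae_have 5 → 4 := KS.four_of_five
  tfae_finish
end
end

section
/- Let X be an infinite Tychonoff space. The following are equivalent: (i) 𝒫_fin(X) is Gerlits-Nagy; (ii) X satisfies S_1(Ω_X, Ω_X^gp); (iii) every finite power Xⁿ (n ≥ 1, with the product topology) is Gerlits-Nagy; (iv) C_p(X) satisfies S_1(Ω_{C_p(X),𝟎}, Ω_{C_p(X),𝟎}^gp); (v) C_p(X) is Reznichenko and has countable strong fan-tightness. -/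
open Set TopologicalSpace

universe u

namespace S13
open Classical Set

universe v

variable {α : Type u}

/-- From a groupable family: every "ℭ-generic" property has witnesses in all late groups. -/
lemma groupable_ev {ℭ : Set (Set α)} {C : Set α} {φ : α → ℕ}
    (hJ : ∀ J : Set ℕ, J.Infinite → {x ∈ C | φ x ∈ J} ∈ ℭ)
    (P : α → Prop) (hP : ∀ D ∈ ℭ, ∃ V ∈ D, P V) :
    ∃ N, ∀ l ≥ N, ∃ V ∈ C, φ V = l ∧ P V := by
  by_contra h
  push_neg at h
  set J : Set ℕ := {l | ∀ V ∈ C, φ V = l → ¬ P V} with hJdef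
  have hJinf : J.Infinite := by
    apply Set.infinite_of_not_bddAbove
    rintro ⟨b, hb⟩
    obtain ⟨l, hlb, hl⟩ := h (b + 1)
    have : l ∈ J := fun V hV hφ => hl V hV hφ
    exact absurd (hb this) (by omega)
  obtain ⟨V, ⟨hVC, hVJ⟩, hPV⟩ := hP _ (hJ J hJinf)
  exact hVJ V hVC rfl hPV

/-- Availability: all members of late groups occur at late indices. -/
lemma avail_ev {φ : α → ℕ} {W : ℕ → α}
    (hfin : ∀ l, {x ∈ Set.range W | φ x = l}.Finite) (j : ℕ) :
    ∃ N, ∀ l ≥ N, ∀ x ∈ Set.range W, φ x = l → ∃ n ≥ j, W n = x := by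
  set Bad : Set ℕ := {l | ∃ x ∈ Set.range W, φ x = l ∧ ∀ n ≥ j, W n ≠ x} with hBad
  have hsub : Bad ⊆ (fun x => φ x) '' (W '' Set.Iio j) := by
    rintro l ⟨x, hxr, hφ, hno⟩
    obtain ⟨n, hn⟩ := hxr
    have hnj : n < j := by
      by_contra hc
      exact hno n (by omega) hn
    exact ⟨x, ⟨n, hnj, hn⟩, hφ⟩
  have hfinB : Bad.Finite := ((Set.finite_Iio j).image W |>.image _).subset hsub
  obtain ⟨b, hb⟩ := hfinB.bddAbove
  refine ⟨b + 1, fun l hl x hx hφ => ?_⟩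
  by_contra hc
  push_neg at hc
  have : l ∈ Bad := ⟨x, hx, hφ, fun n hn => hc n hn⟩
  exact absurd (hb this) (by omega)

/-- Disjoint finite blocks with eventually-per-block witnesses give groupability. -/
lemma blocks_groupable {ℭ : Set (Set α)} {C : Set α} {κ : Type v} {P : κ → α → Prop}
    (e : ℕ → α) (hC : C = Set.range e)
    (hsuff : ∀ S : Set α, S ⊆ C → (∀ k : κ, ∃ b ∈ S, P k b) → S ∈ ℭ)
    (ℬ : ℕ → Set α) (hfin : ∀ n, (ℬ n).Finite) (hsub : ∀ n, ℬ n ⊆ C)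
    (hidx : ∀ n, ∀ b ∈ ℬ n, ∀ i ≤ n, e i ≠ b)
    (hev : ∀ k : κ, ∃ N, ∀ n ≥ N, ∃ b ∈ ℬ n, P k b) :
    Groupable ℭ C := by
  classical
  -- index of an element of C
  set idx : α → ℕ := fun b => if h : ∃ i, e i = b then Nat.find h else 0 with hidxdef
  have hidx_spec : ∀ b ∈ C, e (idx b) = b := by
    intro b hb
    rw [hC] at hb
    obtain ⟨i, hi⟩ := hb
    have h : ∃ i, e i = b := ⟨i, hi⟩
    simp only [hidxdef, dif_pos h]
    exact Nat.find_spec h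
  have hidx_gt : ∀ n, ∀ b ∈ ℬ n, n < idx b := by
    intro n b hb
    by_contra hc
    exact hidx n b hb (idx b) (by omega) (hidx_spec b (hsub n hb))
  -- block bound
  set M : ℕ → ℕ := fun n => (hfin n).toFinset.sup idx with hMdef
  have hM : ∀ n, ∀ b ∈ ℬ n, idx b ≤ M n := by
    intro n b hb
    exact Finset.le_sup ((hfin n).mem_toFinset.mpr hb)
  -- block positions
  set ν : ℕ → ℕ := fun j => Nat.rec 0 (fun _ nj => max (nj + 1) (M nj)) j with hνdef
  have hν_succ : ∀ j, ν (j + 1) = max (ν j + 1) (M (ν j)) := fun j => rfl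
  have hν_mono : StrictMono ν := by
    apply strictMono_nat_of_lt_succ
    intro j
    rw [hν_succ]
    omega
  have hrange : ∀ j, ∀ b ∈ ℬ (ν j), ν j < idx b ∧ idx b ≤ ν (j + 1) := by
    intro j b hb
    refine ⟨hidx_gt _ b hb, ?_⟩
    rw [hν_succ]
    exact le_trans (hM _ b hb) (le_max_right _ _)
  have hdisj : ∀ j j', j < j' → ∀ b ∈ ℬ (ν j), b ∉ ℬ (ν j') := by
    intro j j' hjj b hb hb'
    have h1 := (hrange j b hb).2
    have h2 := (hrange j' b hb').1
    have h3 : ν (j + 1) ≤ ν j' := hν_mono.monotone (show j + 1 ≤ j' by omega)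
    omega
  set φ : α → ℕ := fun a => if h : ∃ j, a ∈ ℬ (ν j) then Nat.find h else idx a with hφdef
  have hφ_block : ∀ j, ∀ a ∈ ℬ (ν j), φ a = j := by
    intro j a ha
    have h : ∃ j, a ∈ ℬ (ν j) := ⟨j, ha⟩
    simp only [hφdef, dif_pos h]
    have hspec := Nat.find_spec h
    have hle : Nat.find h ≤ j := Nat.find_le ha
    by_contra hne
    exact hdisj _ j (by omega) a hspec ha
  refine ⟨φ, ?_, ?_⟩
  · intro l
    apply Set.Finite.subset ((hfin (ν l)).union (Set.finite_singleton (e l)))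
    rintro x ⟨hxC, hφx⟩
    by_cases h : ∃ j, x ∈ ℬ (ν j)
    · left
      have hfind : φ x = Nat.find h := by simp only [hφdef, dif_pos h]
      have := Nat.find_spec h
      rwa [hfind.symm.trans hφx] at this
    · right
      have : φ x = idx x := by simp only [hφdef, dif_neg h]
      have hx : e l = x := by rw [← hφx, this]; exact hidx_spec x hxC
      simp [hx]
  · intro J hJ
    apply hsuff _ (Set.sep_subset _ _)
    intro k
    obtain ⟨N, hN⟩ := hev k
    obtain ⟨j, hjJ, hjN⟩ := hJ.exists_gt N
    have hνj : ν j ≥ N := le_trans (le_of_lt hjN) (hν_mono.le_apply)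
    obtain ⟨b, hb, hPb⟩ := hN (ν j) hνj
    exact ⟨b, ⟨hsub _ hb, by rw [hφ_block j b hb]; exact hjJ⟩, hPb⟩


section Covers
variable {X : Type u} [TopologicalSpace X]

lemma omega_of_witness {𝒰 S : Set (Set X)}
    (h𝒰 : ∀ U ∈ 𝒰, IsOpen U ∧ U.Nonempty ∧ U ≠ Set.univ) (hS : S ⊆ 𝒰)
    (hw : ∀ F : Set X, F.Finite → F.Nonempty → ∃ U ∈ S, F ⊆ U) :
    S ∈ OmegaCovers X := by
  refine ⟨⟨fun U hU => h𝒰 U (hS hU), ?_⟩, hw⟩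
  apply Set.eq_univ_of_forall
  intro x
  obtain ⟨U, hU, hx⟩ := hw {x} (Set.finite_singleton x) ⟨x, rfl⟩
  exact ⟨U, hU, hx rfl⟩

lemma omega_diff_finite {𝒰 𝒢 : Set (Set X)} (h𝒰 : 𝒰 ∈ OmegaCovers X) (h𝒢 : 𝒢.Finite) :
    𝒰 \ 𝒢 ∈ OmegaCovers X := by
  classical
  apply omega_of_witness (fun U hU => h𝒰.1.1 U hU) Set.diff_subset
  intro F hF hFne
  set pick : Set X → X := fun G => if h : Gᶜ.Nonempty then h.choose else hFne.choose with hpick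
  have hpick_spec : ∀ G : Set X, G ≠ Set.univ → pick G ∉ G := by
    intro G hG
    have h : Gᶜ.Nonempty := Set.nonempty_compl.mpr hG
    simp only [hpick, dif_pos h]
    exact h.choose_spec
  obtain ⟨U, hU, hFU⟩ := h𝒰.2 (F ∪ pick '' {G ∈ 𝒢 | G ≠ Set.univ})
    (hF.union ((h𝒢.subset (Set.sep_subset _ _)).image _))
    (hFne.mono Set.subset_union_left)
  refine ⟨U, ⟨hU, ?_⟩, fun x hx => hFU (Set.subset_union_left hx)⟩
  intro hUG
  have hUne : U ≠ Set.univ := (h𝒰.1.1 U hU).2.2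
  exact hpick_spec U hUne (hFU (Set.subset_union_right ⟨U, ⟨hUG, hUne⟩, rfl⟩))

lemma omega_infinite [Nonempty X] {𝒰 : Set (Set X)} (h𝒰 : 𝒰 ∈ OmegaCovers X) : 𝒰.Infinite := by
  by_contra h
  rw [Set.not_infinite] at h
  obtain ⟨U, hU, _⟩ := (omega_diff_finite h𝒰 h).2 {Classical.arbitrary X}
    (Set.finite_singleton _) ⟨_, rfl⟩
  exact hU.2 hU.1

/-- the `m`-th power of a set, as a subset of `Fin m → X` -/
def powSet (m : ℕ) (U : Set X) : Set (Fin m → X) := {y | ∀ i, y i ∈ U}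

lemma powSet_open {m : ℕ} {U : Set X} (hU : IsOpen U) : IsOpen (powSet m U) := by
  have : powSet m U = ⋂ i, (fun y : Fin m → X => y i) ⁻¹' U := by
    ext y; simp [powSet]
  rw [this]
  exact isOpen_iInter_of_finite fun i =>
    (continuous_apply i : Continuous fun y : Fin m → X => y i).isOpen_preimage U hU

lemma powSet_nonempty {m : ℕ} {U : Set X} (hU : U.Nonempty) : (powSet m U).Nonempty :=
  ⟨fun _ => hU.choose, fun _ => hU.choose_spec⟩

lemma powSet_proper {m : ℕ} (hm : 1 ≤ m) {U : Set X} (hU : U ≠ Set.univ) :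
    powSet m U ≠ Set.univ := by
  intro h
  obtain ⟨x, hx⟩ := Set.nonempty_compl.mpr hU
  have : (fun _ : Fin m => x) ∈ powSet m U := h ▸ Set.mem_univ _
  exact hx (this ⟨0, hm⟩)

lemma powSet_mono {m : ℕ} {U V : Set X} (h : U ⊆ V) : powSet m U ⊆ powSet m V :=
  fun _ hy i => h (hy i)

lemma finite_powPts {m : ℕ} {F : Set X} (hF : F.Finite) :
    {y : Fin m → X | ∀ i, y i ∈ F}.Finite := by
  have : {y : Fin m → X | ∀ i, y i ∈ F} = Set.pi Set.univ (fun _ => F) := by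
    ext y; simp [Set.mem_pi]
  rw [this]
  exact Set.Finite.pi fun _ => hF

/-- The tube lemma for finite sets in finite powers. -/
lemma tube_lemma {m : ℕ} {F : Set X} (hF : F.Finite) {O : Set (Fin m → X)}
    (h : {y : Fin m → X | ∀ i, y i ∈ F} ⊆ O) (hOopen : IsOpen O) :
    ∃ U : Set X, IsOpen U ∧ F ⊆ U ∧ powSet m U ⊆ O := by
  classical
  set T := {y : Fin m → X | ∀ i, y i ∈ F} with hT
  have hTfin : T.Finite := finite_powPts hF
  have hbox : ∀ p ∈ T, ∃ B : Fin m → Set X,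
      (∀ i, IsOpen (B i) ∧ p i ∈ B i) ∧ {y : Fin m → X | ∀ i, y i ∈ B i} ⊆ O := by
    intro p hp
    obtain ⟨I, u, hu, hsub⟩ := isOpen_pi_iff.mp hOopen p (h hp)
    refine ⟨fun i => if i ∈ I then u i else Set.univ, ?_, ?_⟩
    · intro i
      by_cases hi : i ∈ I
      · simp only [if_pos hi]; exact (hu i hi)
      · simp only [if_neg hi]; exact ⟨isOpen_univ, Set.mem_univ _⟩
    · intro y hy
      apply hsub
      intro i hi
      have hi' : i ∈ I := hi
      have := hy i
      simpa [hi'] using this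
  choose! B hB1 hB2 using hbox
  set Ux : X → Set X := fun x =>
    ⋂₀ ((fun q : (Fin m → X) × Fin m => B q.1 q.2) '' {q | q.1 ∈ T ∧ q.1 q.2 = x}) with hUx
  have hUxopen : ∀ x, IsOpen (Ux x) := by
    intro x
    apply Set.Finite.isOpen_sInter
    · apply Set.Finite.image
      apply Set.Finite.subset (hTfin.prod (Set.finite_univ (α := Fin m)))
      rintro ⟨p, i⟩ ⟨hp, _⟩
      exact ⟨hp, Set.mem_univ _⟩
    · rintro t ⟨⟨p, i⟩, ⟨hpT, _⟩, rfl⟩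
      exact (hB1 p hpT i).1
  have hUxmem : ∀ x ∈ F, x ∈ Ux x := by
    rintro x hx t ⟨⟨p, i⟩, ⟨hpT, hpi⟩, rfl⟩
    rw [← hpi]
    exact (hB1 p hpT i).2
  refine ⟨⋃ x ∈ F, Ux x, isOpen_biUnion fun x _ => hUxopen x, fun x hx => Set.mem_biUnion hx (hUxmem x hx), ?_⟩
  intro q hq
  have hpick : ∀ i : Fin m, ∃ x ∈ F, q i ∈ Ux x := by
    intro i
    obtain ⟨_, ⟨x, rfl⟩, _, ⟨hxF, rfl⟩, hmem⟩ := hq i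
    exact ⟨x, hxF, hmem⟩
  choose xf hxf1 hxf2 using hpick
  have hxfT : xf ∈ T := fun i => hxf1 i
  apply hB2 xf hxfT
  intro i
  have : Ux (xf i) ⊆ B xf i := by
    apply Set.sInter_subset_of_mem
    exact ⟨(xf, i), ⟨hxfT, rfl⟩, rfl⟩
  exact this (hxf2 i)
end Covers
section CpBasics
variable {X : Type u} [TopologicalSpace X]

noncomputable def eps (n : ℕ) : ℝ := 1 / ((n : ℝ) + 1)

lemma eps_pos (n : ℕ) : 0 < eps n := by
  unfold eps; positivity

lemma eps_antitone {m n : ℕ} (h : m ≤ n) : eps n ≤ eps m := by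
  unfold eps
  apply one_div_le_one_div_of_le
  · positivity
  · have : (m : ℝ) ≤ n := Nat.cast_le.mpr h
    linarith

lemma exists_eps_lt {ε : ℝ} (hε : 0 < ε) : ∃ n : ℕ, eps n < ε := by
  obtain ⟨n, hn⟩ := exists_nat_one_div_lt hε
  exact ⟨n, by simpa [eps] using hn⟩

lemma zeroCp_apply (x : X) : (zeroCp X).1 x = 0 := rfl

/-- Characterization of membership of `0` in the closure of a set in `C_p(X)`. -/
lemma zero_mem_closure_iff {A : Set (Cp X)} :
    zeroCp X ∈ closure A ↔
      ∀ F : Set X, F.Finite → ∀ ε : ℝ, 0 < ε → ∃ g ∈ A, ∀ x ∈ F, |g.1 x| < ε := by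
  constructor
  · intro h F hF ε hε
    set N : Set (Cp X) := {g : Cp X | ∀ x ∈ F, |g.1 x| < ε} with hN
    have hNopen : IsOpen N := by
      have : N = Subtype.val ⁻¹' (⋂ x ∈ F, (fun f : X → ℝ => f x) ⁻¹' (Metric.ball (0 : ℝ) ε)) := by
        ext g
        simp [hN, Real.dist_eq]
      rw [this]
      apply IsOpen.preimage continuous_subtype_val
      exact hF.isOpen_biInter fun x _ => (continuous_apply x).isOpen_preimage _ Metric.isOpen_ball
    have h0N : zeroCp X ∈ N := by
      intro x _
      simp [zeroCp_apply, hε]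
    obtain ⟨g, hgN, hgA⟩ := (mem_closure_iff.mp h) N hNopen h0N
    exact ⟨g, hgA, hgN⟩
  · intro hw
    rw [mem_closure_iff]
    intro O hO h0O
    obtain ⟨T, hT, rfl⟩ := isOpen_induced_iff.mp hO
    have h0T : (zeroCp X).1 ∈ T := h0O
    obtain ⟨I, u, hu, hsub⟩ := isOpen_pi_iff.mp hT _ h0T
    rcases I.eq_empty_or_nonempty with hI | hI
    · obtain ⟨g, hg, -⟩ := hw ∅ Set.finite_empty 1 one_pos
      refine ⟨g, ?_, hg⟩
      apply hsub
      simp [hI]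
    · have hδ : ∀ a ∈ I, ∃ δ : ℝ, 0 < δ ∧ Metric.ball (0 : ℝ) δ ⊆ u a := by
        intro a ha
        obtain ⟨δ, hδpos, hδsub⟩ := Metric.isOpen_iff.mp (hu a ha).1 0 (by
          have := (hu a ha).2
          simpa [zeroCp_apply] using this)
        exact ⟨δ, hδpos, hδsub⟩
      choose! δ hδpos hδsub using hδ
      set ε := I.inf' hI δ with hεdef
      have hεpos : 0 < ε := by
        rw [hεdef, Finset.lt_inf'_iff]
        exact fun a ha => hδpos a ha
      obtain ⟨g, hgA, hg⟩ := hw ↑I I.finite_toSet ε hεpos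
      refine ⟨g, ?_, hgA⟩
      apply hsub
      intro a ha
      have ha' : a ∈ I := ha
      apply hδsub a ha'
      rw [Metric.mem_ball, Real.dist_eq, sub_zero]
      exact lt_of_lt_of_le (hg a ha') (Finset.inf'_le δ ha')
  
/-- Removal of finitely many points from a member of `Ω_y` (in a T1 space). -/
lemma omegaPt_diff_finite {Y : Type u} [TopologicalSpace Y] [T1Space Y] {y : Y} {A P : Set Y}
    (hA : A ∈ OmegaPt Y y) (hP : P.Finite) (hyP : y ∉ P) : A \ P ∈ OmegaPt Y y := by
  refine ⟨?_, fun h => hA.2 h.1⟩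
  have hsplit : A ⊆ (A \ P) ∪ P := by
    intro a ha
    by_cases h : a ∈ P
    · exact Or.inr h
    · exact Or.inl ⟨ha, h⟩
  have h1 : closure A ⊆ closure (A \ P) ∪ P :=
    calc closure A ⊆ closure ((A \ P) ∪ P) := closure_mono hsplit
      _ = closure (A \ P) ∪ closure P := closure_union
      _ = closure (A \ P) ∪ P := by rw [hP.isClosed.closure_eq]
  rcases h1 hA.1 with h | h
  · exact h
  · exact absurd h hyP

lemma omegaPt_infinite {Y : Type u} [TopologicalSpace Y] [T1Space Y] {y : Y} {A : Set Y}
    (hA : A ∈ OmegaPt Y y) : A.Infinite := by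
  by_contra h
  rw [Set.not_infinite] at h
  exact hA.2 (h.isClosed.closure_eq ▸ hA.1)

/-- Urysohn-type functions for finite sets in completely regular spaces. -/
lemma urysohn_finite [T2Space X] [CompletelyRegularSpace X] {F U : Set X} (hF : F.Finite)
    (hU : IsOpen U) (hFU : F ⊆ U) :
    ∃ f : X → ℝ, Continuous f ∧ (∀ x ∈ F, f x = 0) ∧ (∀ x ∉ U, f x = 1) := by
  classical
  have key : ∀ x ∈ F, ∃ f : X → ℝ, Continuous f ∧ f x = 0 ∧ ∀ z ∉ U, f z = 1 := by
    intro x hx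
    obtain ⟨f, hf, hfx, hfK⟩ := CompletelyRegularSpace.completely_regular x Uᶜ
      hU.isClosed_compl (by simp [hFU hx])
    refine ⟨fun z => (f z : ℝ), continuous_subtype_val.comp hf, ?_, ?_⟩
    · show ((f x : ℝ)) = 0
      rw [hfx]
      rfl
    · intro z hz
      show ((f z : ℝ)) = 1
      have : f z = 1 := hfK (show z ∈ Uᶜ by simpa using hz)
      rw [this]
      rfl
  choose! g hg1 hg2 hg3 using key
  refine ⟨fun z => ∏ x ∈ hF.toFinset, g x z, ?_, ?_, ?_⟩
  · apply continuous_finset_prod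
    intro x hx
    exact hg1 x (hF.mem_toFinset.mp hx)
  · intro x hx
    apply Finset.prod_eq_zero (hF.mem_toFinset.mpr hx)
    exact hg2 x hx
  · intro z hz
    apply Finset.prod_eq_one
    intro x hx
    exact hg3 x (hF.mem_toFinset.mp hx) z hz

/-- Translation homeomorphism of `C_p(X)`. -/
noncomputable def transCp (y : Cp X) : Cp X ≃ₜ Cp X where
  toFun g := ⟨g.1 + y.1, g.2.add y.2⟩
  invFun g := ⟨g.1 - y.1, g.2.sub y.2⟩
  left_inv g := by
    apply Subtype.ext
    funext x
    simp
  right_inv g := by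
    apply Subtype.ext
    funext x
    simp
  continuous_toFun := by
    apply Continuous.subtype_mk
    apply continuous_pi
    intro x
    exact ((continuous_apply x).comp continuous_subtype_val).add continuous_const
  continuous_invFun := by
    apply Continuous.subtype_mk
    apply continuous_pi
    intro x
    exact ((continuous_apply x).comp continuous_subtype_val).sub continuous_const

lemma transCp_zero (y : Cp X) : transCp y (zeroCp X) = y := by
  apply Subtype.ext
  funext x
  simp [transCp, zeroCp]

lemma omegaPt_image {Y Z : Type u} [TopologicalSpace Y] [TopologicalSpace Z] (h : Y ≃ₜ Z)
    {y : Y} {A : Set Y} (hA : A ∈ OmegaPt Y y) : h '' A ∈ OmegaPt Z (h y) := by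
  constructor
  · rw [← Homeomorph.image_closure]
    exact Set.mem_image_of_mem _ hA.1
  · rintro ⟨a, haA, hay⟩
    exact hA.2 (h.injective hay ▸ haA)

lemma groupable_image {Y Z : Type u} [TopologicalSpace Y] [TopologicalSpace Z] (h : Y ≃ₜ Z)
    {y : Y} {A : Set Y} (hA : Groupable (OmegaPt Y y) A) :
    Groupable (OmegaPt Z (h y)) (h '' A) := by
  obtain ⟨φ, hfin, hJ⟩ := hA
  have hset : ∀ p : ℕ → Prop, {x ∈ h '' A | p (φ (h.symm x))} = h '' {x ∈ A | p (φ x)} := by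
    intro p
    ext z
    constructor
    · rintro ⟨⟨a, haA, rfl⟩, hp⟩
      exact ⟨a, ⟨haA, by rwa [h.symm_apply_apply] at hp⟩, rfl⟩
    · rintro ⟨a, ⟨haA, hp⟩, rfl⟩
      exact ⟨⟨a, haA, rfl⟩, by rwa [h.symm_apply_apply]⟩
  refine ⟨fun z => φ (h.symm z), ?_, ?_⟩
  · intro n
    rw [hset (fun k => k = n)]
    exact (hfin n).image _
  · intro J hJ'
    rw [hset (fun k => k ∈ J)]
    exact omegaPt_image h (hJ J hJ')
end CpBasics
section Hub
variable {X : Type u} [TopologicalSpace X]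

/-- hub property 1: `S₁(Ω,Ω)` -/
def Rstar (X : Type u) [TopologicalSpace X] : Prop := Sone (OmegaCovers X) (OmegaCovers X)

/-- hub property 2: groupable-Hurewicz selection for ω-covers, with availability -/
def Hplus (X : Type u) [TopologicalSpace X] : Prop :=
  ∀ 𝒰 : ℕ → Set (Set X), (∀ n, 𝒰 n ∈ OmegaCovers X) →
    ∃ ℋ : ℕ → Set (Set X), (∀ j, (ℋ j).Finite ∧ ∀ V ∈ ℋ j, ∃ n ≥ j, V ∈ 𝒰 n) ∧
      ∀ F : Set X, F.Finite → F.Nonempty → ∃ N, ∀ j ≥ N, ∃ V ∈ ℋ j, F ⊆ V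

lemma E2R (h2 : Sone (OmegaCovers X) (groupables (OmegaCovers X))) : Rstar X := by
  intro 𝒰 h𝒰
  obtain ⟨f, hf, hr⟩ := h2 𝒰 h𝒰
  exact ⟨f, hf, hr.1⟩

lemma E2H (h2 : Sone (OmegaCovers X) (groupables (OmegaCovers X))) : Hplus X := by
  intro 𝒰 h𝒰
  obtain ⟨f, hf, hrange⟩ := h2 𝒰 h𝒰
  obtain ⟨hΩ, φ, hfin, hJ⟩ := hrange
  choose Nav hNav using (fun j => avail_ev (W := f) (fun l => hfin l) j)
  set l : ℕ → ℕ := fun j => max j (Nav j) with hl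
  refine ⟨fun j => {x ∈ Set.range f | φ x = l j}, ?_, ?_⟩
  · intro j
    refine ⟨hfin (l j), ?_⟩
    rintro V ⟨hVr, hVφ⟩
    obtain ⟨n, hn, hfn⟩ := hNav j (l j) (le_max_right _ _) V hVr hVφ
    exact ⟨n, hn, hfn ▸ hf n⟩
  · intro F hF hFne
    obtain ⟨N, hN⟩ := groupable_ev hJ (fun V => F ⊆ V) (fun D hD => hD.2 F hF hFne)
    refine ⟨N, fun j hj => ?_⟩
    obtain ⟨V, hVC, hφ, hFV⟩ := hN (l j) (le_trans hj (le_max_left _ _))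
    exact ⟨V, ⟨hVC, hφ⟩, hFV⟩

lemma star_groupable [Nonempty X] (hH : Hplus X) {C : Set (Set X)} (hC : C ∈ OmegaCovers X)
    (hcnt : C.Countable) : Groupable (OmegaCovers X) C := by
  have hCne : C.Nonempty := by
    obtain ⟨U, hU, -⟩ := hC.2 {Classical.arbitrary X} (Set.finite_singleton _) ⟨_, rfl⟩
    exact ⟨U, hU⟩
  obtain ⟨e, he⟩ := Set.Countable.exists_eq_range hcnt hCne
  obtain ⟨ℋ, hℋ1, hℋ2⟩ := hH (fun n => C \ e '' Set.Iic n)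
    (fun n => omega_diff_finite hC ((Set.finite_Iic n).image e))
  have hsubC : ∀ j, ℋ j ⊆ C := by
    intro j V hV
    obtain ⟨n, _, hVn⟩ := (hℋ1 j).2 V hV
    exact hVn.1
  apply blocks_groupable (κ := {F : Set X // F.Finite ∧ F.Nonempty})
    (P := fun F V => F.1 ⊆ V) e he ?_ ℋ (fun j => (hℋ1 j).1) hsubC ?_ ?_
  · intro S hS hw
    apply omega_of_witness (fun U hU => hC.1.1 U hU) hS
    intro F hF hFne
    exact hw ⟨F, hF, hFne⟩
  · intro j V hV i hij hei
    obtain ⟨n, hnj, hVn⟩ := (hℋ1 j).2 V hV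
    exact hVn.2 ⟨i, le_trans hij hnj, hei⟩
  · rintro ⟨F, hF, hFne⟩
    exact hℋ2 F hF hFne

lemma RH2 [Nonempty X] (hR : Rstar X) (hH : Hplus X) :
    Sone (OmegaCovers X) (groupables (OmegaCovers X)) := by
  intro 𝒰 h𝒰
  obtain ⟨f, hf, hr⟩ := hR 𝒰 h𝒰
  exact ⟨f, hf, hr, star_groupable hH hr (Set.countable_range f)⟩

end Hub

section Lift
variable {X : Type u} [TopologicalSpace X] [T2Space X] [CompletelyRegularSpace X] [Nonempty X]

/-- The Urysohn lift of an ω-cover into `C_p(X)`. -/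
def liftCover (𝒰 : Set (Set X)) : Set (Cp X) :=
  {g : Cp X | ∃ U ∈ 𝒰, ∀ x ∉ U, g.1 x = 1}

lemma liftCover_omegaPt {𝒰 : Set (Set X)} (h𝒰 : 𝒰 ∈ OmegaCovers X) :
    liftCover 𝒰 ∈ OmegaPt (Cp X) (zeroCp X) := by
  constructor
  · rw [zero_mem_closure_iff]
    intro F hF ε hε
    set F' := insert (Classical.arbitrary X) F with hF'
    obtain ⟨U, hU, hFU⟩ := h𝒰.2 F' (hF.insert _) ⟨_, Set.mem_insert _ _⟩
    obtain ⟨f, hfc, hf0, hf1⟩ := urysohn_finite (hF.insert _) (h𝒰.1.1 U hU).1 hFU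
    refine ⟨⟨f, hfc⟩, ⟨U, hU, hf1⟩, fun x hx => ?_⟩
    show |f x| < ε
    rw [hf0 x (Set.mem_insert_of_mem _ hx)]
    simpa using hε
  · rintro ⟨U, hU, h1⟩
    obtain ⟨x, hx⟩ := Set.nonempty_compl.mpr (h𝒰.1.1 U hU).2.2
    have := h1 x hx
    simp [zeroCp_apply] at this

lemma decode_omega {𝒰 : ℕ → Set (Set X)} (h𝒰 : ∀ n, 𝒰 n ∈ OmegaCovers X)
    {f : ℕ → Cp X} {u : ℕ → Set X} (hu : ∀ n, u n ∈ 𝒰 n)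
    (h1 : ∀ n, ∀ x ∉ u n, (f n).1 x = 1)
    (hcl : zeroCp X ∈ closure (Set.range f)) : Set.range u ∈ OmegaCovers X := by
  apply omega_of_witness (𝒰 := Set.range u) ?_ subset_rfl
  · intro F hF hFne
    obtain ⟨g, ⟨n, rfl⟩, hsm⟩ := (zero_mem_closure_iff.mp hcl) F hF 1 one_pos
    refine ⟨u n, ⟨n, rfl⟩, fun x hx => ?_⟩
    by_contra hxu
    have := h1 n x hxu
    have h2 := hsm x hx
    rw [this] at h2
    simp at h2
  · rintro U ⟨n, rfl⟩
    exact (h𝒰 n).1.1 (u n) (hu n)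

lemma E4R (h4 : Sone (OmegaPt (Cp X) (zeroCp X)) (groupables (OmegaPt (Cp X) (zeroCp X)))) :
    Rstar X := by
  intro 𝒰 h𝒰
  obtain ⟨f, hf, hr⟩ := h4 (fun n => liftCover (𝒰 n)) (fun n => liftCover_omegaPt (h𝒰 n))
  choose u hu h1 using (fun n => hf n)
  exact ⟨u, hu, decode_omega h𝒰 hu h1 hr.1.1⟩

lemma E4H (h4 : Sone (OmegaPt (Cp X) (zeroCp X)) (groupables (OmegaPt (Cp X) (zeroCp X)))) :
    Hplus X := by
  classical
  intro 𝒰 h𝒰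
  obtain ⟨f, hf, hΩ0, φ, hfin, hJ⟩ := h4 (fun n => liftCover (𝒰 n))
    (fun n => liftCover_omegaPt (h𝒰 n))
  choose u hu h1 using (fun n => hf n)
  choose Nav hNav using (fun j => avail_ev (W := f) (fun l => hfin l) j)
  set l : ℕ → ℕ := fun j => max j (Nav j) with hl
  set nn : ℕ → Cp X → ℕ := fun j g => if h : ∃ n, n ≥ j ∧ f n = g then h.choose else 0 with hnn
  have hnn_spec : ∀ j g, (∃ n, n ≥ j ∧ f n = g) → nn j g ≥ j ∧ f (nn j g) = g := by
    intro j g h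
    simp only [hnn, dif_pos h]
    exact h.choose_spec
  refine ⟨fun j => (fun g => u (nn j g)) '' {g ∈ Set.range f | φ g = l j}, ?_, ?_⟩
  · intro j
    refine ⟨(hfin (l j)).image _, ?_⟩
    rintro V ⟨g, ⟨hgr, hgφ⟩, rfl⟩
    obtain ⟨n, hn, hfn⟩ := hNav j (l j) (le_max_right _ _) g hgr hgφ
    have hsp := hnn_spec j g ⟨n, hn, hfn⟩
    exact ⟨nn j g, hsp.1, hu (nn j g)⟩
  · intro F hF hFne
    obtain ⟨N, hN⟩ := groupable_ev hJ (fun g => ∀ x ∈ F, |g.1 x| < 1)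
      (fun D hD => by
        obtain ⟨g, hgD, hsm⟩ := (zero_mem_closure_iff.mp hD.1) F hF 1 one_pos
        exact ⟨g, hgD, hsm⟩)
    refine ⟨N, fun j hj => ?_⟩
    obtain ⟨g, hgC, hgφ, hsm⟩ := hN (l j) (le_trans hj (le_max_left _ _))
    obtain ⟨n, hn, hfn⟩ := hNav j (l j) (le_max_right _ _) g hgC hgφ
    have hsp := hnn_spec j g ⟨n, hn, hfn⟩
    refine ⟨u (nn j g), ⟨g, ⟨hgC, hgφ⟩, rfl⟩, fun x hx => ?_⟩
    by_contra hxu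
    have := h1 (nn j g) x hxu
    rw [hsp.2] at this
    have h2 := hsm x hx
    rw [this] at h2
    simp at h2
end Lift
section PFinPow
variable {X : Type u} [TopologicalSpace X]

/-- basic Vietoris open set in `PFin X` -/
def down (U : Set X) : Set (PFin X) := {K : PFin X | K.1 ⊆ U}

lemma down_open {U : Set X} (hU : IsOpen U) : IsOpen (down (X := X) U) :=
  TopologicalSpace.isOpen_generateFrom_of_mem ⟨U, hU, Or.inl rfl⟩

lemma downCover_OX {𝒰 : Set (Set X)} (h𝒰 : 𝒰 ∈ OmegaCovers X) :
    down '' 𝒰 ∈ OX (PFin X) := by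
  constructor
  · rintro S ⟨U, hU, rfl⟩
    obtain ⟨hop, ⟨x, hx⟩, hne⟩ := h𝒰.1.1 U hU
    refine ⟨down_open hop, ⟨⟨{x}, Set.finite_singleton x, ⟨x, rfl⟩⟩, by
      exact Set.singleton_subset_iff.mpr hx⟩, ?_⟩
    obtain ⟨z, hz⟩ := Set.nonempty_compl.mpr hne
    rw [Set.ne_univ_iff_exists_notMem]
    refine ⟨⟨{z}, Set.finite_singleton z, ⟨z, rfl⟩⟩, ?_⟩
    simp only [down, Set.mem_setOf_eq]
    intro h
    exact hz (h rfl)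
  · apply Set.eq_univ_of_forall
    intro K
    obtain ⟨U, hU, hsub⟩ := h𝒰.2 K.1 K.2.1 K.2.2
    exact ⟨down U, ⟨U, hU, rfl⟩, hsub⟩

lemma E1R (h1 : RothbergerProp (PFin X)) : Rstar X := by
  classical
  intro 𝒰 h𝒰
  obtain ⟨f, hf, hcov⟩ := h1 (fun n => down '' (𝒰 n)) (fun n => downCover_OX (h𝒰 n))
  have hdec : ∀ n, ∃ U ∈ 𝒰 n, down U = f n := fun n => hf n
  choose v hv hveq using hdec
  refine ⟨v, hv, ?_⟩
  apply omega_of_witness (𝒰 := Set.range v) ?_ subset_rfl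
  · intro F hF hFne
    have : (⟨F, hF, hFne⟩ : PFin X) ∈ ⋃₀ Set.range f := hcov.2 ▸ Set.mem_univ _
    obtain ⟨S, ⟨m, rfl⟩, hKS⟩ := this
    rw [← hveq m] at hKS
    exact ⟨v m, ⟨m, rfl⟩, hKS⟩
  · rintro U ⟨n, rfl⟩
    exact (h𝒰 n).1.1 (v n) (hv n)

lemma E1H (h1 : HurewiczProp (PFin X)) : Hplus X := by
  classical
  intro 𝒰 h𝒰
  obtain ⟨ℱ, hℱ1, hℱ2⟩ := h1 (fun n => down '' (𝒰 n)) (fun n => downCover_OX (h𝒰 n))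
  set dec : ℕ → Set (PFin X) → Set X := fun j S =>
    if h : ∃ U ∈ 𝒰 j, down U = S then h.choose else ∅ with hdec
  have hdec_spec : ∀ j S, S ∈ ℱ j → dec j S ∈ 𝒰 j ∧ down (dec j S) = S := by
    intro j S hS
    have h : ∃ U ∈ 𝒰 j, down U = S := (hℱ1 j).1 hS
    simp only [hdec, dif_pos h]
    exact h.choose_spec
  refine ⟨fun j => dec j '' ℱ j, ?_, ?_⟩
  · intro j
    refine ⟨((hℱ1 j).2).image _, ?_⟩
    rintro V ⟨S, hS, rfl⟩
    exact ⟨j, le_refl j, (hdec_spec j S hS).1⟩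
  · intro F hF hFne
    obtain ⟨N, hN⟩ := hℱ2 ⟨F, hF, hFne⟩
    refine ⟨N, fun j hj => ?_⟩
    obtain ⟨S, hS, hKS⟩ := hN j hj
    refine ⟨dec j S, ⟨S, hS, rfl⟩, ?_⟩
    have := (hdec_spec j S hS).2
    rw [← this] at hKS
    exact hKS

lemma powCover_OX {m : ℕ} (hm : 1 ≤ m) {𝒰 : Set (Set X)} (h𝒰 : 𝒰 ∈ OmegaCovers X) :
    powSet m '' 𝒰 ∈ OX (Fin m → X) := by
  have hne : Nonempty (Fin m) := ⟨⟨0, hm⟩⟩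
  constructor
  · rintro S ⟨U, hU, rfl⟩
    obtain ⟨hop, hUne, hpr⟩ := h𝒰.1.1 U hU
    exact ⟨powSet_open hop, powSet_nonempty hUne, powSet_proper hm hpr⟩
  · apply Set.eq_univ_of_forall
    intro y
    obtain ⟨U, hU, hsub⟩ := h𝒰.2 (Set.range y) (Set.finite_range y) (Set.range_nonempty y)
    exact ⟨powSet m U, ⟨U, hU, rfl⟩, fun i => hsub ⟨i, rfl⟩⟩

lemma E3R (h3 : ∀ n : ℕ, 1 ≤ n → GerlitsNagyProp (Fin n → X)) : Rstar X := by
  classical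
  intro 𝒰 h𝒰
  have key : ∀ m : ℕ, ∃ g : ℕ → Set X, (∀ i, g i ∈ 𝒰 (Nat.pair m i)) ∧
      ∀ F : Set X, F.Finite → F.Nonempty → (∃ y : Fin (m + 1) → X, Set.range y = F) →
        ∃ i, F ⊆ g i := by
    intro m
    obtain ⟨f, hf, hcov⟩ := (h3 (m + 1) (by omega)).2
      (fun i => powSet (m + 1) '' (𝒰 (Nat.pair m i)))
      (fun i => powCover_OX (by omega) (h𝒰 (Nat.pair m i)))
    have hdec : ∀ i, ∃ U ∈ 𝒰 (Nat.pair m i), powSet (m + 1) U = f i := fun i => hf i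
    choose v hv hveq using hdec
    refine ⟨v, hv, ?_⟩
    intro F hF hFne hy
    obtain ⟨y, hyF⟩ := hy
    have : y ∈ ⋃₀ Set.range f := hcov.2 ▸ Set.mem_univ _
    obtain ⟨S, ⟨i, rfl⟩, hyS⟩ := this
    rw [← hveq i] at hyS
    refine ⟨i, ?_⟩
    rw [← hyF]
    rintro x ⟨j, rfl⟩
    exact hyS j
  choose g hg hgw using key
  set f : ℕ → Set X := fun n => g (Nat.unpair n).1 (Nat.unpair n).2 with hfdef
  have hfmem : ∀ n, f n ∈ 𝒰 n := by
    intro n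
    have := hg (Nat.unpair n).1 (Nat.unpair n).2
    rwa [Nat.pair_unpair] at this
  refine ⟨f, hfmem, ?_⟩
  apply omega_of_witness (𝒰 := Set.range f) ?_ subset_rfl
  · intro F hF hFne
    obtain ⟨r, e', _, hre⟩ := hF.fin_param
    match r, e', hre with
    | 0, e', hre => exact absurd (hre.symm ▸ hFne) (by simp)
    | m + 1, e', hre =>
      obtain ⟨i, hi⟩ := hgw m F hF hFne ⟨e', hre⟩
      exact ⟨f (Nat.pair m i), ⟨Nat.pair m i, rfl⟩, by
        simpa [hfdef, Nat.unpair_pair] using hi⟩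
  · rintro U ⟨n, rfl⟩
    exact (h𝒰 n).1.1 (f n) (hfmem n)

lemma E3H (h3 : ∀ n : ℕ, 1 ≤ n → GerlitsNagyProp (Fin n → X)) : Hplus X := by
  classical
  intro 𝒰 h𝒰
  have key : ∀ m : ℕ, ∃ ℱ : ℕ → Set (Set X), (∀ n, ℱ n ⊆ 𝒰 n ∧ (ℱ n).Finite) ∧
      ∀ F : Set X, F.Finite → F.Nonempty → (∃ y : Fin (m + 1) → X, Set.range y = F) →
        ∃ N, ∀ n ≥ N, ∃ V ∈ ℱ n, F ⊆ V := by
    intro m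
    obtain ⟨𝒢, h𝒢1, h𝒢2⟩ := (h3 (m + 1) (by omega)).1
      (fun n => powSet (m + 1) '' (𝒰 n)) (fun n => powCover_OX (by omega) (h𝒰 n))
    set dec : ℕ → Set (Fin (m + 1) → X) → Set X := fun n S =>
      if h : ∃ U ∈ 𝒰 n, powSet (m + 1) U = S then h.choose else ∅ with hdec
    have hdec_spec : ∀ n S, S ∈ 𝒢 n → dec n S ∈ 𝒰 n ∧ powSet (m + 1) (dec n S) = S := by
      intro n S hS
      have h : ∃ U ∈ 𝒰 n, powSet (m + 1) U = S := (h𝒢1 n).1 hS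
      simp only [hdec, dif_pos h]
      exact h.choose_spec
    refine ⟨fun n => dec n '' 𝒢 n, ?_, ?_⟩
    · intro n
      constructor
      · rintro V ⟨S, hS, rfl⟩
        exact (hdec_spec n S hS).1
      · exact ((h𝒢1 n).2).image _
    · intro F hF hFne hy
      obtain ⟨y, hyF⟩ := hy
      obtain ⟨N, hN⟩ := h𝒢2 y
      refine ⟨N, fun n hn => ?_⟩
      obtain ⟨S, hS, hyS⟩ := hN n hn
      refine ⟨dec n S, ⟨S, hS, rfl⟩, ?_⟩
      rw [← hyF]
      rintro x ⟨j, rfl⟩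
      have := (hdec_spec n S hS).2
      rw [← this] at hyS
      exact hyS j
  choose ℱ hℱ1 hℱ2 using key
  refine ⟨fun j => ⋃ m ∈ Set.Iic j, ℱ m j, ?_, ?_⟩
  · intro j
    constructor
    · apply Set.Finite.biUnion (Set.finite_Iic j)
      intro m _
      exact (hℱ1 m j).2
    · intro V hV
      obtain ⟨m, _, hVm⟩ := Set.mem_iUnion₂.mp hV
      exact ⟨j, le_refl j, (hℱ1 m j).1 hVm⟩
  · intro F hF hFne
    obtain ⟨r, e', _, hre⟩ := hF.fin_param
    match r, e', hre with
    | 0, e', hre => exact absurd (hre.symm ▸ hFne) (by simp)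
    | m + 1, e', hre =>
      obtain ⟨N, hN⟩ := hℱ2 m F hF hFne ⟨e', hre⟩
      refine ⟨max N m, fun j hj => ?_⟩
      obtain ⟨V, hV, hFV⟩ := hN j (le_trans (le_max_left _ _) hj)
      exact ⟨V, Set.mem_iUnion₂.mpr ⟨m, le_trans (le_max_right _ _) hj, hV⟩, hFV⟩
end PFinPow
section Cores
variable {X : Type u} [TopologicalSpace X]

/-- `S₁(Ω,Ω)` implies the Rothberger property (mixed finite unions over blocks). -/
lemma lemR {Y : Type u} [TopologicalSpace Y] [Nonempty Y]
    (hS : Sone (OmegaCovers Y) (OmegaCovers Y)) : RothbergerProp Y := by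
  classical
  intro 𝒱 h𝒱
  have hmem : ∀ n, ∃ V, V ∈ 𝒱 n := by
    intro n
    have h := (h𝒱 n).2
    have : (Classical.arbitrary Y) ∈ ⋃₀ 𝒱 n := h ▸ Set.mem_univ _
    obtain ⟨V, hV, -⟩ := this
    exact ⟨V, hV⟩
  choose V₀ hV₀ using hmem
  by_cases hA : ∃ (T : Finset ℕ) (g : ℕ → Set Y), (∀ n ∈ T, g n ∈ 𝒱 n) ∧
      (⋃ n ∈ T, g n) = Set.univ
  · obtain ⟨T, g, hgmem, hgcov⟩ := hA
    refine ⟨fun n => if n ∈ T then g n else V₀ n, fun n => ?_, ?_, ?_⟩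
    · by_cases h : n ∈ T <;> simp [h, hgmem, hV₀]
    · rintro U ⟨n, rfl⟩
      by_cases h : n ∈ T <;> simp only [h, if_true, if_false, ite_true, ite_false] <;>
        [exact (h𝒱 n).1 _ (hgmem n h); exact (h𝒱 n).1 _ (hV₀ n)]
    · apply Set.eq_univ_of_forall
      intro x
      have : x ∈ ⋃ n ∈ T, g n := hgcov ▸ Set.mem_univ _
      obtain ⟨n, hn, hx⟩ := Set.mem_iUnion₂.mp this
      exact ⟨g n, ⟨n, by simp [hn]⟩, hx⟩
  · push_neg at hA
    set 𝒲 : ℕ → Set (Set Y) := fun k =>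
      {W | ∃ T : Finset ℕ, T.Nonempty ∧ ∃ g : ℕ → Set Y,
        (∀ n ∈ T, g n ∈ 𝒱 (Nat.pair k n)) ∧ W = ⋃ n ∈ T, g n} with h𝒲def
    have hproper : ∀ k W, W ∈ 𝒲 k → IsOpen W ∧ W.Nonempty ∧ W ≠ Set.univ := by
      rintro k W ⟨T, hTne, g, hg, rfl⟩
      refine ⟨isOpen_biUnion fun n hn => ((h𝒱 (Nat.pair k n)).1 _ (hg n hn)).1, ?_, ?_⟩
      · obtain ⟨n, hn⟩ := hTne
        obtain ⟨x, hx⟩ := ((h𝒱 (Nat.pair k n)).1 _ (hg n hn)).2.1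
        exact ⟨x, Set.mem_iUnion₂.mpr ⟨n, hn, hx⟩⟩
      · have := hA (T.image (Nat.pair k)) (fun q => g (Nat.unpair q).2) (by
          intro q hq
          obtain ⟨n, hn, rfl⟩ := Finset.mem_image.mp hq
          show g (Nat.unpair (Nat.pair k n)).2 ∈ 𝒱 (Nat.pair k n)
          rw [Nat.unpair_pair]
          exact hg n hn)
        intro hc
        apply this
        rw [← hc]
        ext x
        simp only [Set.mem_iUnion]
        constructor
        · rintro ⟨q, hq, hx⟩
          obtain ⟨n, hn, rfl⟩ := Finset.mem_image.mp hq
          exact ⟨n, hn, by rwa [Nat.unpair_pair] at hx⟩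
        · rintro ⟨n, hn, hx⟩
          exact ⟨Nat.pair k n, Finset.mem_image_of_mem _ hn, by rwa [Nat.unpair_pair]⟩
    have h𝒲Ω : ∀ k, 𝒲 k ∈ OmegaCovers Y := by
      intro k
      apply omega_of_witness (𝒰 := 𝒲 k) (fun W hW => hproper k W hW) subset_rfl
      intro F hF hFne
      obtain ⟨r, e', _, hre⟩ := hF.fin_param
      have hr : 0 < r := by
        rcases Nat.eq_zero_or_pos r with h | h
        · subst h
          rw [← hre] at hFne
          simpa using hFne
        · exact h
      have hcov : ∀ i : Fin r, ∃ V ∈ 𝒱 (Nat.pair k i), e' i ∈ V := by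
        intro i
        have h := (h𝒱 (Nat.pair k i)).2
        have : e' i ∈ ⋃₀ 𝒱 (Nat.pair k i) := h ▸ Set.mem_univ _
        obtain ⟨V, hV, hx⟩ := this
        exact ⟨V, hV, hx⟩
      choose Wf hWf hWfx using hcov
      set g : ℕ → Set Y := fun n => if h : n < r then Wf ⟨n, h⟩ else ∅ with hgdef
      refine ⟨⋃ n ∈ Finset.range r, g n, ⟨Finset.range r, ⟨0, Finset.mem_range.mpr hr⟩, g, ?_, rfl⟩, ?_⟩
      · intro n hn
        have h : n < r := Finset.mem_range.mp hn
        simp only [hgdef, dif_pos h]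
        exact hWf ⟨n, h⟩
      · intro x hx
        rw [← hre] at hx
        obtain ⟨i, rfl⟩ := hx
        apply Set.mem_iUnion₂.mpr
        refine ⟨i.1, Finset.mem_range.mpr i.2, ?_⟩
        simp only [hgdef, dif_pos i.2]
        exact hWfx ⟨i.1, i.2⟩
    obtain ⟨Wsel, hWsel, hWΩ⟩ := hS 𝒲 h𝒲Ω
    have hdec : ∀ k, ∃ T : Finset ℕ, T.Nonempty ∧ ∃ g : ℕ → Set Y,
        (∀ n ∈ T, g n ∈ 𝒱 (Nat.pair k n)) ∧ Wsel k = ⋃ n ∈ T, g n := fun k => hWsel k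
    choose T hTne g hgmem hgeq using hdec
    refine ⟨fun n => if (Nat.unpair n).2 ∈ T (Nat.unpair n).1
      then g (Nat.unpair n).1 (Nat.unpair n).2 else V₀ n, fun n => ?_, ?_, ?_⟩
    · by_cases h : (Nat.unpair n).2 ∈ T (Nat.unpair n).1
      · simp only [h, if_true]
        have := hgmem (Nat.unpair n).1 (Nat.unpair n).2 h
        rwa [Nat.pair_unpair] at this
      · simp only [h, if_false]
        exact hV₀ n
    · rintro U ⟨n, rfl⟩
      by_cases h : (Nat.unpair n).2 ∈ T (Nat.unpair n).1
      · simp only [h, if_true]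
        have := hgmem (Nat.unpair n).1 (Nat.unpair n).2 h
        rw [Nat.pair_unpair] at this
        exact (h𝒱 n).1 _ this
      · simp only [h, if_false]
        exact (h𝒱 n).1 _ (hV₀ n)
    · apply Set.eq_univ_of_forall
      intro x
      have : x ∈ ⋃₀ Set.range Wsel := hWΩ.1.2 ▸ Set.mem_univ _
      obtain ⟨W, ⟨k, rfl⟩, hxW⟩ := this
      rw [hgeq k] at hxW
      obtain ⟨i, hi, hx⟩ := Set.mem_iUnion₂.mp hxW
      refine ⟨g k i, ⟨Nat.pair k i, ?_⟩, hx⟩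
      simp only [Nat.unpair_pair]
      simp [hi]

/-- Transfer of `S₁(Ω,Ω)` to finite powers. -/
lemma Rstar_pow (hR : Rstar X) {m : ℕ} (hm : 1 ≤ m) :
    Sone (OmegaCovers (Fin m → X)) (OmegaCovers (Fin m → X)) := by
  classical
  have hfne : Nonempty (Fin m) := ⟨⟨0, hm⟩⟩
  intro 𝒲 h𝒲
  set 𝒰 : ℕ → Set (Set X) := fun n =>
    {U | IsOpen U ∧ U.Nonempty ∧ ∃ W ∈ 𝒲 n, powSet m U ⊆ W} with h𝒰def
  have h𝒰Ω : ∀ n, 𝒰 n ∈ OmegaCovers X := by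
    intro n
    apply omega_of_witness (𝒰 := 𝒰 n) ?_ subset_rfl
    · intro F hF hFne
      obtain ⟨W, hW, hTW⟩ := (h𝒲 n).2 {y : Fin m → X | ∀ i, y i ∈ F} (finite_powPts hF)
        ⟨fun _ => hFne.choose, fun _ => hFne.choose_spec⟩
      obtain ⟨U, hUopen, hFU, hUW⟩ := tube_lemma hF hTW (((h𝒲 n).1.1 W hW).1)
      exact ⟨U, ⟨hUopen, ⟨hFne.choose, hFU hFne.choose_spec⟩, W, hW, hUW⟩, hFU⟩
    · rintro U ⟨hUopen, hUne, W, hW, hUW⟩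
      refine ⟨hUopen, hUne, ?_⟩
      intro hc
      apply ((h𝒲 n).1.1 W hW).2.2
      apply Set.eq_univ_of_forall
      intro y
      apply hUW
      intro i
      rw [hc]
      exact Set.mem_univ _
  obtain ⟨v, hv, hvΩ⟩ := hR 𝒰 h𝒰Ω
  choose W hW hpow using (fun n => (hv n).2.2)
  refine ⟨W, hW, ?_⟩
  apply omega_of_witness (𝒰 := Set.range W) ?_ subset_rfl
  · intro G hG hGne
    set F := ⋃ y ∈ G, Set.range y with hFdef
    have hFfin : F.Finite := hG.biUnion fun y _ => Set.finite_range y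
    have hFne : F.Nonempty := by
      obtain ⟨y, hy⟩ := hGne
      exact ⟨y (Classical.arbitrary (Fin m)),
        Set.mem_biUnion hy ⟨Classical.arbitrary (Fin m), rfl⟩⟩
    obtain ⟨U, ⟨n, rfl⟩, hFU⟩ := hvΩ.2 F hFfin hFne
    refine ⟨W n, ⟨n, rfl⟩, ?_⟩
    intro y hy
    apply hpow n
    intro i
    exact hFU (Set.mem_biUnion hy ⟨i, rfl⟩)
  · rintro U ⟨n, rfl⟩
    exact (h𝒲 n).1.1 (W n) (hW n)

/-- `H⁺` implies the Hurewicz property of all finite powers. -/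
lemma lemH (hH : Hplus X) {m : ℕ} (hm : 1 ≤ m) : HurewiczProp (Fin m → X) := by
  classical
  intro 𝒱 h𝒱
  set I : Set ℕ := {j | ¬∃ 𝒢 : Set (Set (Fin m → X)), 𝒢 ⊆ 𝒱 j ∧ 𝒢.Finite ∧ ⋃₀ 𝒢 = Set.univ}
    with hIdef
  set sub : ℕ → Set (Set (Fin m → X)) := fun j =>
    if h : ∃ 𝒢, 𝒢 ⊆ 𝒱 j ∧ 𝒢.Finite ∧ ⋃₀ 𝒢 = Set.univ then h.choose else ∅ with hsubdef
  have hsub_spec : ∀ j ∉ I, sub j ⊆ 𝒱 j ∧ (sub j).Finite ∧ ⋃₀ (sub j) = Set.univ := by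
    intro j hj
    rw [hIdef, Set.mem_setOf_eq, not_not] at hj
    simp only [hsubdef, dif_pos hj]
    exact hj.choose_spec
  by_cases hI : I.Infinite
  swap
  · rw [Set.not_infinite] at hI
    refine ⟨fun j => if j ∈ I then ∅ else sub j, ?_, ?_⟩
    · intro j
      by_cases h : j ∈ I
      · simp only [h, if_true]
        exact ⟨Set.empty_subset _, Set.finite_empty⟩
      · simp only [h, if_false]
        exact ⟨(hsub_spec j h).1, (hsub_spec j h).2.1⟩
    · intro y
      obtain ⟨b, hb⟩ := hI.bddAbove
      refine ⟨b + 1, fun j hj => ?_⟩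
      have hjI : j ∉ I := fun h => by have := hb h; omega
      simp only [hjI, if_false]
      rw [(hsub_spec j hjI).2.2]
      exact Set.mem_univ _
  · set e : ℕ → ℕ := Nat.nth (· ∈ I) with hedef
    have hI' : (setOf (· ∈ I)).Infinite := hI
    have hemono : StrictMono e := Nat.nth_strictMono hI'
    have hemem : ∀ j, e j ∈ I := fun j => Nat.nth_mem_of_infinite hI' j
    have hesurj : ∀ q ∈ I, ∃ j, e j = q := by
      intro q hq
      have := Nat.range_nth_of_infinite hI'
      rw [Set.ext_iff] at this
      exact (this q).mpr hq
    set 𝒰' : ℕ → Set (Set X) := fun n =>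
      {U | IsOpen U ∧ U.Nonempty ∧ ∀ k ≤ n, ∃ 𝒢 : Set (Set (Fin m → X)),
        𝒢 ⊆ 𝒱 (e k) ∧ 𝒢.Finite ∧ powSet m U ⊆ ⋃₀ 𝒢} with h𝒰'def
    have h𝒰'Ω : ∀ n, 𝒰' n ∈ OmegaCovers X := by
      intro n
      apply omega_of_witness (𝒰 := 𝒰' n) ?_ subset_rfl
      · intro F hF hFne
        have hcov : ∀ k, ∃ 𝒢 : Set (Set (Fin m → X)), 𝒢 ⊆ 𝒱 (e k) ∧ 𝒢.Finite ∧
            IsOpen (⋃₀ 𝒢) ∧ {y : Fin m → X | ∀ i, y i ∈ F} ⊆ ⋃₀ 𝒢 := by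
          intro k
          have hTfin := finite_powPts (m := m) hF
          have hpt : ∀ y ∈ {y : Fin m → X | ∀ i, y i ∈ F}, ∃ V ∈ 𝒱 (e k), y ∈ V := by
            intro y _
            have h := (h𝒱 (e k)).2
            have : y ∈ ⋃₀ 𝒱 (e k) := h ▸ Set.mem_univ _
            obtain ⟨V, hV, hy⟩ := this
            exact ⟨V, hV, hy⟩
          choose! Vf hVf hVfy using hpt
          refine ⟨Vf '' {y : Fin m → X | ∀ i, y i ∈ F}, ?_, hTfin.image _, ?_, ?_⟩
          · rintro V ⟨y, hy, rfl⟩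
            exact hVf y hy
          · apply isOpen_sUnion
            rintro V ⟨y, hy, rfl⟩
            exact ((h𝒱 (e k)).1 _ (hVf y hy)).1
          · intro y hy
            exact ⟨Vf y, ⟨y, hy, rfl⟩, hVfy y hy⟩
        choose 𝒢f h𝒢1 h𝒢2 h𝒢3 h𝒢4 using hcov
        have htube : ∀ k, ∃ U : Set X, IsOpen U ∧ F ⊆ U ∧ powSet m U ⊆ ⋃₀ 𝒢f k :=
          fun k => tube_lemma hF (h𝒢4 k) (h𝒢3 k)
        choose Uf hUf1 hUf2 hUf3 using htube
        refine ⟨⋂ k ∈ Set.Iic n, Uf k, ⟨?_, ?_, ?_⟩, ?_⟩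
        · exact (Set.finite_Iic n).isOpen_biInter fun k _ => hUf1 k
        · exact ⟨hFne.choose, Set.mem_iInter₂.mpr fun k _ => hUf2 k hFne.choose_spec⟩
        · intro k hk
          refine ⟨𝒢f k, h𝒢1 k, h𝒢2 k, ?_⟩
          refine subset_trans (powSet_mono ?_) (hUf3 k)
          exact Set.biInter_subset_of_mem hk
        · intro x hx
          exact Set.mem_iInter₂.mpr fun k _ => hUf2 k hx
      · rintro U ⟨hUopen, hUne, hprop⟩
        refine ⟨hUopen, hUne, ?_⟩
        intro hc
        obtain ⟨𝒢, h𝒢sub, h𝒢fin, h𝒢cov⟩ := hprop 0 (Nat.zero_le n)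
        apply hemem 0
        refine ⟨𝒢, h𝒢sub, h𝒢fin, ?_⟩
        apply Set.eq_univ_of_forall
        intro y
        apply h𝒢cov
        intro i
        rw [hc]
        exact Set.mem_univ _
    obtain ⟨ℋ, hℋ1, hℋ2⟩ := hH 𝒰' h𝒰'Ω
    have hGGex : ∀ j, ∀ V ∈ ℋ j, ∃ 𝒢 : Set (Set (Fin m → X)),
        𝒢 ⊆ 𝒱 (e j) ∧ 𝒢.Finite ∧ powSet m V ⊆ ⋃₀ 𝒢 := by
      intro j V hV
      obtain ⟨n, hnj, hVn⟩ := (hℋ1 j).2 V hV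
      exact hVn.2.2 j hnj
    set GG : ℕ → Set X → Set (Set (Fin m → X)) := fun j V =>
      if h : ∃ 𝒢 : Set (Set (Fin m → X)), 𝒢 ⊆ 𝒱 (e j) ∧ 𝒢.Finite ∧ powSet m V ⊆ ⋃₀ 𝒢
      then h.choose else ∅ with hGGdef
    have hGG_spec : ∀ j, ∀ V ∈ ℋ j,
        GG j V ⊆ 𝒱 (e j) ∧ (GG j V).Finite ∧ powSet m V ⊆ ⋃₀ (GG j V) := by
      intro j V hV
      have h := hGGex j V hV
      simp only [hGGdef, dif_pos h]
      exact h.choose_spec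
    set invE : ℕ → ℕ := fun q => if h : ∃ j, e j = q then h.choose else 0 with hinvdef
    have hinv_spec : ∀ q ∈ I, e (invE q) = q := by
      intro q hq
      have h := hesurj q hq
      simp only [hinvdef, dif_pos h]
      exact h.choose_spec
    have hinv_e : ∀ j, invE (e j) = j := by
      intro j
      apply hemono.injective
      exact hinv_spec (e j) (hemem j)
    refine ⟨fun q => if q ∈ I then ⋃ V ∈ ℋ (invE q), GG (invE q) V else sub q, ?_, ?_⟩
    · intro q
      by_cases hq : q ∈ I
      · simp only [hq, if_true]
        constructor
        · intro W hW
          obtain ⟨V, hV, hWV⟩ := Set.mem_iUnion₂.mp hW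
          have := (hGG_spec (invE q) V hV).1 hWV
          rwa [hinv_spec q hq] at this
        · apply Set.Finite.biUnion (hℋ1 (invE q)).1
          intro V hV
          exact (hGG_spec (invE q) V hV).2.1
      · simp only [hq, if_false]
        exact ⟨(hsub_spec q hq).1, (hsub_spec q hq).2.1⟩
    · intro y
      have hFy : (Set.range y).Finite := Set.finite_range y
      have hFyne : (Set.range y).Nonempty := ⟨y ⟨0, hm⟩, ⟨0, hm⟩, rfl⟩
      obtain ⟨N, hN⟩ := hℋ2 (Set.range y) hFy hFyne
      refine ⟨e N, fun q hq => ?_⟩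
      by_cases hqI : q ∈ I
      · simp only [hqI, if_true]
        have hjq : N ≤ invE q := by
          by_contra hc
          push_neg at hc
          have : e (invE q) < e N := hemono hc
          rw [hinv_spec q hqI] at this
          omega
        obtain ⟨V, hV, hFV⟩ := hN (invE q) hjq
        have hy : y ∈ powSet m V := fun i => hFV ⟨i, rfl⟩
        obtain ⟨W, hW, hyW⟩ := (hGG_spec (invE q) V hV).2.2 hy
        exact ⟨W, Set.mem_iUnion₂.mpr ⟨V, hV, hW⟩, hyW⟩
      · simp only [hqI, if_false]
        rw [(hsub_spec q hqI).2.2]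
        exact Set.mem_univ _
end Cores
section Images
variable {X : Type u} [TopologicalSpace X]

lemma hurewicz_image_cover {Y Z : Type u} [TopologicalSpace Y] [TopologicalSpace Z]
    (hY : HurewiczProp Y) {g : Y → Z} (hg : Continuous g)
    (𝒰 : ℕ → Set (Set Z)) (h𝒰 : ∀ n, 𝒰 n ∈ OX Z) :
    ∃ ℱ : ℕ → Set (Set Z), (∀ n, ℱ n ⊆ 𝒰 n ∧ (ℱ n).Finite) ∧
      ∀ z ∈ Set.range g, ∃ m, ∀ n ≥ m, z ∈ ⋃₀ ℱ n := by
  classical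
  set Abs : Set ℕ := {n | ∃ U ∈ 𝒰 n, Set.range g ⊆ U} with hAbsdef
  set absU : ℕ → Set Z := fun n => if h : ∃ U ∈ 𝒰 n, Set.range g ⊆ U then h.choose else ∅
    with habsdef
  have habs_spec : ∀ n ∈ Abs, absU n ∈ 𝒰 n ∧ Set.range g ⊆ absU n := by
    intro n hn
    have hn' : ∃ U ∈ 𝒰 n, Set.range g ⊆ U := hn
    simp only [habsdef, dif_pos hn']
    exact hn'.choose_spec
  by_cases hcase : Absᶜ.Infinite
  · set e : ℕ → ℕ := Nat.nth (· ∈ Absᶜ) with hedef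
    have hI' : (setOf (· ∈ Absᶜ)).Infinite := hcase
    have hemono : StrictMono e := Nat.nth_strictMono hI'
    have hemem : ∀ j, e j ∈ Absᶜ := fun j => Nat.nth_mem_of_infinite hI' j
    have hesurj : ∀ q ∈ Absᶜ, ∃ j, e j = q := by
      intro q hq
      have h := Nat.range_nth_of_infinite hI'
      rw [Set.ext_iff] at h
      exact (h q).mpr hq
    set 𝒰' : ℕ → Set (Set Y) := fun k =>
      {V | ∃ U ∈ 𝒰 (e k), V = g ⁻¹' U ∧ V.Nonempty} with h𝒰'def
    have h𝒰'OX : ∀ k, 𝒰' k ∈ OX Y := by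
      intro k
      constructor
      · rintro V ⟨U, hU, rfl, hne⟩
        refine ⟨((h𝒰 (e k)).1 U hU).1.preimage hg, hne, ?_⟩
        intro hc
        apply hemem k
        refine ⟨U, hU, ?_⟩
        rintro z ⟨y, rfl⟩
        have : y ∈ g ⁻¹' U := hc ▸ Set.mem_univ y
        exact this
      · apply Set.eq_univ_of_forall
        intro y
        have : g y ∈ ⋃₀ 𝒰 (e k) := (h𝒰 (e k)).2 ▸ Set.mem_univ _
        obtain ⟨U, hU, hy⟩ := this
        exact ⟨g ⁻¹' U, ⟨U, hU, rfl, ⟨y, hy⟩⟩, hy⟩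
    obtain ⟨𝒢, h𝒢1, h𝒢2⟩ := hY 𝒰' h𝒰'OX
    set dec : ℕ → Set Y → Set Z := fun k V =>
      if h : ∃ U ∈ 𝒰 (e k), V = g ⁻¹' U ∧ V.Nonempty then h.choose else ∅ with hdecdef
    have hdec_spec : ∀ k V, V ∈ 𝒢 k → dec k V ∈ 𝒰 (e k) ∧ V = g ⁻¹' (dec k V) := by
      intro k V hV
      have h : ∃ U ∈ 𝒰 (e k), V = g ⁻¹' U ∧ V.Nonempty := (h𝒢1 k).1 hV
      simp only [hdecdef, dif_pos h]
      exact ⟨h.choose_spec.1, h.choose_spec.2.1⟩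
    set invE : ℕ → ℕ := fun q => if h : ∃ j, e j = q then h.choose else 0 with hinvdef
    have hinv_spec : ∀ q ∈ Absᶜ, e (invE q) = q := by
      intro q hq
      have h := hesurj q hq
      simp only [hinvdef, dif_pos h]
      exact h.choose_spec
    refine ⟨fun q => if q ∈ Abs then {absU q} else dec (invE q) '' 𝒢 (invE q), ?_, ?_⟩
    · intro q
      by_cases hq : q ∈ Abs
      · simp only [hq, if_true]
        exact ⟨Set.singleton_subset_iff.mpr (habs_spec q hq).1, Set.finite_singleton _⟩
      · simp only [hq, if_false]
        constructor
        · rintro U ⟨V, hV, rfl⟩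
          have := (hdec_spec (invE q) V hV).1
          rwa [hinv_spec q hq] at this
        · exact ((h𝒢1 (invE q)).2).image _
    · rintro z ⟨y, rfl⟩
      obtain ⟨N, hN⟩ := h𝒢2 y
      refine ⟨e N, fun q hq => ?_⟩
      by_cases hqA : q ∈ Abs
      · simp only [hqA, if_true]
        exact ⟨absU q, rfl, (habs_spec q hqA).2 ⟨y, rfl⟩⟩
      · simp only [hqA, if_false]
        have hjq : N ≤ invE q := by
          by_contra hc
          push_neg at hc
          have h2 : e (invE q) < e N := hemono hc
          rw [hinv_spec q hqA] at h2
          omega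
        obtain ⟨V, hV, hyV⟩ := hN (invE q) hjq
        refine ⟨dec (invE q) V, ⟨V, hV, rfl⟩, ?_⟩
        have := (hdec_spec (invE q) V hV).2
        rw [this] at hyV
        exact hyV
  · rw [Set.not_infinite] at hcase
    refine ⟨fun n => if n ∈ Abs then {absU n} else ∅, ?_, ?_⟩
    · intro n
      by_cases h : n ∈ Abs
      · simp only [h, if_true]
        exact ⟨Set.singleton_subset_iff.mpr (habs_spec n h).1, Set.finite_singleton _⟩
      · simp only [h, if_false]
        exact ⟨Set.empty_subset _, Set.finite_empty⟩
    · rintro z ⟨y, rfl⟩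
      obtain ⟨b, hb⟩ := hcase.bddAbove
      refine ⟨b + 1, fun n hn => ?_⟩
      have hnA : n ∈ Abs := by
        by_contra hc
        have := hb (Set.mem_compl hc)
        omega
      simp only [hnA, if_true]
      exact ⟨absU n, rfl, (habs_spec n hnA).2 ⟨y, rfl⟩⟩

lemma rothberger_image_cover {Y Z : Type u} [TopologicalSpace Y] [TopologicalSpace Z]
    [Nonempty Z] (hY : RothbergerProp Y) {g : Y → Z} (hg : Continuous g)
    (𝒰 : ℕ → Set (Set Z)) (h𝒰 : ∀ n, 𝒰 n ∈ OX Z) :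
    ∃ f : ℕ → Set Z, (∀ n, f n ∈ 𝒰 n) ∧ Set.range g ⊆ ⋃ n, f n := by
  classical
  have hmem : ∀ n, ∃ U, U ∈ 𝒰 n := by
    intro n
    have : (Classical.arbitrary Z) ∈ ⋃₀ 𝒰 n := (h𝒰 n).2 ▸ Set.mem_univ _
    obtain ⟨U, hU, -⟩ := this
    exact ⟨U, hU⟩
  choose U₀ hU₀ using hmem
  by_cases hcase : ∃ n₀, ∃ U ∈ 𝒰 n₀, Set.range g ⊆ U
  · obtain ⟨n₀, U, hU, hrg⟩ := hcase
    refine ⟨fun n => if n = n₀ then U else U₀ n, fun n => ?_, ?_⟩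
    · by_cases h : n = n₀
      · subst h; simpa using hU
      · simpa [h] using hU₀ n
    · intro z hz
      exact Set.mem_iUnion.mpr ⟨n₀, by simpa using hrg hz⟩
  · push_neg at hcase
    set 𝒰' : ℕ → Set (Set Y) := fun n =>
      {V | ∃ U ∈ 𝒰 n, V = g ⁻¹' U ∧ V.Nonempty} with h𝒰'def
    have h𝒰'OX : ∀ n, 𝒰' n ∈ OX Y := by
      intro n
      constructor
      · rintro V ⟨U, hU, rfl, hne⟩
        refine ⟨((h𝒰 n).1 U hU).1.preimage hg, hne, ?_⟩
        intro hc
        apply hcase n U hU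
        rintro z ⟨y, rfl⟩
        have : y ∈ g ⁻¹' U := hc ▸ Set.mem_univ y
        exact this
      · apply Set.eq_univ_of_forall
        intro y
        have : g y ∈ ⋃₀ 𝒰 n := (h𝒰 n).2 ▸ Set.mem_univ _
        obtain ⟨U, hU, hy⟩ := this
        exact ⟨g ⁻¹' U, ⟨U, hU, rfl, ⟨y, hy⟩⟩, hy⟩
    obtain ⟨v, hv, hvOX⟩ := hY 𝒰' h𝒰'OX
    have hdec : ∀ n, ∃ U ∈ 𝒰 n, v n = g ⁻¹' U ∧ (v n).Nonempty := fun n => hv n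
    choose W hW hWeq hWne using hdec
    refine ⟨W, hW, ?_⟩
    rintro z ⟨y, rfl⟩
    have : y ∈ ⋃₀ Set.range v := hvOX.2 ▸ Set.mem_univ _
    obtain ⟨V, ⟨n, rfl⟩, hyV⟩ := this
    rw [hWeq n] at hyV
    exact Set.mem_iUnion.mpr ⟨n, hyV⟩

/-- the canonical map from a finite power onto nonempty finite subsets -/
def toPFin (m : ℕ) (y : Fin (m + 1) → X) : PFin X :=
  ⟨Set.range y, Set.finite_range y, ⟨y 0, 0, rfl⟩⟩

lemma toPFin_continuous (m : ℕ) : Continuous (toPFin (X := X) m) := by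
  apply continuous_generateFrom_iff.mpr
  rintro S ⟨U, hU, hS | hS⟩
  · subst hS
    have : toPFin (X := X) m ⁻¹' {K : PFin X | K.1 ⊆ U} = powSet (m + 1) U := by
      ext y
      constructor
      · intro h i
        exact h ⟨i, rfl⟩
      · rintro h z ⟨i, rfl⟩
        exact h i
    rw [this]
    exact powSet_open hU
  · subst hS
    have : toPFin (X := X) m ⁻¹' {K : PFin X | (K.1 ∩ U).Nonempty} =
        ⋃ i : Fin (m + 1), (fun y : Fin (m + 1) → X => y i) ⁻¹' U := by
      ext y
      constructor
      · rintro ⟨z, ⟨i, rfl⟩, hz⟩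
        exact Set.mem_iUnion.mpr ⟨i, hz⟩
      · intro h
        obtain ⟨i, hi⟩ := Set.mem_iUnion.mp h
        exact ⟨y i, ⟨i, rfl⟩, hi⟩
    rw [this]
    exact isOpen_iUnion fun i =>
      (continuous_apply i : Continuous fun y : Fin (m + 1) → X => y i).isOpen_preimage U hU

lemma toPFin_surj : ∀ K : PFin X, ∃ m y, toPFin (X := X) m y = K := by
  rintro ⟨K, hKfin, hKne⟩
  obtain ⟨r, e', _, hre⟩ := hKfin.fin_param
  match r, e', hre with
  | 0, e', hre => exact absurd (hre ▸ hKne) (by simp)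
  | m + 1, e', hre => exact ⟨m, e', Subtype.ext hre⟩

instance pfin_nonempty [Nonempty X] : Nonempty (PFin X) :=
  ⟨⟨{Classical.arbitrary X}, Set.finite_singleton _, ⟨_, rfl⟩⟩⟩

lemma E31 [Nonempty X] (h3 : ∀ n : ℕ, 1 ≤ n → GerlitsNagyProp (Fin n → X)) :
    GerlitsNagyProp (PFin X) := by
  constructor
  · -- Hurewicz
    intro 𝒰 h𝒰
    have key := fun m : ℕ => hurewicz_image_cover (h3 (m + 1) (by omega)).1
      (toPFin_continuous m) 𝒰 h𝒰
    choose ℱ hℱ1 hℱ2 using key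
    refine ⟨fun n => ⋃ m ∈ Set.Iic n, ℱ m n, ?_, ?_⟩
    · intro n
      constructor
      · intro U hU
        obtain ⟨m, _, hUm⟩ := Set.mem_iUnion₂.mp hU
        exact (hℱ1 m n).1 hUm
      · exact (Set.finite_Iic n).biUnion fun m _ => (hℱ1 m n).2
    · intro K
      obtain ⟨m, y, rfl⟩ := toPFin_surj K
      obtain ⟨N, hN⟩ := hℱ2 m _ ⟨y, rfl⟩
      refine ⟨max N m, fun n hn => ?_⟩
      obtain ⟨U, hU, hKU⟩ := hN n (le_trans (le_max_left _ _) hn)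
      exact ⟨U, Set.mem_iUnion₂.mpr ⟨m, le_trans (le_max_right _ _) hn, hU⟩, hKU⟩
  · -- Rothberger
    intro 𝒰 h𝒰
    have key := fun m : ℕ => rothberger_image_cover (h3 (m + 1) (by omega)).2
      (toPFin_continuous m) (fun i => 𝒰 (Nat.pair m i)) (fun i => h𝒰 (Nat.pair m i))
    choose v hv hvcov using key
    set f : ℕ → Set (PFin X) := fun n => v (Nat.unpair n).1 (Nat.unpair n).2 with hfdef
    have hfmem : ∀ n, f n ∈ 𝒰 n := by
      intro n
      have := hv (Nat.unpair n).1 (Nat.unpair n).2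
      rwa [Nat.pair_unpair] at this
    refine ⟨f, hfmem, ?_, ?_⟩
    · rintro U ⟨n, rfl⟩
      exact (h𝒰 n).1 _ (hfmem n)
    · apply Set.eq_univ_of_forall
      intro K
      obtain ⟨m, y, rfl⟩ := toPFin_surj K
      have : toPFin m y ∈ ⋃ i, v m i := hvcov m ⟨y, rfl⟩
      obtain ⟨i, hi⟩ := Set.mem_iUnion.mp this
      refine ⟨v m i, ⟨Nat.pair m i, ?_⟩, hi⟩
      simp only [hfdef, Nat.unpair_pair]
end Images
section CpCore
variable {X : Type u} [TopologicalSpace X] [T2Space X] [CompletelyRegularSpace X] [Nonempty X]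

lemma epsSet_open {g : Cp X} {c : ℝ} : IsOpen {x : X | |g.1 x| < c} := by
  have : {x : X | |g.1 x| < c} = g.1 ⁻¹' (Metric.ball (0 : ℝ) c) := by
    ext x
    simp [Real.dist_eq]
  rw [this]
  exact Metric.isOpen_ball.preimage g.2

lemma c1 (hR : Rstar X) :
    Sone (OmegaPt (Cp X) (zeroCp X)) (OmegaPt (Cp X) (zeroCp X)) := by
  classical
  intro A hA
  have hAne : ∀ n, ∃ g, g ∈ A n := by
    intro n
    obtain ⟨g, hg, -⟩ := zero_mem_closure_iff.mp (hA n).1 ∅ Set.finite_empty 1 one_pos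
    exact ⟨g, hg⟩
  choose g₀ hg₀ using hAne
  set Deg : Set ℕ := {n | ∃ g ∈ A n, ∀ x, |g.1 x| < eps n} with hDegdef
  set dsel : ℕ → Cp X := fun n => if h : ∃ g ∈ A n, ∀ x, |g.1 x| < eps n then h.choose else g₀ n
    with hdsel
  have hdsel_spec : ∀ n ∈ Deg, dsel n ∈ A n ∧ ∀ x, |(dsel n).1 x| < eps n := by
    intro n hn
    have hn' : ∃ g ∈ A n, ∀ x, |g.1 x| < eps n := hn
    simp only [hdsel, dif_pos hn']
    exact hn'.choose_spec
  have hnotmem : ∀ (f : ℕ → Cp X), (∀ n, f n ∈ A n) → zeroCp X ∉ Set.range f := by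
    rintro f hf ⟨n, hn⟩
    exact (hA n).2 (hn ▸ hf n)
  by_cases hcase : Deg.Infinite
  · refine ⟨fun n => if n ∈ Deg then dsel n else g₀ n, fun n => ?_, ?_, ?_⟩
    · by_cases h : n ∈ Deg
      · simpa [h] using (hdsel_spec n h).1
      · simpa [h] using hg₀ n
    · rw [zero_mem_closure_iff]
      intro F hF ε hε
      obtain ⟨N, hN⟩ := exists_eps_lt hε
      obtain ⟨n, hnD, hnN⟩ := hcase.exists_gt N
      refine ⟨_, ⟨n, rfl⟩, ?_⟩
      intro x _
      simp only [hnD, if_true]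
      exact lt_of_lt_of_le ((hdsel_spec n hnD).2 x)
        (le_trans (eps_antitone (le_of_lt hnN)) (le_of_lt hN))
    · apply hnotmem
      intro n
      by_cases h : n ∈ Deg
      · simpa [h] using (hdsel_spec n h).1
      · simpa [h] using hg₀ n
  · rw [Set.not_infinite] at hcase
    obtain ⟨N₀', hN₀'⟩ := hcase.bddAbove
    set N₀ := N₀' + 1 with hN₀def
    have hnodeg : ∀ n ≥ N₀, ∀ g ∈ A n, ∃ x, eps n ≤ |g.1 x| := by
      intro n hn g hg
      by_contra hc
      push_neg at hc
      have : n ∈ Deg := ⟨g, hg, fun x => hc x⟩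
      have := hN₀' this
      omega
    set VC : ℕ → Set (Set X) := fun n =>
      {U | ∃ g ∈ A n, U = {x | |g.1 x| < eps n} ∧ U.Nonempty} with hVCdef
    have hVCΩ : ∀ n ≥ N₀, VC n ∈ OmegaCovers X := by
      intro n hn
      apply omega_of_witness (𝒰 := VC n) ?_ subset_rfl
      · intro F hF hFne
        obtain ⟨g, hg, hsm⟩ := zero_mem_closure_iff.mp (hA n).1 F hF (eps n) (eps_pos n)
        refine ⟨{x | |g.1 x| < eps n}, ⟨g, hg, rfl, ⟨hFne.choose, hsm _ hFne.choose_spec⟩⟩,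
          fun x hx => hsm x hx⟩
      · rintro U ⟨g, hg, rfl, hne⟩
        refine ⟨epsSet_open, hne, ?_⟩
        obtain ⟨x, hx⟩ := hnodeg n hn g hg
        rw [Set.ne_univ_iff_exists_notMem]
        exact ⟨x, fun h => absurd h (not_lt.mpr hx)⟩
    set ρ : ℕ → ℕ → ℕ := fun k i => N₀ + Nat.pair k i with hρdef
    have hρge : ∀ k i, N₀ ≤ ρ k i := fun k i => by simp [hρdef]
    have hρk : ∀ k i, k ≤ ρ k i := fun k i =>
      le_trans (Nat.left_le_pair k i) (by simp [hρdef])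
    obtain hRap : ∀ k : ℕ, ∃ W : ℕ → Set X, (∀ i, W i ∈ VC (ρ k i)) ∧
        Set.range W ∈ OmegaCovers X :=
      fun k => hR (fun i => VC (ρ k i)) (fun i => hVCΩ _ (hρge k i))
    choose W hWmem hWΩ using hRap
    have hdec : ∀ k i, ∃ g ∈ A (ρ k i), W k i = {x | |g.1 x| < eps (ρ k i)} := by
      intro k i
      obtain ⟨g, hg, heq, -⟩ := hWmem k i
      exact ⟨g, hg, heq⟩
    choose gd hgd hgdeq using hdec
    set f : ℕ → Cp X := fun n => if h : N₀ ≤ n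
      then gd (Nat.unpair (n - N₀)).1 (Nat.unpair (n - N₀)).2 else g₀ n with hfdef
    have hρn : ∀ n, N₀ ≤ n → ρ (Nat.unpair (n - N₀)).1 (Nat.unpair (n - N₀)).2 = n := by
      intro n hn
      simp only [hρdef]
      rw [Nat.pair_unpair]
      omega
    have hfmem : ∀ n, f n ∈ A n := by
      intro n
      by_cases h : N₀ ≤ n
      · simp only [hfdef, dif_pos h]
        have := hgd (Nat.unpair (n - N₀)).1 (Nat.unpair (n - N₀)).2
        rwa [hρn n h] at this
      · simp only [hfdef, dif_neg h]
        exact hg₀ n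
    have hfval : ∀ k i, f (ρ k i) = gd k i := by
      intro k i
      have h : N₀ ≤ ρ k i := hρge k i
      simp only [hfdef, dif_pos h]
      have h2 : ρ k i - N₀ = Nat.pair k i := by simp [hρdef]
      rw [h2, Nat.unpair_pair]
    refine ⟨f, hfmem, ?_, hnotmem f hfmem⟩
    rw [zero_mem_closure_iff]
    intro F hF ε hε
    rcases F.eq_empty_or_nonempty with rfl | hFne
    · exact ⟨f 0, ⟨0, rfl⟩, by simp⟩
    · obtain ⟨k, hk⟩ := exists_eps_lt hε
      obtain ⟨U, ⟨i, rfl⟩, hFU⟩ := (hWΩ k).2 F hF hFne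
      refine ⟨f (ρ k i), ⟨ρ k i, rfl⟩, ?_⟩
      intro x hx
      rw [hfval k i]
      have hxW : x ∈ W k i := hFU hx
      rw [hgdeq k i] at hxW
      exact lt_of_lt_of_le hxW (le_trans (eps_antitone (hρk k i)) (le_of_lt hk))

lemma c2 (hH : Hplus X) {A : Set (Cp X)}
    (hA : A ∈ OmegaPt (Cp X) (zeroCp X)) (hcnt : A.Countable) :
    Groupable (OmegaPt (Cp X) (zeroCp X)) A := by
  classical
  have hAne : A.Nonempty := by
    obtain ⟨g, hg, -⟩ := zero_mem_closure_iff.mp hA.1 ∅ Set.finite_empty 1 one_pos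
    exact ⟨g, hg⟩
  obtain ⟨e, he⟩ := hcnt.exists_eq_range hAne
  have htail : ∀ n : ℕ, A \ e '' Set.Iic n ∈ OmegaPt (Cp X) (zeroCp X) := by
    intro n
    apply omegaPt_diff_finite hA ((Set.finite_Iic n).image e)
    intro h0
    obtain ⟨i, -, hi⟩ := h0
    exact hA.2 (by rw [← hi, he]; exact ⟨i, rfl⟩)
  set κt := {p : Set X × ℝ // p.1.Finite ∧ 0 < p.2}
  have hsuff : ∀ S : Set (Cp X), S ⊆ A →
      (∀ k : κt, ∃ b ∈ S, ∀ x ∈ k.1.1, |b.1 x| < k.1.2) →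
      S ∈ OmegaPt (Cp X) (zeroCp X) := by
    intro S hS hw
    constructor
    · rw [zero_mem_closure_iff]
      intro F hF ε hε
      exact hw ⟨(F, ε), hF, hε⟩
    · intro h0
      exact hA.2 (hS h0)
  set Deg : Set ℕ := {n | ∃ g ∈ A \ e '' Set.Iic n, ∀ x, |g.1 x| < eps n} with hDegdef
  by_cases hcase : Deg.Infinite
  · set d : ℕ → ℕ := Nat.nth (· ∈ Deg) with hddef
    have hd' : (setOf (· ∈ Deg)).Infinite := hcase
    have hdmem : ∀ j, d j ∈ Deg := fun j => Nat.nth_mem_of_infinite hd' j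
    have hdge : ∀ j, j ≤ d j := fun j => (Nat.nth_strictMono hd').le_apply
    have hdsel : ∀ j, ∃ g ∈ A \ e '' Set.Iic (d j), ∀ x, |g.1 x| < eps (d j) :=
      fun j => hdmem j
    choose b hb hbsm using hdsel
    rw [he]
    apply blocks_groupable (κ := κt) (P := fun k g => ∀ x ∈ k.1.1, |g.1 x| < k.1.2) e rfl
      (by rw [← he]; exact hsuff) (fun j => {b j}) (fun j => Set.finite_singleton _)
      (fun j => by rw [← he]; simp only [Set.singleton_subset_iff]; exact (hb j).1)
      ?_ ?_
    · intro j c hc i hij hei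
      rw [Set.mem_singleton_iff] at hc
      subst hc
      exact (hb j).2 ⟨i, le_trans hij (hdge j), hei⟩
    · rintro ⟨⟨F, ε⟩, hF, hε⟩
      obtain ⟨N, hN⟩ := exists_eps_lt hε
      refine ⟨N, fun j hj => ?_⟩
      refine ⟨b j, Set.mem_singleton _, fun x _ => ?_⟩
      exact lt_of_lt_of_le (hbsm j x)
        (le_trans (eps_antitone (le_trans hj (hdge j))) (le_of_lt hN))
  · rw [Set.not_infinite] at hcase
    obtain ⟨N₀', hN₀'⟩ := hcase.bddAbove
    set N₀ := N₀' + 1 with hN₀def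
    have hnodeg : ∀ n ≥ N₀, ∀ g ∈ A \ e '' Set.Iic n, ∃ x, eps n ≤ |g.1 x| := by
      intro n hn g hg
      by_contra hc
      push_neg at hc
      have : n ∈ Deg := ⟨g, hg, fun x => hc x⟩
      have := hN₀' this
      omega
    set 𝒲 : ℕ → Set (Set X) := fun j =>
      {U | ∃ g ∈ A \ e '' Set.Iic (N₀ + j), U = {x | |g.1 x| < eps (N₀ + j)} ∧ U.Nonempty}
      with h𝒲def
    have h𝒲Ω : ∀ j, 𝒲 j ∈ OmegaCovers X := by
      intro j
      apply omega_of_witness (𝒰 := 𝒲 j) ?_ subset_rfl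
      · intro F hF hFne
        obtain ⟨g, hg, hsm⟩ := zero_mem_closure_iff.mp (htail (N₀ + j)).1 F hF
          (eps (N₀ + j)) (eps_pos _)
        exact ⟨{x | |g.1 x| < eps (N₀ + j)}, ⟨g, hg, rfl,
          ⟨hFne.choose, hsm _ hFne.choose_spec⟩⟩, fun x hx => hsm x hx⟩
      · rintro U ⟨g, hg, rfl, hne⟩
        refine ⟨epsSet_open, hne, ?_⟩
        obtain ⟨x, hx⟩ := hnodeg (N₀ + j) (by omega) g hg
        rw [Set.ne_univ_iff_exists_notMem]
        exact ⟨x, fun h => absurd h (not_lt.mpr hx)⟩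
    obtain ⟨ℋ, hℋ1, hℋ2⟩ := hH 𝒲 h𝒲Ω
    have hdecex : ∀ j, ∀ V ∈ ℋ j, ∃ g, g ∈ A \ e '' Set.Iic (N₀ + j) ∧
        ∀ x ∈ V, |g.1 x| < eps (N₀ + j) := by
      intro j V hV
      obtain ⟨n, hnj, hVn⟩ := (hℋ1 j).2 V hV
      obtain ⟨g, hg, heq, -⟩ := hVn
      refine ⟨g, ?_, ?_⟩
      · refine ⟨hg.1, ?_⟩
        intro hmem
        apply hg.2
        obtain ⟨i, hi, hie⟩ := hmem
        have hi' : i ≤ N₀ + j := hi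
        exact ⟨i, Set.mem_Iic.mpr (by omega), hie⟩
      · intro x hx
        rw [heq] at hx
        exact lt_of_lt_of_le hx (eps_antitone (by omega))
    set dec : ℕ → Set X → Cp X := fun j V =>
      if h : ∃ g, g ∈ A \ e '' Set.Iic (N₀ + j) ∧ ∀ x ∈ V, |g.1 x| < eps (N₀ + j)
      then h.choose else hAne.choose with hdecdef
    have hdec_spec : ∀ j, ∀ V ∈ ℋ j, dec j V ∈ A \ e '' Set.Iic (N₀ + j) ∧
        ∀ x ∈ V, |(dec j V).1 x| < eps (N₀ + j) := by
      intro j V hV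
      have h := hdecex j V hV
      simp only [hdecdef, dif_pos h]
      exact h.choose_spec
    rw [he]
    apply blocks_groupable (κ := κt) (P := fun k g => ∀ x ∈ k.1.1, |g.1 x| < k.1.2) e rfl
      (by rw [← he]; exact hsuff) (fun j => dec j '' ℋ j)
      (fun j => (hℋ1 j).1.image _) ?_ ?_ ?_
    · intro j V hV
      obtain ⟨V', hV', rfl⟩ := hV
      rw [← he]
      exact (hdec_spec j V' hV').1.1
    · intro j c hc i hij hei
      obtain ⟨V', hV', rfl⟩ := hc
      exact (hdec_spec j V' hV').1.2 ⟨i, Set.mem_Iic.mpr (by omega), hei⟩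
    · rintro ⟨⟨F, ε⟩, hF, hε⟩
      obtain ⟨Nε, hNε⟩ := exists_eps_lt hε
      obtain ⟨N, hN⟩ := hℋ2 (insert (Classical.arbitrary X) F) (hF.insert _)
        ⟨_, Set.mem_insert _ _⟩
      refine ⟨max N Nε, fun j hj => ?_⟩
      obtain ⟨V, hV, hFV⟩ := hN j (le_trans (le_max_left _ _) hj)
      refine ⟨dec j V, ⟨V, hV, rfl⟩, fun x hx => ?_⟩
      have := (hdec_spec j V hV).2 x (hFV (Set.mem_insert_of_mem _ hx))
      refine lt_of_lt_of_le this (le_trans (eps_antitone ?_) (le_of_lt hNε))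
      have := le_trans (le_max_right N Nε) hj
      omega

lemma RH4 (hR : Rstar X) (hH : Hplus X) :
    Sone (OmegaPt (Cp X) (zeroCp X)) (groupables (OmegaPt (Cp X) (zeroCp X))) := by
  intro A hA
  obtain ⟨f, hf, hr⟩ := c1 hR A hA
  exact ⟨f, hf, hr, c2 hH hr (Set.countable_range f)⟩
end CpCore
section FourFive
variable {X : Type u} [TopologicalSpace X]

lemma rez0 [Nonempty X] (h4 : Sone (OmegaPt (Cp X) (zeroCp X)) (groupables (OmegaPt (Cp X) (zeroCp X)))) :
    ∀ A ∈ OmegaPt (Cp X) (zeroCp X), A.Countable → Groupable (OmegaPt (Cp X) (zeroCp X)) A := by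
  classical
  intro A hA hcnt
  obtain ⟨f, hf, hR, φR, hfinR, hJR⟩ := h4 (fun _ => A) (fun _ => hA)
  have hAne : A.Nonempty := ⟨f 0, hf 0⟩
  obtain ⟨e, he⟩ := hcnt.exists_eq_range hAne
  have hrsub : Set.range f ⊆ A := by
    rintro x ⟨n, rfl⟩
    exact hf n
  set φ : Cp X → ℕ := fun g => if g ∈ Set.range f then φR g else
    (if h : ∃ i, e i = g then Nat.find h else 0) with hφdef
  refine ⟨φ, ?_, ?_⟩
  · intro n
    apply Set.Finite.subset ((hfinR n).union (Set.finite_singleton (e n)))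
    rintro x ⟨hxA, hφ⟩
    by_cases h : x ∈ Set.range f
    · left
      rw [hφdef] at hφ
      simp only [if_pos h] at hφ
      exact ⟨h, hφ⟩
    · right
      rw [hφdef] at hφ
      simp only [if_neg h] at hφ
      have hex : ∃ i, e i = x := by
        rw [he] at hxA
        exact hxA
      rw [dif_pos hex] at hφ
      have := Nat.find_spec hex
      rw [hφ] at this
      simp [← this]
  · intro J hJ
    have hmem := hJR J hJ
    have hsub : {x ∈ Set.range f | φR x ∈ J} ⊆ {x ∈ A | φ x ∈ J} := by
      rintro x ⟨hxr, hxJ⟩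
      refine ⟨hrsub hxr, ?_⟩
      rw [hφdef]
      simp only [if_pos hxr]
      exact hxJ
    constructor
    · exact closure_mono hsub hmem.1
    · rintro ⟨h0A, -⟩
      exact hA.2 h0A

lemma image_symm_image {Y Z : Type u} [TopologicalSpace Y] [TopologicalSpace Z]
    (T : Y ≃ₜ Z) (A : Set Z) : T '' (T.symm '' A) = A := by
  ext z
  constructor
  · rintro ⟨y, ⟨a, haA, rfl⟩, rfl⟩
    simpa using haA
  · intro hz
    exact ⟨T.symm z, ⟨z, hz, rfl⟩, by simp⟩

lemma E45 [Nonempty X]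
    (h4 : Sone (OmegaPt (Cp X) (zeroCp X)) (groupables (OmegaPt (Cp X) (zeroCp X)))) :
    Reznichenko (Cp X) ∧ CountableStrongFanTightness (Cp X) := by
  constructor
  · intro y A hA hcnt
    set T := transCp y with hTdef
    have hTsymm0 : T.symm y = zeroCp X := by
      rw [← transCp_zero y]
      exact T.symm_apply_apply _
    have hB : T.symm '' A ∈ OmegaPt (Cp X) (zeroCp X) := by
      have := omegaPt_image T.symm (y := y) hA
      rwa [hTsymm0] at this
    have hBg := rez0 h4 _ hB (hcnt.image _)
    have hup := groupable_image T (y := zeroCp X) hBg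
    rw [transCp_zero, image_symm_image] at hup
    exact hup
  · intro y A hAn
    set T := transCp y with hTdef
    have hTsymm0 : T.symm y = zeroCp X := by
      rw [← transCp_zero y]
      exact T.symm_apply_apply _
    have hBn : ∀ n, T.symm '' (A n) ∈ OmegaPt (Cp X) (zeroCp X) := by
      intro n
      have := omegaPt_image T.symm (y := y) (hAn n)
      rwa [hTsymm0] at this
    obtain ⟨g, hg, hr⟩ := h4 (fun n => T.symm '' (A n)) hBn
    refine ⟨fun n => T (g n), fun n => ?_, ?_⟩
    · obtain ⟨a, haA, hae⟩ := hg n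
      show T (g n) ∈ A n
      rw [← hae]
      simpa using haA
    · have hrange : Set.range (fun n => T (g n)) = T '' Set.range g := by
        ext z
        constructor
        · rintro ⟨n, rfl⟩
          exact ⟨g n, ⟨n, rfl⟩, rfl⟩
        · rintro ⟨x, ⟨n, rfl⟩, rfl⟩
          exact ⟨n, rfl⟩
      rw [hrange]
      have := omegaPt_image T (y := zeroCp X) hr.1
      rwa [transCp_zero] at this

lemma E54 (h5 : Reznichenko (Cp X) ∧ CountableStrongFanTightness (Cp X)) :
    Sone (OmegaPt (Cp X) (zeroCp X)) (groupables (OmegaPt (Cp X) (zeroCp X))) := by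
  intro A hA
  obtain ⟨f, hf, hr⟩ := h5.2 (zeroCp X) A hA
  exact ⟨f, hf, hr, h5.1 (zeroCp X) _ hr (Set.countable_range f)⟩

lemma RH3 [Nonempty X] (hR : Rstar X) (hH : Hplus X) :
    ∀ n : ℕ, 1 ≤ n → GerlitsNagyProp (Fin n → X) := by
  intro n hn
  exact ⟨lemH hH hn, lemR (Rstar_pow hR hn)⟩
end FourFive

end S13
theorem statement13 {X : Type u} [TopologicalSpace X] [T2Space X] [CompletelyRegularSpace X]
    [Infinite X] :
    List.TFAE
      [GerlitsNagyProp (PFin X),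
       Sone (OmegaCovers X) (groupables (OmegaCovers X)),
       ∀ n : ℕ, 1 ≤ n → GerlitsNagyProp (Fin n → X),
       Sone (OmegaPt (Cp X) (zeroCp X)) (groupables (OmegaPt (Cp X) (zeroCp X))),
       Reznichenko (Cp X) ∧ CountableStrongFanTightness (Cp X)] := by
  have hne : Nonempty X := inferInstance
  tfae_have 1 → 2 := fun h1 => S13.RH2 (S13.E1R h1.2) (S13.E1H h1.1)
  tfae_have 2 → 3 := fun h2 => S13.RH3 (S13.E2R h2) (S13.E2H h2)
  tfae_have 3 → 1 := fun h3 => S13.E31 h3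
  tfae_have 2 → 4 := fun h2 => S13.RH4 (S13.E2R h2) (S13.E2H h2)
  tfae_have 4 → 2 := fun h4 => S13.RH2 (S13.E4R h4) (S13.E4H h4)
  tfae_have 4 → 5 := fun h4 => S13.E45 h4
  tfae_have 5 → 4 := fun h5 => S13.E54 h5
  tfae_finish
end
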